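/- arXiv:math/0101227 — 4 statements merged into one kernel-verified Lean document; each statement's English description precedes it below -/
import Mathlib

section
/- Let δ = sup_{x>0} (∫_0^x e^{-C(u)} du)·(∫_x^∞ e^{C(u)}/a(u) du) and assume 0 < δ < ∞. Then the Dirichlet principal eigenvalue λ₀ satisfies (4δ)^{-1} ≤ λ₀ ≤ δ^{-1}. -/
open MeasureTheory Set Real Filter

namespace ChenAux

noncomputable def nu (h : ℝ → ℝ) (x : ℝ) : ℝ := ∫ u in Ioi x, h u

variable {h : ℝ → ℝ}

lemma nu_anti (hint : IntegrableOn h (Ioi 0)) (hpos : ∀ x, 0 ≤ h x)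
    {x y : ℝ} (hx : 0 ≤ x) (hxy : x ≤ y) : nu h y ≤ nu h x := by
  apply setIntegral_mono_set (hint.mono_set (Ioi_subset_Ioi hx))
  · exact Filter.Eventually.of_forall fun t => hpos t
  · exact HasSubset.Subset.eventuallyLE (Ioi_subset_Ioi hxy)

lemma nu_nonneg (hpos : ∀ x, 0 ≤ h x) (x : ℝ) : 0 ≤ nu h x :=
  setIntegral_nonneg measurableSet_Ioi fun t _ => hpos t

lemma nu_pos (hint : IntegrableOn h (Ioi 0)) (hpos : ∀ x, 0 < h x)
    {x : ℝ} (hx : 0 ≤ x) : 0 < nu h x := by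
  have hI : IntegrableOn h (Ioi x) := hint.mono_set (Ioi_subset_Ioi hx)
  rw [nu, setIntegral_pos_iff_support_of_nonneg_ae
    (Filter.Eventually.of_forall fun t => (hpos t).le) hI]
  have : Ioi x ⊆ Function.support h ∩ Ioi x := fun t ht => ⟨(hpos t).ne', ht⟩
  calc (0 : ENNReal) < volume (Ioi x) := by simp
  _ ≤ volume (Function.support h ∩ Ioi x) := measure_mono this

lemma nu_split (hint : IntegrableOn h (Ioi 0)) {t x : ℝ} (ht : 0 ≤ t) (htx : t ≤ x) :
    nu h t = (∫ u in Ioc t x, h u) + nu h x := by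
  have hIt : IntegrableOn h (Ioi t) := hint.mono_set (Ioi_subset_Ioi ht)
  rw [nu, nu, ← Ioc_union_Ioi_eq_Ioi htx,
    setIntegral_union Ioc_disjoint_Ioi_same measurableSet_Ioi
      (hIt.mono_set Ioc_subset_Ioi_self)
      (hIt.mono_set (Ioi_subset_Ioi htx))]

lemma nu_continuousAt (hint : IntegrableOn h (Ioi 0)) {x : ℝ} (hx : 0 < x) :
    ContinuousAt (nu h) x := by
  set c := x / 2 with hc
  have hc0 : 0 < c := by positivity
  have hcx : c < x := by linarith
  set b := x + 1 with hb
  have hIcc : IntegrableOn h (Icc c b) :=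
    hint.mono_set (fun t htc => lt_of_lt_of_le hc0 htc.1)
  have hcont : ContinuousOn (fun y => ∫ u in Ioc c y, h u) (Icc c b) :=
    intervalIntegral.continuousOn_primitive hIcc
  have hmem : Icc c b ∈ nhds x := Icc_mem_nhds hcx (by linarith)
  have hcont2 : ContinuousAt (fun y => ∫ u in Ioc c y, h u) x :=
    ContinuousOn.continuousAt hcont hmem
  have heq : (fun y => nu h c - ∫ u in Ioc c y, h u) =ᶠ[nhds x] nu h := by
    filter_upwards [hmem] with y hy
    have := nu_split hint hc0.le hy.1
    linarith [this]
  have : ContinuousAt (fun y => nu h c - ∫ u in Ioc c y, h u) x :=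
    continuousAt_const.sub hcont2
  exact this.congr heq

lemma nu_measurable_aux (hint : IntegrableOn h (Ioi 0)) {t : ℝ} (ht : 0 < t) :
    AEMeasurable (nu h) (volume.restrict (Ioi t)) := by
  have : ContinuousOn (nu h) (Ioi t) := fun y hy =>
    (nu_continuousAt hint (ht.trans hy)).continuousWithinAt
  exact (ContinuousOn.aemeasurable this measurableSet_Ioi)


lemma tail_bound (hm : Measurable h) (hint : IntegrableOn h (Ioi 0)) (hpos : ∀ x, 0 < h x)
    {t : ℝ} (ht : 0 < t) :
    ∫⁻ x in Ioi t, ENNReal.ofReal ((Real.sqrt (nu h x))⁻¹ * h x) ≤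
      ENNReal.ofReal (2 * Real.sqrt (nu h t)) := by
  have hνt : 0 < nu h t := nu_pos hint hpos ht.le
  set H : ℝ → ENNReal := fun x => ENNReal.ofReal (h x) with hH
  have hHmeas : Measurable H := ENNReal.measurable_ofReal.comp hm
  set μh : Measure ℝ := (volume.restrict (Ioi t)).withDensity H with hμh
  set F : ℝ → ℝ := fun x => (Real.sqrt (nu h x))⁻¹ with hF
  -- rewrite LHS as ∫⁻ F dμh
  have hLHS : ∫⁻ x in Ioi t, ENNReal.ofReal ((Real.sqrt (nu h x))⁻¹ * h x) =
      ∫⁻ x, ENNReal.ofReal (F x) ∂μh := by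
    rw [hμh, lintegral_withDensity_eq_lintegral_mul_non_measurable _ hHmeas
      (Filter.Eventually.of_forall fun x => ENNReal.ofReal_lt_top)]
    apply lintegral_congr
    intro x
    simp only [Pi.mul_apply, hH, hF]
    rw [ENNReal.ofReal_mul (inv_nonneg.mpr (Real.sqrt_nonneg _)), mul_comm]
  rw [hLHS]
  -- layer cake
  have hFmble : AEMeasurable F μh := by
    have h1 : AEMeasurable (nu h) (volume.restrict (Ioi t)) := nu_measurable_aux hint ht
    have h2 : AEMeasurable F (volume.restrict (Ioi t)) :=
      ((Real.continuous_sqrt.measurable.comp_aemeasurable h1)).inv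
    exact h2.mono_ac (withDensity_absolutelyContinuous _ _)
  rw [lintegral_eq_lintegral_meas_lt μh
    (Filter.Eventually.of_forall fun x => inv_nonneg.mpr (Real.sqrt_nonneg _)) hFmble]
  -- bound the tail measures
  have hmeasbound : ∀ l : ℝ, 0 < l →
      μh {x : ℝ | l < F x} ≤ ENNReal.ofReal (min (l⁻¹ ^ 2) (nu h t)) := by
    intro l hl
    have hcompl : μh ((Ioi t)ᶜ) = 0 := by
      rw [hμh, withDensity_apply _ measurableSet_Ioi.compl]
      apply setLIntegral_measure_zero
      rw [Measure.restrict_apply measurableSet_Ioi.compl]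
      rw [compl_inter_self]
      simp
    have htotal : ∀ s : Set ℝ, MeasurableSet s → s ⊆ Ioi t → μh s = ENNReal.ofReal (∫ u in s, h u) := by
      intro s hs hsub
      rw [hμh, withDensity_apply _ hs, Measure.restrict_restrict hs,
        inter_eq_self_of_subset_left hsub,
        ← ofReal_integral_eq_lintegral_ofReal
          (hint.mono_set (hsub.trans (Ioi_subset_Ioi ht.le)))
          (Filter.Eventually.of_forall fun x => (hpos x).le)]
    set S : Set ℝ := {x : ℝ | t < x ∧ nu h x < l⁻¹ ^ 2} with hS
    have hsubset : {x : ℝ | l < F x} ⊆ S ∪ (Ioi t)ᶜ := by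
      intro x hx
      by_cases hxt : t < x
      · left
        refine ⟨hxt, ?_⟩
        have hν : 0 < nu h x := nu_pos hint hpos (ht.trans hxt).le
        have h1 : Real.sqrt (nu h x) < l⁻¹ := by
          have : l < (Real.sqrt (nu h x))⁻¹ := hx
          have hs : 0 < Real.sqrt (nu h x) := Real.sqrt_pos.mpr hν
          rw [lt_inv_comm₀ hl hs] at this
          exact this
        calc nu h x = Real.sqrt (nu h x) ^ 2 := (Real.sq_sqrt hν.le).symm
        _ < l⁻¹ ^ 2 := by
          apply pow_lt_pow_left₀ h1 (Real.sqrt_nonneg _)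
          norm_num
      · right; simpa using hxt
    have hbound : μh S ≤ ENNReal.ofReal (min (l⁻¹ ^ 2) (nu h t)) := by
      rcases eq_empty_or_nonempty S with hSe | hSne
      · simp [hSe]
      have hbddS : BddBelow S := ⟨t, fun x hx => (hx.1 : t < x).le⟩
      set α := sInf S with hα
      have hαt : t ≤ α := le_csInf hSne fun x hx => (hx.1 : t < x).le
      have hα0 : 0 < α := lt_of_lt_of_le ht hαt
      -- Ioi α ⊆ S
      have hIoiS : Ioi α ⊆ S := by
        intro y hy
        obtain ⟨x, hxS, hxy⟩ := (csInf_lt_iff hbddS hSne).mp hy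
        exact ⟨hxS.1.trans hxy, lt_of_le_of_lt
          (nu_anti hint (fun z => (hpos z).le) (ht.trans hxS.1).le hxy.le) hxS.2⟩
      have hνα : nu h α ≤ l⁻¹ ^ 2 := by
        have htend : Tendsto (nu h) (nhdsWithin α (Ioi α)) (nhds (nu h α)) :=
          ((nu_continuousAt hint hα0).continuousWithinAt)
        refine le_of_tendsto htend ?_
        filter_upwards [self_mem_nhdsWithin] with y hy
        exact (hIoiS hy).2.le
      have hSIci : S ⊆ Ici α := fun x hx => csInf_le hbddS hx
      have h1 : μh S ≤ μh ({α} ∪ Ioi α) := by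
        apply measure_mono
        intro x hx
        rcases eq_or_lt_of_le (mem_Ici.mp (hSIci hx)) with heq | hlt
        · left; exact heq.symm
        · right; exact hlt
      have hsing : μh {α} = 0 := by
        rw [hμh, withDensity_apply _ (measurableSet_singleton α)]
        apply setLIntegral_measure_zero
        rw [Measure.restrict_apply (measurableSet_singleton α)]
        exact measure_mono_null inter_subset_left (measure_singleton α)
      have hIoiα : μh (Ioi α) = ENNReal.ofReal (nu h α) :=
        htotal (Ioi α) measurableSet_Ioi (Ioi_subset_Ioi hαt)
      have h2 : μh S ≤ ENNReal.ofReal (nu h α) := by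
        calc μh S ≤ μh ({α} ∪ Ioi α) := h1
        _ ≤ μh {α} + μh (Ioi α) := measure_union_le _ _
        _ = ENNReal.ofReal (nu h α) := by rw [hsing, hIoiα, zero_add]
      have h3 : nu h α ≤ min (l⁻¹ ^ 2) (nu h t) :=
        le_min hνα (nu_anti hint (fun z => (hpos z).le) ht.le hαt)
      exact h2.trans (ENNReal.ofReal_le_ofReal h3)
    calc μh {x : ℝ | l < F x} ≤ μh (S ∪ (Ioi t)ᶜ) := measure_mono hsubset
    _ ≤ μh S + μh ((Ioi t)ᶜ) := measure_union_le _ _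
    _ = μh S := by rw [hcompl, add_zero]
    _ ≤ _ := hbound
  -- integrate the bound
  set c : ℝ := (Real.sqrt (nu h t))⁻¹ with hc
  have hsq : 0 < Real.sqrt (nu h t) := Real.sqrt_pos.mpr hνt
  have hc0 : 0 < c := inv_pos.mpr hsq
  have hmono : ∫⁻ l in Ioi (0:ℝ), μh {x : ℝ | l < F x} ≤
      ∫⁻ l in Ioi (0:ℝ), ENNReal.ofReal (min (l⁻¹ ^ 2) (nu h t)) := by
    apply setLIntegral_mono
    · apply Measurable.ennreal_ofReal
      exact ((measurable_id.inv.pow_const 2).min measurable_const)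
    · intro l hl
      exact hmeasbound l hl
  refine hmono.trans ?_
  rw [← Ioc_union_Ioi_eq_Ioi hc0.le,
    lintegral_union measurableSet_Ioi (Ioc_disjoint_Ioi le_rfl)]
  have hpart1 : ∫⁻ l in Ioc (0:ℝ) c, ENNReal.ofReal (min (l⁻¹ ^ 2) (nu h t)) ≤
      ENNReal.ofReal (Real.sqrt (nu h t)) := by
    have hb : ∀ l ∈ Ioc (0:ℝ) c, ENNReal.ofReal (min (l⁻¹ ^ 2) (nu h t)) ≤
        ENNReal.ofReal (nu h t) := fun l _ =>
      ENNReal.ofReal_le_ofReal (min_le_right _ _)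
    calc ∫⁻ l in Ioc (0:ℝ) c, ENNReal.ofReal (min (l⁻¹ ^ 2) (nu h t))
        ≤ ∫⁻ _ in Ioc (0:ℝ) c, ENNReal.ofReal (nu h t) :=
          setLIntegral_mono measurable_const hb
    _ = ENNReal.ofReal (nu h t) * volume (Ioc (0:ℝ) c) := setLIntegral_const _ _
    _ = ENNReal.ofReal (nu h t) * ENNReal.ofReal c := by
          rw [Real.volume_Ioc, sub_zero]
    _ = ENNReal.ofReal (nu h t * c) := by
          rw [← ENNReal.ofReal_mul hνt.le]
    _ = ENNReal.ofReal (Real.sqrt (nu h t)) := by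
          congr 1
          rw [hc, mul_comm, inv_mul_eq_div, div_eq_iff hsq.ne']
          exact (Real.mul_self_sqrt hνt.le).symm
  have hpart2 : ∫⁻ l in Ioi c, ENNReal.ofReal (min (l⁻¹ ^ 2) (nu h t)) ≤
      ENNReal.ofReal (Real.sqrt (nu h t)) := by
    have hb : ∀ l ∈ Ioi c, ENNReal.ofReal (min (l⁻¹ ^ 2) (nu h t)) ≤
        ENNReal.ofReal (l ^ (-2 : ℝ)) := by
      intro l hl
      apply ENNReal.ofReal_le_ofReal
      refine (min_le_left _ _).trans (le_of_eq ?_)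
      have hl0 : 0 < l := hc0.trans hl
      rw [show (-2:ℝ) = -((2:ℕ):ℝ) by norm_num, Real.rpow_neg hl0.le,
        Real.rpow_natCast, inv_pow]
    calc ∫⁻ l in Ioi c, ENNReal.ofReal (min (l⁻¹ ^ 2) (nu h t))
        ≤ ∫⁻ l in Ioi c, ENNReal.ofReal (l ^ (-2 : ℝ)) := by
          apply setLIntegral_mono ?_ hb
          exact (Measurable.pow_const (measurable_id) _).ennreal_ofReal
    _ = ENNReal.ofReal (∫ l in Ioi c, l ^ (-2 : ℝ)) := by
          rw [← ofReal_integral_eq_lintegral_ofReal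
            (integrableOn_Ioi_rpow_of_lt (by norm_num) hc0)]
          filter_upwards [ae_restrict_mem measurableSet_Ioi] with l hl
          exact Real.rpow_nonneg (hc0.trans hl).le _
    _ = ENNReal.ofReal (Real.sqrt (nu h t)) := by
          congr 1
          rw [integral_Ioi_rpow_of_lt (by norm_num) hc0]
          norm_num
          rw [Real.rpow_neg_one, hc, inv_inv]
  calc _ ≤ ENNReal.ofReal (Real.sqrt (nu h t)) + ENNReal.ofReal (Real.sqrt (nu h t)) :=
        add_le_add hpart1 hpart2
  _ = ENNReal.ofReal (2 * Real.sqrt (nu h t)) := by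
        rw [← ENNReal.ofReal_add (Real.sqrt_nonneg _) (Real.sqrt_nonneg _), two_mul]


lemma fubini_swap {A B : ℝ → ENNReal} (hA : Measurable A) (hB : Measurable B) :
    ∫⁻ x in Ioi (0:ℝ), A x * ∫⁻ t in Ioc (0:ℝ) x, B t =
      ∫⁻ t in Ioi (0:ℝ), B t * ∫⁻ x in Ici t, A x := by
  set S : Set (ℝ × ℝ) := {p : ℝ × ℝ | 0 < p.2 ∧ p.2 ≤ p.1} with hS
  have hSmeas : MeasurableSet S :=
    (measurableSet_lt measurable_const measurable_snd).inter
      (measurableSet_le measurable_snd measurable_fst)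
  set K : ℝ × ℝ → ENNReal := S.indicator (fun p => A p.1 * B p.2) with hK
  have hKmeas : Measurable K :=
    ((hA.comp measurable_fst).mul (hB.comp measurable_snd)).indicator hSmeas
  have hLHS : ∫⁻ x in Ioi (0:ℝ), A x * ∫⁻ t in Ioc (0:ℝ) x, B t =
      ∫⁻ x : ℝ, ∫⁻ t : ℝ, K (x, t) := by
    have hinner : ∀ x : ℝ, ∫⁻ t : ℝ, K (x, t) = A x * ∫⁻ t in Ioc (0:ℝ) x, B t := by
      intro x
      have : (fun t : ℝ => K (x, t)) = (Ioc (0:ℝ) x).indicator (fun t => A x * B t) := by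
        ext t
        simp only [hK, Set.indicator_apply, hS, Set.mem_setOf_eq, Set.mem_Ioc]
      rw [this, lintegral_indicator measurableSet_Ioc, lintegral_const_mul _ hB]
    rw [← lintegral_indicator measurableSet_Ioi]
    congr 1
    ext x
    rw [Set.indicator_apply]
    split_ifs with hx
    · exact (hinner x).symm
    · rw [hinner x]
      have : Ioc (0:ℝ) x = ∅ := Ioc_eq_empty (fun hc => hx hc)
      rw [this]
      simp
  have hRHS : ∫⁻ t in Ioi (0:ℝ), B t * ∫⁻ x in Ici t, A x =
      ∫⁻ t : ℝ, ∫⁻ x : ℝ, K (x, t) := by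
    have hinner : ∀ t : ℝ, 0 < t →
        ∫⁻ x : ℝ, K (x, t) = B t * ∫⁻ x in Ici t, A x := by
      intro t ht
      have : (fun x : ℝ => K (x, t)) = (Ici t).indicator (fun x => A x * B t) := by
        ext x
        simp only [hK, Set.indicator_apply, hS, Set.mem_setOf_eq, Set.mem_Ici]
        split_ifs with h1 h2 h3
        · rfl
        · exact absurd h1.2 h2
        · exact absurd ⟨ht, h3⟩ h1
        · rfl
      rw [this, lintegral_indicator measurableSet_Ici, lintegral_mul_const _ hA, mul_comm]
    rw [← lintegral_indicator measurableSet_Ioi]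
    congr 1
    ext t
    rw [Set.indicator_apply]
    split_ifs with ht
    · exact (hinner t ht).symm
    · symm
      have : (fun x : ℝ => K (x, t)) = fun _ => 0 := by
        ext x
        simp only [hK, Set.indicator_apply, hS, Set.mem_setOf_eq]
        rw [if_neg (fun hc => ht hc.1)]
      rw [this]
      simp
  rw [hLHS, hRHS]
  exact lintegral_lintegral_swap hKmeas.aemeasurable


variable {e : ℝ → ℝ}

lemma phi_hasDerivAt (he : Continuous e) (x : ℝ) :
    HasDerivAt (fun y => ∫ t in (0:ℝ)..y, e t) (e x) x :=
  intervalIntegral.integral_hasDerivAt_right (he.intervalIntegrable _ _)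
    he.stronglyMeasurable.stronglyMeasurableAtFilter he.continuousAt


lemma phi_strictMono (he : Continuous e) (hepos : ∀ t, 0 < e t) :
    StrictMono (fun y => ∫ t in (0:ℝ)..y, e t) := by
  apply strictMono_of_deriv_pos
  intro x
  rw [(phi_hasDerivAt he x).deriv]
  exact hepos x


lemma phi_pos (he : Continuous e) (hepos : ∀ t, 0 < e t) {x : ℝ} (hx : 0 < x) :
    0 < ∫ t in (0:ℝ)..x, e t := by
  have := phi_strictMono he hepos hx
  simpa using this


lemma phi_cont (he : Continuous e) : Continuous (fun y => ∫ t in (0:ℝ)..y, e t) :=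
  (phi_hasDerivAt he 0).differentiableAt.continuousAt |> fun _ => continuous_iff_continuousAt.mpr fun x => (phi_hasDerivAt he x).differentiableAt.continuousAt


lemma sqrt_deriv (he : Continuous e) (hepos : ∀ t, 0 < e t) {t : ℝ} (ht : 0 < t) :
    HasDerivAt (fun y => 2 * Real.sqrt (∫ s in (0:ℝ)..y, e s))
      (e t * (Real.sqrt (∫ s in (0:ℝ)..t, e s))⁻¹) t := by
  have hφ : 0 < ∫ s in (0:ℝ)..t, e s := phi_pos he hepos ht
  have h1 : HasDerivAt (fun y => ∫ s in (0:ℝ)..y, e s) (e t) t := phi_hasDerivAt he t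
  have h2 := (Real.hasDerivAt_sqrt hφ.ne').comp t h1
  have h3 := h2.const_mul (2:ℝ)
  convert h3 using 1
  have hs : Real.sqrt (∫ s in (0:ℝ)..t, e s) ≠ 0 := (Real.sqrt_pos.mpr hφ).ne'
  · rfl
  · rfl
  · rfl
  simp only [one_div, mul_inv]
  ring


lemma ftc_sqrt (he : Continuous e) (hepos : ∀ t, 0 < e t) {x : ℝ} (hx : 0 < x) :
    IntegrableOn (fun t => e t * (Real.sqrt (∫ s in (0:ℝ)..t, e s))⁻¹) (Ioc 0 x) ∧
    ∫ t in Ioc (0:ℝ) x, e t * (Real.sqrt (∫ s in (0:ℝ)..t, e s))⁻¹ =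
      2 * Real.sqrt (∫ s in (0:ℝ)..x, e s) := by
  set G : ℝ → ℝ := fun y => 2 * Real.sqrt (∫ s in (0:ℝ)..y, e s) with hG
  have hcontG : ContinuousOn G (Icc 0 x) :=
    (continuous_const.mul (Real.continuous_sqrt.comp (phi_cont he))).continuousOn
  have hderiv : ∀ t ∈ Ioo (0:ℝ) x, HasDerivAt G
      (e t * (Real.sqrt (∫ s in (0:ℝ)..t, e s))⁻¹) t :=
    fun t ht => sqrt_deriv he hepos ht.1
  have hnonneg : ∀ t ∈ Ioo (0:ℝ) x, 0 ≤ e t * (Real.sqrt (∫ s in (0:ℝ)..t, e s))⁻¹ :=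
    fun t _ => mul_nonneg (hepos t).le (inv_nonneg.mpr (Real.sqrt_nonneg _))
  have hint : IntegrableOn (fun t => e t * (Real.sqrt (∫ s in (0:ℝ)..t, e s))⁻¹) (Ioc 0 x) :=
    intervalIntegral.integrableOn_deriv_of_nonneg hcontG hderiv hnonneg
  refine ⟨hint, ?_⟩
  have hii : IntervalIntegrable (fun t => e t * (Real.sqrt (∫ s in (0:ℝ)..t, e s))⁻¹)
      volume 0 x := (intervalIntegrable_iff_integrableOn_Ioc_of_le hx.le).mpr hint
  have := intervalIntegral.integral_eq_sub_of_hasDeriv_right_of_le hx.le hcontG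
    (fun t ht => (hderiv t ht).hasDerivWithinAt) hii
  rw [intervalIntegral.integral_of_le hx.le] at this
  rw [this, hG]
  simp



lemma cs_step {C : ℝ → ℝ} (hC : Continuous C) {g : ℝ → ℝ} {x : ℝ} (hx : 0 < x)
    (hg : IntegrableOn g (Ioc 0 x)) :
    ENNReal.ofReal ((∫ t in Ioc (0:ℝ) x, g t) ^ 2) ≤
      ENNReal.ofReal (2 * Real.sqrt (∫ s in (0:ℝ)..x, Real.exp (-C s))) *
        ∫⁻ t in Ioc (0:ℝ) x, ENNReal.ofReal (g t ^ 2 * Real.exp (C t)) *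
          ENNReal.ofReal (Real.sqrt (∫ s in (0:ℝ)..t, Real.exp (-C s))) := by
  set e : ℝ → ℝ := fun s => Real.exp (-C s) with he_def
  have he : Continuous e := Real.continuous_exp.comp hC.neg
  have hepos : ∀ t, 0 < e t := fun t => Real.exp_pos _
  set φ : ℝ → ℝ := fun t => ∫ s in (0:ℝ)..t, e s with hφ_def
  set μ : Measure ℝ := volume.restrict (Ioc (0:ℝ) x) with hμ
  set U : ℝ → ENNReal := fun t =>
    ENNReal.ofReal (|g t| * Real.exp (C t / 2) * Real.sqrt (Real.sqrt (φ t))) with hU_def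
  set V : ℝ → ENNReal := fun t =>
    ENNReal.ofReal (Real.exp (-C t / 2) * (Real.sqrt (Real.sqrt (φ t)))⁻¹) with hV_def
  -- measurability
  have hgae : AEMeasurable g μ := hg.aestronglyMeasurable.aemeasurable
  have hUae : AEMeasurable U μ := by
    apply ENNReal.measurable_ofReal.comp_aemeasurable
    exact (((continuous_abs.measurable.comp_aemeasurable hgae)).mul
      ((Real.continuous_exp.comp (hC.div_const 2)).measurable.aemeasurable)).mul
      ((Real.continuous_sqrt.comp (Real.continuous_sqrt.comp
        (intervalIntegral.continuous_primitive (fun a b => he.intervalIntegrable a b) 0))).measurable.aemeasurable)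
  have hVae : AEMeasurable V μ := by
    apply ENNReal.measurable_ofReal.comp_aemeasurable
    apply AEMeasurable.mul
    · exact (Real.continuous_exp.comp (hC.neg.div_const 2)).measurable.aemeasurable
    · exact ((Real.continuous_sqrt.comp (Real.continuous_sqrt.comp
        (intervalIntegral.continuous_primitive (fun a b => he.intervalIntegrable a b) 0))).measurable.aemeasurable).inv
  -- step 1 : |∫ g| ≤ ∫⁻ |g|
  have h1 : ENNReal.ofReal |∫ t in Ioc (0:ℝ) x, g t| ≤ ∫⁻ t, ENNReal.ofReal |g t| ∂μ := by
    rw [← ofReal_integral_eq_lintegral_ofReal hg.abs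
      (Filter.Eventually.of_forall fun t => abs_nonneg _)]
    apply ENNReal.ofReal_le_ofReal
    simpa [Real.norm_eq_abs] using
      norm_integral_le_integral_norm (μ := volume.restrict (Ioc (0:ℝ) x)) g
  -- step 2 : |g| = U * V a.e.
  have h2 : ∫⁻ t, ENNReal.ofReal |g t| ∂μ = ∫⁻ t, U t * V t ∂μ := by
    apply lintegral_congr_ae
    filter_upwards [ae_restrict_mem measurableSet_Ioc] with t ht
    have hφt : 0 < φ t := phi_pos he hepos ht.1
    have hs : (0:ℝ) < Real.sqrt (Real.sqrt (φ t)) :=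
      Real.sqrt_pos.mpr (Real.sqrt_pos.mpr hφt)
    rw [hU_def, hV_def, ← ENNReal.ofReal_mul
      (by positivity)]
    congr 1
    have hexp : Real.exp (C t / 2) * Real.exp (-C t / 2) = 1 := by
      have harg : C t / 2 + -C t / 2 = 0 := by ring
      rw [← Real.exp_add, harg, Real.exp_zero]
    symm
    calc |g t| * Real.exp (C t / 2) * Real.sqrt (Real.sqrt (φ t)) *
          (Real.exp (-C t / 2) * (Real.sqrt (Real.sqrt (φ t)))⁻¹)
        = |g t| * (Real.exp (C t / 2) * Real.exp (-C t / 2)) *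
          (Real.sqrt (Real.sqrt (φ t)) * (Real.sqrt (Real.sqrt (φ t)))⁻¹) := by ring
      _ = |g t| := by rw [hexp, mul_inv_cancel₀ hs.ne', mul_one, mul_one]
  -- step 3 : Hölder
  have hpq : Real.HolderConjugate 2 2 := Real.HolderConjugate.two_two
  have h3 := ENNReal.lintegral_mul_le_Lp_mul_Lq μ hpq hUae hVae
  have hrpow : ∀ z : ENNReal, z ^ (2:ℝ) = z ^ (2:ℕ) := fun z => by
    rw [← ENNReal.rpow_natCast z 2]
    norm_num
  -- step 4 : identify U^2 and V^2
  have hU2 : ∫⁻ t, U t ^ (2:ℝ) ∂μ = ∫⁻ t, ENNReal.ofReal (g t ^ 2 * Real.exp (C t)) *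
      ENNReal.ofReal (Real.sqrt (φ t)) ∂μ := by
    apply lintegral_congr_ae
    filter_upwards [ae_restrict_mem measurableSet_Ioc] with t ht
    have hφt : 0 < φ t := phi_pos he hepos ht.1
    rw [hU_def, hrpow,
      ← ENNReal.ofReal_pow (by positivity), ← ENNReal.ofReal_mul (by positivity)]
    congr 1
    have h4 : Real.sqrt (Real.sqrt (φ t)) ^ 2 = Real.sqrt (φ t) :=
      Real.sq_sqrt (Real.sqrt_nonneg _)
    have h5 : Real.exp (C t / 2) ^ 2 = Real.exp (C t) := by
      have harg : C t / 2 + C t / 2 = C t := by ring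
      rw [sq, ← Real.exp_add, harg]
    rw [mul_pow, mul_pow, sq_abs, h4, h5]
  have hV2 : ∫⁻ t, V t ^ (2:ℝ) ∂μ =
      ENNReal.ofReal (2 * Real.sqrt (φ x)) := by
    have hftc := ftc_sqrt he hepos hx
    have heq : ∀ᵐ t ∂μ, V t ^ (2:ℝ) = ENNReal.ofReal (e t * (Real.sqrt (φ t))⁻¹) := by
      filter_upwards [ae_restrict_mem measurableSet_Ioc] with t ht
      have hφt : 0 < φ t := phi_pos he hepos ht.1
      rw [hV_def, hrpow, ← ENNReal.ofReal_pow (by positivity)]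
      congr 1
      have h4 : Real.sqrt (Real.sqrt (φ t)) ^ 2 = Real.sqrt (φ t) :=
        Real.sq_sqrt (Real.sqrt_nonneg _)
      have h5 : Real.exp (-C t / 2) ^ 2 = Real.exp (-C t) := by
        have harg : -C t / 2 + -C t / 2 = -C t := by ring
        rw [sq, ← Real.exp_add, harg]
      rw [mul_pow, inv_pow, h4, h5]
    rw [lintegral_congr_ae heq, hμ, ← ofReal_integral_eq_lintegral_ofReal hftc.1
      (Filter.Eventually.of_forall fun t =>
        mul_nonneg (hepos t).le (inv_nonneg.mpr (Real.sqrt_nonneg _))), hftc.2]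
  -- combine
  have habs : ENNReal.ofReal ((∫ t in Ioc (0:ℝ) x, g t) ^ 2) =
      ENNReal.ofReal |∫ t in Ioc (0:ℝ) x, g t| ^ 2 := by
    rw [← ENNReal.ofReal_pow (abs_nonneg _), sq_abs]
  rw [habs]
  calc ENNReal.ofReal |∫ t in Ioc (0:ℝ) x, g t| ^ 2
      ≤ (∫⁻ t, U t * V t ∂μ) ^ 2 := by
        apply pow_le_pow_left' (h2 ▸ h1)
  _ ≤ ((∫⁻ t, U t ^ (2:ℝ) ∂μ) ^ (1/(2:ℝ)) * (∫⁻ t, V t ^ (2:ℝ) ∂μ) ^ (1/(2:ℝ))) ^ 2 := by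
        apply pow_le_pow_left' h3
  _ = (∫⁻ t, U t ^ (2:ℝ) ∂μ) * (∫⁻ t, V t ^ (2:ℝ) ∂μ) := by
        rw [mul_pow, ← ENNReal.rpow_natCast (_ ^ (1/(2:ℝ))) 2,
          ← ENNReal.rpow_natCast ((∫⁻ t, V t ^ (2:ℝ) ∂μ) ^ (1/(2:ℝ))) 2,
          ← ENNReal.rpow_mul, ← ENNReal.rpow_mul]
        norm_num
  _ = ENNReal.ofReal (2 * Real.sqrt (φ x)) * ∫⁻ t, ENNReal.ofReal (g t ^ 2 * Real.exp (C t)) *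
        ENNReal.ofReal (Real.sqrt (φ t)) ∂μ := by
        rw [hU2, hV2, mul_comm]


end ChenAux

namespace ChenAux

lemma hardy_core {Ct aa : ℝ → ℝ} (hcontC : Continuous Ct) (hma : Measurable aa)
    (ha : ∀ x, 0 < aa x)
    (hZint : IntegrableOn (fun u => Real.exp (Ct u) / aa u) (Ioi 0))
    {δ : ℝ} (hδpos : 0 < δ)
    (hδx : ∀ x : ℝ, 0 < x →
      (∫ u in (0:ℝ)..x, Real.exp (-Ct u)) * nu (fun u => Real.exp (Ct u) / aa u) x ≤ δ)
    {f g : ℝ → ℝ}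
    (hgint : ∀ x : ℝ, IntervalIntegrable g volume 0 x)
    (hfg : ∀ x ≥ (0:ℝ), f x = ∫ t in (0:ℝ)..x, g t)
    (hIf : IntegrableOn (fun x => f x ^ 2 * (Real.exp (Ct x) / aa x)) (Ioi 0))
    (hIw : IntegrableOn (fun x => g x ^ 2 * Real.exp (Ct x)) (Ioi 0)) :
    ∫ x in Ioi (0:ℝ), f x ^ 2 * (Real.exp (Ct x) / aa x) ≤
      4 * δ * ∫ x in Ioi (0:ℝ), g x ^ 2 * Real.exp (Ct x) := by
  set h : ℝ → ℝ := fun u => Real.exp (Ct u) / aa u with hh_def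
  have hmh : Measurable h := (Real.measurable_exp.comp hcontC.measurable).div hma
  have hhpos : ∀ x, 0 < h x := fun x => div_pos (Real.exp_pos _) (ha x)
  set φ : ℝ → ℝ := fun y => ∫ s in (0:ℝ)..y, Real.exp (-Ct s) with hφ_def
  have hφcont : Continuous φ := by
    apply intervalIntegral.continuous_primitive
    intro u v
    exact (Real.continuous_exp.comp hcontC.neg).intervalIntegrable u v
  have hφnonneg : ∀ x, 0 ≤ x → 0 ≤ φ x := by
    intro x hx
    apply intervalIntegral.integral_nonneg hx
    intro u _
    exact (Real.exp_pos _).le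
  -- sqrt product bound
  have hsqrtbound : ∀ x : ℝ, 0 < x →
      Real.sqrt (φ x) * Real.sqrt (nu h x) ≤ Real.sqrt δ := by
    intro x hx
    rw [← Real.sqrt_mul (hφnonneg x hx.le)]
    exact Real.sqrt_le_sqrt (hδx x hx)
  -- measurable version of W
  set W : ℝ → ENNReal := fun t => ENNReal.ofReal (g t ^ 2 * Real.exp (Ct t)) with hW_def
  have hgae : AEMeasurable g (volume.restrict (Ioi (0:ℝ))) := by
    have hunion : Ioi (0:ℝ) = ⋃ n : ℕ, Ioc (0:ℝ) (n+1) := by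
      ext y
      simp only [mem_Ioi, mem_iUnion, mem_Ioc]
      constructor
      · intro hy
        obtain ⟨n, hn⟩ := exists_nat_gt y
        exact ⟨n, hy, by push_cast; linarith⟩
      · rintro ⟨n, hy, -⟩; exact hy
    rw [hunion, aemeasurable_iUnion_iff]
    intro n
    have : IntegrableOn g (Ioc (0:ℝ) (n+1)) :=
      (intervalIntegrable_iff_integrableOn_Ioc_of_le (by positivity)).mp (hgint (n+1))
    exact this.aestronglyMeasurable.aemeasurable
  have hWae : AEMeasurable W (volume.restrict (Ioi (0:ℝ))) :=
    ENNReal.measurable_ofReal.comp_aemeasurable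
      ((hgae.pow_const 2).mul
        ((Real.continuous_exp.comp hcontC).measurable.aemeasurable))
  set W' : ℝ → ENNReal := hWae.mk W with hW'_def
  have hW'm : Measurable W' := hWae.measurable_mk
  have hWW' : W =ᵐ[volume.restrict (Ioi (0:ℝ))] W' := hWae.ae_eq_mk
  set A : ℝ → ENNReal := fun x => ENNReal.ofReal (2 * Real.sqrt (φ x)) * ENNReal.ofReal (h x)
    with hA_def
  have hAm : Measurable A :=
    ((continuous_const.mul (Real.continuous_sqrt.comp hφcont)).measurable.ennreal_ofReal).mul
      (hmh.ennreal_ofReal)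
  set B : ℝ → ENNReal := fun t => W' t * ENNReal.ofReal (Real.sqrt (φ t)) with hB_def
  have hBm : Measurable B :=
    hW'm.mul ((Real.continuous_sqrt.comp hφcont).measurable.ennreal_ofReal)
  -- pointwise CS bound
  have hstep1 : ∫⁻ x in Ioi (0:ℝ), ENNReal.ofReal (f x ^ 2 * h x) ≤
      ∫⁻ x in Ioi (0:ℝ), A x * ∫⁻ t in Ioc (0:ℝ) x, B t := by
    apply lintegral_mono_ae
    filter_upwards [ae_restrict_mem measurableSet_Ioi] with x hx
    have hx0 : (0:ℝ) < x := hx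
    have hgI : IntegrableOn g (Ioc 0 x) :=
      (intervalIntegrable_iff_integrableOn_Ioc_of_le hx0.le).mp (hgint x)
    have hfx : f x = ∫ t in Ioc (0:ℝ) x, g t := by
      rw [hfg x hx0.le, intervalIntegral.integral_of_le hx0.le]
    have hcs := cs_step hcontC hx0 hgI
    have hinner : (∫⁻ t in Ioc (0:ℝ) x, ENNReal.ofReal (g t ^ 2 * Real.exp (Ct t)) *
        ENNReal.ofReal (Real.sqrt (∫ s in (0:ℝ)..t, Real.exp (-Ct s)))) =
        ∫⁻ t in Ioc (0:ℝ) x, B t := by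
      apply lintegral_congr_ae
      have hsub : Ioc (0:ℝ) x ⊆ Ioi (0:ℝ) := Ioc_subset_Ioi_self
      have := ae_restrict_of_ae_restrict_of_subset hsub hWW'
      filter_upwards [this] with t ht
      simp only [hB_def]
      rw [← ht]
    calc ENNReal.ofReal (f x ^ 2 * h x)
        = ENNReal.ofReal (f x ^ 2) * ENNReal.ofReal (h x) := by
          rw [← ENNReal.ofReal_mul (sq_nonneg _)]
    _ ≤ (ENNReal.ofReal (2 * Real.sqrt (φ x)) *
          ∫⁻ t in Ioc (0:ℝ) x, B t) * ENNReal.ofReal (h x) := by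
          apply mul_le_mul_left
          rw [hfx]
          rw [← hinner]
          exact hcs
    _ = A x * ∫⁻ t in Ioc (0:ℝ) x, B t := by
          rw [hA_def]
          ring
  -- Fubini
  have hstep2 : ∫⁻ x in Ioi (0:ℝ), A x * ∫⁻ t in Ioc (0:ℝ) x, B t =
      ∫⁻ t in Ioi (0:ℝ), B t * ∫⁻ x in Ici t, A x := fubini_swap hAm hBm
  -- tail bound on inner integral
  have hstep3 : ∀ t : ℝ, 0 < t → ∫⁻ x in Ici t, A x ≤
      ENNReal.ofReal (4 * Real.sqrt δ * Real.sqrt (nu h t)) := by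
    intro t ht
    have hIci : ∫⁻ x in Ici t, A x = ∫⁻ x in Ioi t, A x :=
      setLIntegral_congr ((Ioi_ae_eq_Ici (a := t) (μ := volume)).symm)
    rw [hIci]
    have hpt : ∀ x, x ∈ Ioi t → A x ≤
        ENNReal.ofReal (2 * Real.sqrt δ) *
          ENNReal.ofReal ((Real.sqrt (nu h x))⁻¹ * h x) := by
      intro x hx
      have hxt : t < x := hx
      have hx0 : 0 < x := ht.trans hxt
      have hν : 0 < nu h x := nu_pos hZint hhpos hx0.le
      have hsν : 0 < Real.sqrt (nu h x) := Real.sqrt_pos.mpr hν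
      simp only [hA_def]
      rw [← ENNReal.ofReal_mul (by positivity), ← ENNReal.ofReal_mul (by positivity)]
      apply ENNReal.ofReal_le_ofReal
      have hkey : Real.sqrt (φ x) ≤ Real.sqrt δ * (Real.sqrt (nu h x))⁻¹ := by
        rw [← div_eq_mul_inv, le_div_iff₀ hsν]
        exact hsqrtbound x hx0
      calc 2 * Real.sqrt (φ x) * h x ≤ 2 * (Real.sqrt δ * (Real.sqrt (nu h x))⁻¹) * h x := by
            apply mul_le_mul_of_nonneg_right _ (hhpos x).le
            apply mul_le_mul_of_nonneg_left hkey (by norm_num)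
      _ = 2 * Real.sqrt δ * ((Real.sqrt (nu h x))⁻¹ * h x) := by ring
    calc ∫⁻ x in Ioi t, A x
        ≤ ∫⁻ x in Ioi t, ENNReal.ofReal (2 * Real.sqrt δ) *
            ENNReal.ofReal ((Real.sqrt (nu h x))⁻¹ * h x) := by
          apply lintegral_mono_ae
          filter_upwards [ae_restrict_mem measurableSet_Ioi] with x hx
          exact hpt x hx
    _ = ENNReal.ofReal (2 * Real.sqrt δ) *
          ∫⁻ x in Ioi t, ENNReal.ofReal ((Real.sqrt (nu h x))⁻¹ * h x) := by
          rw [lintegral_const_mul']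
          exact ENNReal.ofReal_ne_top
    _ ≤ ENNReal.ofReal (2 * Real.sqrt δ) * ENNReal.ofReal (2 * Real.sqrt (nu h t)) := by
          apply mul_le_mul_right
          exact tail_bound hmh hZint hhpos ht
    _ = ENNReal.ofReal (4 * Real.sqrt δ * Real.sqrt (nu h t)) := by
          rw [← ENNReal.ofReal_mul (by positivity)]
          congr 1
          ring
  -- outer bound
  have hstep4 : ∫⁻ t in Ioi (0:ℝ), B t * ∫⁻ x in Ici t, A x ≤
      ENNReal.ofReal (4 * δ) * ∫⁻ t in Ioi (0:ℝ), W t := by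
    have hmono : ∫⁻ t in Ioi (0:ℝ), B t * ∫⁻ x in Ici t, A x ≤
        ∫⁻ t in Ioi (0:ℝ), ENNReal.ofReal (4 * δ) * W t := by
      apply lintegral_mono_ae
      filter_upwards [ae_restrict_mem measurableSet_Ioi, hWW'] with t ht hW
      have ht0 : (0:ℝ) < t := ht
      calc B t * ∫⁻ x in Ici t, A x
          ≤ B t * ENNReal.ofReal (4 * Real.sqrt δ * Real.sqrt (nu h t)) :=
            mul_le_mul_right (hstep3 t ht0) _
      _ = W t * ENNReal.ofReal (Real.sqrt (φ t)) *
            ENNReal.ofReal (4 * Real.sqrt δ * Real.sqrt (nu h t)) := by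
            simp only [hB_def]
            rw [← hW]
      _ = W t * ENNReal.ofReal (Real.sqrt (φ t) * (4 * Real.sqrt δ * Real.sqrt (nu h t))) := by
            rw [mul_assoc, ← ENNReal.ofReal_mul (Real.sqrt_nonneg _)]
      _ ≤ W t * ENNReal.ofReal (4 * δ) := by
            apply mul_le_mul_right
            apply ENNReal.ofReal_le_ofReal
            have h1 : Real.sqrt (φ t) * (4 * Real.sqrt δ * Real.sqrt (nu h t)) =
                4 * Real.sqrt δ * (Real.sqrt (φ t) * Real.sqrt (nu h t)) := by ring
            rw [h1]
            calc 4 * Real.sqrt δ * (Real.sqrt (φ t) * Real.sqrt (nu h t))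
                ≤ 4 * Real.sqrt δ * Real.sqrt δ := by
                  apply mul_le_mul_of_nonneg_left (hsqrtbound t ht0) (by positivity)
            _ = 4 * δ := by
                  rw [mul_assoc, Real.mul_self_sqrt hδpos.le]
      _ = ENNReal.ofReal (4 * δ) * W t := mul_comm _ _
    refine hmono.trans (le_of_eq ?_)
    rw [lintegral_const_mul']
    exact ENNReal.ofReal_ne_top
  -- combine in ENNReal
  have hENN : ∫⁻ x in Ioi (0:ℝ), ENNReal.ofReal (f x ^ 2 * h x) ≤
      ENNReal.ofReal (4 * δ) * ∫⁻ t in Ioi (0:ℝ), W t :=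
    hstep1.trans (hstep2 ▸ hstep4)
  -- back to real integrals
  have hDl : ENNReal.ofReal (∫ x in Ioi (0:ℝ), f x ^ 2 * (Real.exp (Ct x) / aa x)) =
      ∫⁻ x in Ioi (0:ℝ), ENNReal.ofReal (f x ^ 2 * h x) := by
    rw [ofReal_integral_eq_lintegral_ofReal hIf
      (Filter.Eventually.of_forall fun x => mul_nonneg (sq_nonneg _) (hhpos x).le)]
  have hWl : ENNReal.ofReal (∫ x in Ioi (0:ℝ), g x ^ 2 * Real.exp (Ct x)) =
      ∫⁻ t in Ioi (0:ℝ), W t := by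
    rw [ofReal_integral_eq_lintegral_ofReal hIw
      (Filter.Eventually.of_forall fun x => mul_nonneg (sq_nonneg _) (Real.exp_pos _).le)]
  have hfinal : ENNReal.ofReal (∫ x in Ioi (0:ℝ), f x ^ 2 * (Real.exp (Ct x) / aa x)) ≤
      ENNReal.ofReal (4 * δ * ∫ x in Ioi (0:ℝ), g x ^ 2 * Real.exp (Ct x)) := by
    rw [hDl, ENNReal.ofReal_mul (by positivity), hWl]
    exact hENN
  have hrhs_nonneg : 0 ≤ 4 * δ * ∫ x in Ioi (0:ℝ), g x ^ 2 * Real.exp (Ct x) := by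
    apply mul_nonneg (by positivity)
    apply setIntegral_nonneg measurableSet_Ioi
    intro x _
    positivity
  exact (ENNReal.ofReal_le_ofReal_iff hrhs_nonneg).mp hfinal


end ChenAux

open ChenAux

/-- Chen (2000b, 2001a), part (1) for the Dirichlet eigenvalue: if
`δ = sup_{x>0} (∫_0^x e^{-C})·(∫_x^∞ e^C/a)` satisfies `0 < δ < ∞`, then
`(4δ)⁻¹ ≤ λ₀ ≤ δ⁻¹`. -/
theorem dirichlet_eigenvalue_bounds
    (a b : ℝ → ℝ) (ha : ∀ x, 0 < a x) (hma : Measurable a) (hmb : Measurable b)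
    (hloc : ∀ x : ℝ, IntervalIntegrable (fun u => b u / a u) volume 0 x)
    (C : ℝ → ℝ) (hC : ∀ x, C x = ∫ u in (0:ℝ)..x, b u / a u)
    (hZint : IntegrableOn (fun u => Real.exp (C u) / a u) (Ioi 0))
    (Z : ℝ) (hZ : Z = ∫ u in Ioi (0:ℝ), Real.exp (C u) / a u)
    (δ : ℝ)
    (hδ : δ = ⨆ x : {x : ℝ // 0 < x},
      (∫ u in (0:ℝ)..(x:ℝ), Real.exp (-C u)) *
        ∫ u in Ioi (x:ℝ), Real.exp (C u) / a u)
    (hδbdd : BddAbove (Set.range fun x : {x : ℝ // 0 < x} =>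
      (∫ u in (0:ℝ)..(x:ℝ), Real.exp (-C u)) *
        ∫ u in Ioi (x:ℝ), Real.exp (C u) / a u))
    (hδpos : 0 < δ)
    (lam0 : ℝ)
    (hlam0 : lam0 = sInf { r : ℝ | ∃ f g : ℝ → ℝ,
      (∀ x : ℝ, IntervalIntegrable g volume 0 x) ∧
      (∀ x ≥ (0:ℝ), f x = ∫ t in (0:ℝ)..x, g t) ∧
      IntegrableOn (fun x => f x ^ 2 * (Real.exp (C x) / (a x * Z))) (Ioi 0) ∧
      (0 < ∫ x in Ioi (0:ℝ), f x ^ 2 * (Real.exp (C x) / (a x * Z))) ∧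
      IntegrableOn (fun x => g x ^ 2 * Real.exp (C x) / Z) (Ioi 0) ∧
      r = (∫ x in Ioi (0:ℝ), g x ^ 2 * Real.exp (C x) / Z) /
          (∫ x in Ioi (0:ℝ), f x ^ 2 * (Real.exp (C x) / (a x * Z))) }) :
    (4 * δ)⁻¹ ≤ lam0 ∧ lam0 ≤ δ⁻¹ := by
  -- basic setup
  have hcontC : Continuous C := by
    have hCeq : C = fun x => ∫ u in (0:ℝ)..x, b u / a u := funext hC
    rw [hCeq]
    exact intervalIntegral.continuous_primitive (fun u v => (hloc u).symm.trans (hloc v)) 0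
  set h : ℝ → ℝ := fun u => Real.exp (C u) / a u with hh_def
  have hhpos : ∀ x, 0 < h x := fun x => div_pos (Real.exp_pos _) (ha x)
  have hZpos : 0 < Z := by
    rw [hZ]
    exact nu_pos hZint hhpos le_rfl
  set e : ℝ → ℝ := fun u => Real.exp (-C u) with he_def
  have he : Continuous e := Real.continuous_exp.comp hcontC.neg
  have hepos : ∀ t, 0 < e t := fun t => Real.exp_pos _
  set φ : ℝ → ℝ := fun y => ∫ s in (0:ℝ)..y, e s with hφ_def
  have hφcont : Continuous φ :=
    intervalIntegral.continuous_primitive (fun u v => he.intervalIntegrable u v) 0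
  have hφpos : ∀ x : ℝ, 0 < x → 0 < φ x := fun x hx => phi_pos he hepos hx
  have hφmono : Monotone φ := by
    intro u v huv
    have hadd := intervalIntegral.integral_add_adjacent_intervals
      (he.intervalIntegrable 0 u (μ := volume)) (he.intervalIntegrable u v (μ := volume))
    have hnn : 0 ≤ ∫ s in u..v, e s :=
      intervalIntegral.integral_nonneg huv (fun t _ => (hepos t).le)
    simp only [hφ_def]
    linarith [hadd, hnn]
  have hδx : ∀ x : ℝ, 0 < x → φ x * nu h x ≤ δ := by
    intro x hx
    rw [hδ]
    exact le_ciSup hδbdd ⟨x, hx⟩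
  set S : Set ℝ := { r : ℝ | ∃ f g : ℝ → ℝ,
      (∀ x : ℝ, IntervalIntegrable g volume 0 x) ∧
      (∀ x ≥ (0:ℝ), f x = ∫ t in (0:ℝ)..x, g t) ∧
      IntegrableOn (fun x => f x ^ 2 * (Real.exp (C x) / (a x * Z))) (Ioi 0) ∧
      (0 < ∫ x in Ioi (0:ℝ), f x ^ 2 * (Real.exp (C x) / (a x * Z))) ∧
      IntegrableOn (fun x => g x ^ 2 * Real.exp (C x) / Z) (Ioi 0) ∧
      r = (∫ x in Ioi (0:ℝ), g x ^ 2 * Real.exp (C x) / Z) /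
          (∫ x in Ioi (0:ℝ), f x ^ 2 * (Real.exp (C x) / (a x * Z))) } with hS_def
  -- PART A : test functions
  have build : ∀ x0 : ℝ, 0 < x0 → ∃ r ∈ S, r ≤ (φ x0 * nu h x0)⁻¹ := by
    intro x0 hx0
    have hνpos : 0 < nu h x0 := nu_pos hZint hhpos hx0.le
    have hφx0 : 0 < φ x0 := hφpos x0 hx0
    set g0 : ℝ → ℝ := (Ioc (0:ℝ) x0).indicator e with hg0_def
    set f0 : ℝ → ℝ := fun x => ∫ t in (0:ℝ)..x, g0 t with hf0_def
    have hg0int : ∀ x : ℝ, IntervalIntegrable g0 volume 0 x := by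
      intro x
      rw [intervalIntegrable_iff]
      exact (he.integrableOn_uIoc).indicator measurableSet_Ioc
    have hf0cont : Continuous f0 :=
      intervalIntegral.continuous_primitive
        (fun u v => (hg0int u).symm.trans (hg0int v)) 0
    have hf0eq : ∀ x : ℝ, 0 ≤ x → f0 x = φ (min x x0) := by
      intro x hx
      rw [hf0_def]
      simp only []
      rw [intervalIntegral.integral_of_le hx, hg0_def,
        setIntegral_indicator measurableSet_Ioc]
      have hinter : Ioc (0:ℝ) x ∩ Ioc (0:ℝ) x0 = Ioc (0:ℝ) (min x x0) := by
        rw [Ioc_inter_Ioc]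
        simp
      rw [hinter]
      exact (intervalIntegral.integral_of_le (le_min hx hx0.le)).symm
    have hf0pos : ∀ x : ℝ, 0 < x → 0 < f0 x := by
      intro x hx
      rw [hf0eq x hx.le]
      exact hφpos _ (lt_min hx hx0)
    have hf0le : ∀ x : ℝ, 0 ≤ x → f0 x ≤ φ x0 := by
      intro x hx
      rw [hf0eq x hx]
      exact hφmono (min_le_right _ _)
    -- integrability of D-integrand
    have hIf0 : IntegrableOn (fun x => f0 x ^ 2 * (Real.exp (C x) / (a x * Z))) (Ioi 0) := by
      apply Integrable.mono' ((hZint.div_const Z).const_mul ((φ x0)^2))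
      · exact ((hf0cont.measurable.pow_const 2).mul
          ((Real.measurable_exp.comp hcontC.measurable).div
            (hma.mul_const Z))).aestronglyMeasurable
      · filter_upwards [ae_restrict_mem measurableSet_Ioi] with x hx
        have hx0' : (0:ℝ) < x := hx
        have h1 : 0 ≤ f0 x := (hf0pos x hx0').le
        have h2 : f0 x ≤ φ x0 := hf0le x hx0'.le
        have h3 : 0 < Real.exp (C x) / (a x * Z) :=
          div_pos (Real.exp_pos _) (mul_pos (ha x) hZpos)
        rw [Real.norm_eq_abs, abs_of_nonneg (by positivity)]
        have h4 : f0 x ^ 2 ≤ (φ x0) ^ 2 := by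
          apply pow_le_pow_left₀ h1 h2
        calc f0 x ^ 2 * (Real.exp (C x) / (a x * Z))
            ≤ (φ x0) ^ 2 * (Real.exp (C x) / (a x * Z)) :=
              mul_le_mul_of_nonneg_right h4 h3.le
        _ = (φ x0) ^ 2 * (h x / Z) := by
              rw [hh_def]
              simp only []
              rw [div_div]
    -- positivity of D
    have hD0pos : 0 < ∫ x in Ioi (0:ℝ), f0 x ^ 2 * (Real.exp (C x) / (a x * Z)) := by
      rw [setIntegral_pos_iff_support_of_nonneg_ae _ hIf0]
      · have hsub : Ioi (0:ℝ) ⊆ Function.support (fun x => f0 x ^ 2 * (Real.exp (C x) / (a x * Z))) ∩ Ioi 0 := by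
          intro x hx
          have hx0' : (0:ℝ) < x := hx
          constructor
          · have : 0 < f0 x ^ 2 * (Real.exp (C x) / (a x * Z)) := by
              apply mul_pos (pow_pos (hf0pos x hx0') 2)
              exact div_pos (Real.exp_pos _) (mul_pos (ha x) hZpos)
            exact this.ne'
          · exact hx
        calc (0 : ENNReal) < volume (Ioi (0:ℝ)) := by simp
        _ ≤ _ := measure_mono hsub
      · filter_upwards [ae_restrict_mem measurableSet_Ioi] with x hx
        exact mul_nonneg (sq_nonneg _)
          (div_pos (Real.exp_pos _) (mul_pos (ha x) hZpos)).le
    -- integrability and value of N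
    have hN0eq : ∀ x : ℝ, g0 x ^ 2 * Real.exp (C x) / Z =
        (Ioc (0:ℝ) x0).indicator (fun u => e u / Z) x := by
      intro x
      rw [hg0_def]
      by_cases hx : x ∈ Ioc (0:ℝ) x0
      · rw [Set.indicator_of_mem hx, Set.indicator_of_mem hx, he_def]
        simp only []
        rw [sq, ← Real.exp_add]
        congr 2
        rw [← Real.exp_add]
        ring_nf
      · rw [Set.indicator_of_notMem hx, Set.indicator_of_notMem hx]
        simp
    have hIw0 : IntegrableOn (fun x => g0 x ^ 2 * Real.exp (C x) / Z) (Ioi 0) := by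
      have : IntegrableOn ((Ioc (0:ℝ) x0).indicator (fun u => e u / Z)) (Ioi 0) := by
        rw [IntegrableOn, integrable_indicator_iff measurableSet_Ioc]
        rw [IntegrableOn, Measure.restrict_restrict measurableSet_Ioc]
        have : Ioc (0:ℝ) x0 ∩ Ioi 0 = Ioc (0:ℝ) x0 :=
          inter_eq_self_of_subset_left Ioc_subset_Ioi_self
        rw [this]
        exact (he.div_const Z).integrableOn_Ioc
      exact this.congr_fun (fun x _ => (hN0eq x).symm) measurableSet_Ioi
    have hN0val : ∫ x in Ioi (0:ℝ), g0 x ^ 2 * Real.exp (C x) / Z = φ x0 / Z := by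
      rw [setIntegral_congr_fun measurableSet_Ioi (fun x _ => hN0eq x),
        setIntegral_indicator measurableSet_Ioc]
      have : Ioi (0:ℝ) ∩ Ioc (0:ℝ) x0 = Ioc (0:ℝ) x0 :=
        inter_eq_self_of_subset_right Ioc_subset_Ioi_self
      rw [this, integral_div]
      congr 1
      exact (intervalIntegral.integral_of_le hx0.le).symm
    -- lower bound for D
    have hD0ge : (φ x0)^2 / Z * nu h x0 ≤
        ∫ x in Ioi (0:ℝ), f0 x ^ 2 * (Real.exp (C x) / (a x * Z)) := by
      have hnnae : 0 ≤ᵐ[volume.restrict (Ioi (0:ℝ))]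
          fun x => f0 x ^ 2 * (Real.exp (C x) / (a x * Z)) := by
        filter_upwards [] with x
        exact mul_nonneg (sq_nonneg _)
          (div_nonneg (Real.exp_pos _).le (mul_nonneg (ha x).le hZpos.le))
      have hmono := setIntegral_mono_set hIf0 hnnae
        (HasSubset.Subset.eventuallyLE (Ioi_subset_Ioi hx0.le))
      refine le_trans (le_of_eq ?_) hmono
      have hcongr : ∀ x ∈ Ioi x0, f0 x ^ 2 * (Real.exp (C x) / (a x * Z)) =
          (φ x0)^2 / Z * h x := by
        intro x hx
        have hxx0 : x0 < x := hx
        have : min x x0 = x0 := min_eq_right hxx0.le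
        rw [hf0eq x (hx0.trans hxx0).le, this, hh_def]
        simp only []
        field_simp
      rw [setIntegral_congr_fun measurableSet_Ioi hcongr, integral_const_mul]
      rfl
    -- assemble the member
    set D := ∫ x in Ioi (0:ℝ), f0 x ^ 2 * (Real.exp (C x) / (a x * Z)) with hD_def
    set N := ∫ x in Ioi (0:ℝ), g0 x ^ 2 * Real.exp (C x) / Z with hN_def
    refine ⟨N / D, ⟨f0, g0, hg0int, fun x hx => rfl, hIf0, hD0pos, hIw0, rfl⟩, ?_⟩
    have hD0' : 0 < (φ x0)^2 / Z * nu h x0 := by positivity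
    calc N / D ≤ N / ((φ x0)^2 / Z * nu h x0) := by
          apply div_le_div_of_nonneg_left _ hD0' hD0ge
          rw [hN0val]
          positivity
    _ = (φ x0 * nu h x0)⁻¹ := by
          rw [hN0val]
          have h1 : φ x0 ≠ 0 := hφx0.ne'
          have h2 : Z ≠ 0 := hZpos.ne'
          have h3 : nu h x0 ≠ 0 := hνpos.ne'
          field_simp
  -- PART B : lower bound
  have hSne : S.Nonempty := by
    obtain ⟨r, hr, -⟩ := build 1 one_pos
    exact ⟨r, hr⟩
  have hlower : (4 * δ)⁻¹ ≤ lam0 := by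
    rw [hlam0]
    apply le_csInf hSne
    rintro r ⟨f, g, hgint, hfg, hIf, hDpos, hIw, hrval⟩
    -- unnormalized integrability
    have hIf' : IntegrableOn (fun x => f x ^ 2 * (Real.exp (C x) / a x)) (Ioi 0) := by
      have heq : (fun x => Z * (f x ^ 2 * (Real.exp (C x) / (a x * Z)))) =
          fun x => f x ^ 2 * (Real.exp (C x) / a x) := by
        funext x
        have h1 : a x ≠ 0 := (ha x).ne'
        have h2 : Z ≠ 0 := hZpos.ne'
        field_simp
      rw [← heq]
      exact hIf.const_mul Z
    have hIw' : IntegrableOn (fun x => g x ^ 2 * Real.exp (C x)) (Ioi 0) := by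
      have heq : (fun x => Z * (g x ^ 2 * Real.exp (C x) / Z)) =
          fun x => g x ^ 2 * Real.exp (C x) := by
        funext x
        field_simp
      rw [← heq]
      exact hIw.const_mul Z
    have hkey := hardy_core hcontC hma ha hZint hδpos hδx hgint hfg hIf' hIw'
    -- renormalize
    have hDeq : ∫ x in Ioi (0:ℝ), f x ^ 2 * (Real.exp (C x) / (a x * Z)) =
        (∫ x in Ioi (0:ℝ), f x ^ 2 * (Real.exp (C x) / a x)) / Z := by
      rw [← integral_div]
      apply setIntegral_congr_fun measurableSet_Ioi
      intro x _
      field_simp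
    have hNeq : ∫ x in Ioi (0:ℝ), g x ^ 2 * Real.exp (C x) / Z =
        (∫ x in Ioi (0:ℝ), g x ^ 2 * Real.exp (C x)) / Z := integral_div _ _
    rw [hrval, hDeq, hNeq]
    rw [hDeq] at hDpos
    have h4δ : (0:ℝ) < 4 * δ := by linarith
    rw [le_div_iff₀ hDpos, inv_mul_le_iff₀ h4δ]
    calc (∫ x in Ioi (0:ℝ), f x ^ 2 * (Real.exp (C x) / a x)) / Z
        ≤ (4 * δ * ∫ x in Ioi (0:ℝ), g x ^ 2 * Real.exp (C x)) / Z := by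
          exact (div_le_div_iff_of_pos_right hZpos).mpr hkey
    _ = 4 * δ * ((∫ x in Ioi (0:ℝ), g x ^ 2 * Real.exp (C x)) / Z) := by ring
  -- PART C : upper bound
  have hupper : lam0 ≤ δ⁻¹ := by
    have hBdd : BddBelow S := by
      refine ⟨0, ?_⟩
      rintro r ⟨f, g, hgint, hfg, hIf, hDpos, hIw, hrval⟩
      rw [hrval]
      apply div_nonneg _ hDpos.le
      apply setIntegral_nonneg measurableSet_Ioi
      intro x _
      have := Real.exp_pos (C x)
      positivity
    by_cases hlam : lam0 ≤ 0
    · exact hlam.trans (by positivity)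
    push_neg at hlam
    have hbound : ∀ x0 : ℝ, 0 < x0 → φ x0 * nu h x0 ≤ lam0⁻¹ := by
      intro x0 hx0
      obtain ⟨r, hrS, hrle⟩ := build x0 hx0
      have h1 : lam0 ≤ r := hlam0 ▸ csInf_le hBdd hrS
      have h2 : lam0 ≤ (φ x0 * nu h x0)⁻¹ := h1.trans hrle
      have hprod : 0 < φ x0 * nu h x0 :=
        mul_pos (hφpos x0 hx0) (nu_pos hZint hhpos hx0.le)
      rw [le_inv_comm₀ hlam hprod] at h2
      exact h2
    have hδle : δ ≤ lam0⁻¹ := by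
      rw [hδ]
      apply ciSup_le
      rintro ⟨x, hx⟩
      exact hbound x hx
    rw [← inv_inv lam0]
    exact inv_anti₀ hδpos hδle
  exact ⟨hlower, hupper⟩
end

section
/- The spectral gap of a birth-death process is given by the variational formula λ₁ = sup_{w∈𝓦} inf_{i≥0} I_i(w)^{-1}, where 𝓦 = { w : ℤ₊ → ℝ : w is strictly increasing, Σ_i π_i |w_i| < ∞, and π(w) ≥ 0 } and I_i(w) = (1/(μ_i b_i (w_{i+1} − w_i))) Σ_{j≥i+1} μ_j w_j. -/
set_option maxHeartbeats 1000000

open MeasureTheory Set Real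

namespace ChenAux

theorem mu_pos (b a mu : ℕ → ℝ) (hb : ∀ i, 0 < b i) (ha : ∀ i, 0 < a (i + 1))
    (hmu0 : mu 0 = 1) (hmurec : ∀ n, mu (n + 1) = mu n * b n / a (n + 1)) :
    ∀ n, 0 < mu n := by
  intro n
  induction n with
  | zero => simp [hmu0]
  | succ k ih => rw [hmurec]; exact div_pos (mul_pos ih (hb k)) (ha k)

theorem Z_gt_one (mu : ℕ → ℝ) (hmupos : ∀ n, 0 < mu n) (hmusum : Summable mu)
    (Z : ℝ) (hZ : Z = ∑' n, mu n) (hmu0 : mu 0 = 1) : 1 < Z := by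
  have h2 : ∑ i ∈ Finset.range 2, mu i ≤ ∑' n, mu n :=
    Summable.sum_le_tsum _ (fun i _ => (hmupos i).le) hmusum
  have : (1 : ℝ) + mu 1 ≤ ∑' n, mu n := by
    simpa [Finset.sum_range_succ, hmu0] using h2
  have h1 := hmupos 1
  rw [hZ]
  linarith

theorem tail_pos (mu : ℕ → ℝ) (hmupos : ∀ n, 0 < mu n) (hmusum : Summable mu)
    (w : ℕ → ℝ) (hw : StrictMono w) (hws : Summable (fun i => mu i * w i))
    (hmean : 0 ≤ ∑' i, mu i * w i) (k : ℕ) :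
    0 < ∑' j, mu (k + 1 + j) * w (k + 1 + j) := by
  have hinj : Function.Injective (fun j : ℕ => k + 1 + j) := fun x y h => by simpa using h
  have hsh : Summable (fun j => mu (k + 1 + j) * w (k + 1 + j)) := by
    have := hws.comp_injective hinj
    simpa [Function.comp_def] using this
  rcases le_or_gt 0 (w (k + 1)) with h0 | h0
  · refine Summable.tsum_pos hsh (fun j => ?_) 1 ?_
    · have : w (k + 1) ≤ w (k + 1 + j) := hw.monotone (by omega)
      exact mul_nonneg (hmupos _).le (by linarith)
    · have : w (k + 1) < w (k + 1 + 1) := hw (by omega)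
      exact mul_pos (hmupos _) (by linarith)
  · have hsplit := Summable.sum_add_tsum_nat_add (f := fun i => mu i * w i) (k + 1) hws
    have hneg : ∑ i ∈ Finset.range (k + 1), mu i * w i < 0 := by
      apply Finset.sum_neg (fun i hi => ?_) ⟨0, Finset.mem_range.mpr (by omega)⟩
      have hik : i < k + 1 := Finset.mem_range.mp hi
      have : w i ≤ w (k + 1) := hw.monotone (by omega)
      exact mul_neg_of_pos_of_neg (hmupos i) (by linarith)
    have heq : ∑' j, mu (k + 1 + j) * w (k + 1 + j) = ∑' j, mu (j + (k + 1)) * w (j + (k + 1)) := by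
      apply tsum_congr; intro j; rw [add_comm (k+1) j]
    rw [heq]
    linarith [hsplit, hmean]

theorem var_double (mu : ℕ → ℝ) (hmupos : ∀ n, 0 < mu n) (hmusum : Summable mu)
    (Z : ℝ) (hZ : Z = ∑' n, mu n) (f : ℕ → ℝ)
    (h1 : Summable (fun i => mu i * f i)) (h2 : Summable (fun i => mu i * f i ^ 2)) :
    Summable (fun p : ℕ × ℕ => if p.1 < p.2 then mu p.1 * mu p.2 * (f p.2 - f p.1) ^ 2 else 0) ∧
    (∑' p : ℕ × ℕ, if p.1 < p.2 then mu p.1 * mu p.2 * (f p.2 - f p.1) ^ 2 else 0)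
      = Z * (∑' i, mu i * f i ^ 2) - (∑' i, mu i * f i) ^ 2 := by
  set u : ℕ × ℕ → ℝ := fun p => if p.1 < p.2 then mu p.1 * mu p.2 * (f p.2 - f p.1) ^ 2 else 0
    with hu
  set FU : ℕ × ℕ → ℝ := fun p => mu p.1 * mu p.2 * (f p.2 - f p.1) ^ 2 with hFU
  have hFUnonneg : ∀ p, 0 ≤ FU p := fun p =>
    mul_nonneg (mul_nonneg (hmupos _).le (hmupos _).le) (sq_nonneg _)
  have e : ∀ p : ℕ × ℕ, FU p =
      mu p.1 * (mu p.2 * f p.2 ^ 2) - 2 * ((mu p.1 * f p.1) * (mu p.2 * f p.2))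
        + (mu p.1 * f p.1 ^ 2) * mu p.2 := by
    intro p; simp only [hFU]; ring
  have s1 : Summable (fun p : ℕ × ℕ => mu p.1 * (mu p.2 * f p.2 ^ 2)) :=
    hmusum.mul_of_nonneg h2 (fun i => (hmupos i).le)
      (fun i => mul_nonneg (hmupos i).le (sq_nonneg _))
  have s3 : Summable (fun p : ℕ × ℕ => (mu p.1 * f p.1 ^ 2) * mu p.2) :=
    h2.mul_of_nonneg hmusum (fun i => mul_nonneg (hmupos i).le (sq_nonneg _))
      (fun i => (hmupos i).le)
  have s2 : Summable (fun p : ℕ × ℕ => (mu p.1 * f p.1) * (mu p.2 * f p.2)) := by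
    apply Summable.of_abs
    have := h1.abs.mul_of_nonneg h1.abs (fun i => abs_nonneg _) (fun i => abs_nonneg _)
    simpa [abs_mul] using this
  have sFU : Summable FU := by
    apply Summable.congr ((s1.sub (s2.mul_left 2)).add s3)
    intro p; rw [e p]
  have su : Summable u := by
    apply Summable.of_nonneg_of_le (g := u) (f := FU)
    · intro p; simp only [hu]; split <;> [exact hFUnonneg p; exact le_refl 0]
    · intro p; simp only [hu]; split; · exact le_refl _
      · exact hFUnonneg p
    · exact sFU
  have t1 : ∑' p : ℕ × ℕ, mu p.1 * (mu p.2 * f p.2 ^ 2) = Z * (∑' i, mu i * f i ^ 2) := by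
    rw [Summable.tsum_prod' s1 s1.prod_factor]
    have inner : ∀ i : ℕ, ∑' j, mu i * (mu j * f j ^ 2) = mu i * (∑' i, mu i * f i ^ 2) :=
      fun i => tsum_mul_left
    rw [tsum_congr inner, tsum_mul_right, ← hZ]
  have t2 : ∑' p : ℕ × ℕ, (mu p.1 * f p.1) * (mu p.2 * f p.2)
      = (∑' i, mu i * f i) * (∑' i, mu i * f i) := by
    rw [Summable.tsum_prod' s2 s2.prod_factor]
    have inner : ∀ i : ℕ, ∑' j, (mu i * f i) * (mu j * f j) = (mu i * f i) * (∑' i, mu i * f i) :=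
      fun i => tsum_mul_left
    rw [tsum_congr inner, tsum_mul_right]
  have t3 : ∑' p : ℕ × ℕ, (mu p.1 * f p.1 ^ 2) * mu p.2 = (∑' i, mu i * f i ^ 2) * Z := by
    rw [Summable.tsum_prod' s3 s3.prod_factor]
    have inner : ∀ i : ℕ, ∑' j, (mu i * f i ^ 2) * mu j = (mu i * f i ^ 2) * (∑' i, mu i) :=
      fun i => tsum_mul_left
    rw [tsum_congr inner, tsum_mul_right, ← hZ]
  have tFU : ∑' p, FU p
      = 2 * (Z * (∑' i, mu i * f i ^ 2) - (∑' i, mu i * f i) ^ 2) := by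
    calc ∑' p, FU p
        = ∑' p : ℕ × ℕ, (mu p.1 * (mu p.2 * f p.2 ^ 2)
            - 2 * ((mu p.1 * f p.1) * (mu p.2 * f p.2)) + (mu p.1 * f p.1 ^ 2) * mu p.2) :=
          tsum_congr e
      _ = (∑' p : ℕ × ℕ, (mu p.1 * (mu p.2 * f p.2 ^ 2)
            - 2 * ((mu p.1 * f p.1) * (mu p.2 * f p.2))))
          + ∑' p : ℕ × ℕ, (mu p.1 * f p.1 ^ 2) * mu p.2 :=
          Summable.tsum_add (s1.sub (s2.mul_left 2)) s3
      _ = (∑' p : ℕ × ℕ, mu p.1 * (mu p.2 * f p.2 ^ 2))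
          - (∑' p : ℕ × ℕ, 2 * ((mu p.1 * f p.1) * (mu p.2 * f p.2)))
          + ∑' p : ℕ × ℕ, (mu p.1 * f p.1 ^ 2) * mu p.2 := by
          rw [Summable.tsum_sub s1 (s2.mul_left 2)]
      _ = 2 * (Z * (∑' i, mu i * f i ^ 2) - (∑' i, mu i * f i) ^ 2) := by
          rw [tsum_mul_left, t1, t2, t3]; ring
  have swap_eq : ∀ p : ℕ × ℕ, FU p = u p + u p.swap := by
    rintro ⟨i, j⟩
    rcases lt_trichotomy i j with h | h | h
    · simp only [hu, hFU, Prod.swap_prod_mk]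
      rw [if_pos h, if_neg (by omega)]; ring
    · subst h
      simp only [hu, hFU, Prod.swap_prod_mk, lt_irrefl, if_false, sub_self]
      ring
    · simp only [hu, hFU, Prod.swap_prod_mk]
      rw [if_neg (by omega), if_pos h]; ring
  have hswap_sum : Summable (fun p : ℕ × ℕ => u p.swap) := by
    have := su.comp_injective Prod.swap_injective
    simpa [Function.comp_def] using this
  have tswap : ∑' p : ℕ × ℕ, u p.swap = ∑' p, u p := by
    have h := (Equiv.prodComm ℕ ℕ).tsum_eq u
    rw [← h]
    apply tsum_congr; rintro ⟨i, j⟩; rfl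
  have key : 2 * ∑' p, u p = ∑' p, FU p := by
    calc 2 * ∑' p, u p = ∑' p, u p + ∑' p : ℕ × ℕ, u p.swap := by rw [tswap]; ring
      _ = ∑' p : ℕ × ℕ, (u p + u p.swap) := (Summable.tsum_add su hswap_sum).symm
      _ = ∑' p, FU p := tsum_congr (fun p => (swap_eq p).symm)
  exact ⟨su, by linarith [tFU, key]⟩

theorem directionA (b mu : ℕ → ℝ) (hb : ∀ i, 0 < b i) (hmupos : ∀ n, 0 < mu n)
    (hmusum : Summable mu) (Z : ℝ) (hZ : Z = ∑' n, mu n)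
    (w : ℕ → ℝ) (hw : StrictMono w) (hwsum : Summable (fun i => mu i * |w i|))
    (hwmean : 0 ≤ ∑' i, mu i * w i)
    (f : ℕ → ℝ) (hf1 : Summable (fun i => mu i * f i)) (hf1' : (∑' i, mu i * f i) = 0)
    (hf2 : Summable (fun i => mu i * f i ^ 2)) (hf2' : (∑' i, mu i * f i ^ 2) = Z)
    (hfD : Summable (fun i => mu i * b i * (f (i + 1) - f i) ^ 2)) :
    (⨅ i : ℕ, ((mu i * b i * (w (i + 1) - w i))⁻¹ * ∑' j, mu (i + 1 + j) * w (i + 1 + j))⁻¹)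
      ≤ (∑' i, mu i * b i * (f (i + 1) - f i) ^ 2) / Z := by
  have hZpos : 0 < Z := by
    rw [hZ]; exact Summable.tsum_pos hmusum (fun i => (hmupos i).le) 0 (hmupos 0)
  have hμw : Summable (fun i => mu i * w i) := by
    apply Summable.of_abs
    apply Summable.congr hwsum
    intro i; rw [abs_mul, abs_of_pos (hmupos i)]
  set v : ℕ → ℝ := fun k => ∑' j, mu (k + 1 + j) * w (k + 1 + j) with hv
  have htail : ∀ k, 0 < v k := fun k => tail_pos mu hmupos hmusum w hw hμw hwmean k
  have hΔw : ∀ k, 0 < w (k + 1) - w k := fun k => sub_pos.mpr (hw (lt_add_one k))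
  have hDk : ∀ k, 0 < mu k * b k * (w (k + 1) - w k) := fun k =>
    mul_pos (mul_pos (hmupos k) (hb k)) (hΔw k)
  set r := ⨅ i : ℕ, ((mu i * b i * (w (i + 1) - w i))⁻¹ * v i)⁻¹ with hr
  have hInn : ∀ i, 0 < (mu i * b i * (w (i + 1) - w i))⁻¹ * v i := fun i =>
    mul_pos (inv_pos.mpr (hDk i)) (htail i)
  have hbddB : BddBelow (Set.range fun i : ℕ =>
      ((mu i * b i * (w (i + 1) - w i))⁻¹ * v i)⁻¹) := by
    refine ⟨0, ?_⟩; rintro x ⟨i, rfl⟩; exact (inv_pos.mpr (hInn i)).le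
  have hSd0 : 0 ≤ ∑' i, mu i * b i * (f (i + 1) - f i) ^ 2 :=
    tsum_nonneg fun i => mul_nonneg (mul_pos (hmupos i) (hb i)).le (sq_nonneg _)
  have hDnonneg : 0 ≤ (∑' i, mu i * b i * (f (i + 1) - f i) ^ 2) / Z :=
    div_nonneg hSd0 hZpos.le
  rcases le_or_gt r 0 with hr0 | hr0
  · exact hr0.trans hDnonneg
  have hkey : ∀ k, r * v k ≤ mu k * b k * (w (k + 1) - w k) := by
    intro k
    have h1 : r ≤ ((mu k * b k * (w (k + 1) - w k))⁻¹ * v k)⁻¹ := ciInf_le hbddB k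
    have h2 : r * ((mu k * b k * (w (k + 1) - w k))⁻¹ * v k) ≤ 1 :=
      (le_div_iff₀ (hInn k)).mp (by simpa [one_div] using h1)
    have h3 := mul_le_mul_of_nonneg_right h2 (hDk k).le
    have e : r * ((mu k * b k * (w (k + 1) - w k))⁻¹ * v k) * (mu k * b k * (w (k + 1) - w k))
        = r * v k := by
      field_simp
      rw [mul_div_assoc, mul_div_cancel₀ _ (hDk k).ne']
    rw [e, one_mul] at h3
    exact h3
  -- Cauchy-Schwarz
  have hCS : ∀ i j : ℕ, i < j → (f j - f i) ^ 2
      ≤ (w j - w i) * ∑ k ∈ Finset.Ico i j, (f (k + 1) - f k) ^ 2 / (w (k + 1) - w k) := by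
    intro i j hij
    have key := Finset.sum_mul_sq_le_sq_mul_sq (Finset.Ico i j)
      (fun k => Real.sqrt (w (k + 1) - w k))
      (fun k => (f (k + 1) - f k) / Real.sqrt (w (k + 1) - w k))
    have e1 : ∀ k ∈ Finset.Ico i j, Real.sqrt (w (k + 1) - w k)
        * ((f (k + 1) - f k) / Real.sqrt (w (k + 1) - w k)) = f (k + 1) - f k := by
      intro k _
      rw [mul_div_cancel₀ _ ((Real.sqrt_ne_zero').mpr (hΔw k))]
    have e2 : ∀ k ∈ Finset.Ico i j, (Real.sqrt (w (k + 1) - w k)) ^ 2 = w (k + 1) - w k :=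
      fun k _ => Real.sq_sqrt (hΔw k).le
    have e3 : ∀ k ∈ Finset.Ico i j, ((f (k + 1) - f k) / Real.sqrt (w (k + 1) - w k)) ^ 2
        = (f (k + 1) - f k) ^ 2 / (w (k + 1) - w k) := by
      intro k _; rw [div_pow, Real.sq_sqrt (hΔw k).le]
    have telf : ∑ k ∈ Finset.Ico i j, (f (k + 1) - f k) = f j - f i := by
      rw [Finset.sum_Ico_eq_sub _ hij.le, Finset.sum_range_sub, Finset.sum_range_sub]; ring
    have telw : ∑ k ∈ Finset.Ico i j, (w (k + 1) - w k) = w j - w i := by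
      rw [Finset.sum_Ico_eq_sub _ hij.le, Finset.sum_range_sub, Finset.sum_range_sub]; ring
    calc (f j - f i) ^ 2
        = (∑ k ∈ Finset.Ico i j, Real.sqrt (w (k + 1) - w k)
            * ((f (k + 1) - f k) / Real.sqrt (w (k + 1) - w k))) ^ 2 := by
          rw [Finset.sum_congr rfl e1, telf]
      _ ≤ (∑ k ∈ Finset.Ico i j, (Real.sqrt (w (k + 1) - w k)) ^ 2)
          * ∑ k ∈ Finset.Ico i j, ((f (k + 1) - f k) / Real.sqrt (w (k + 1) - w k)) ^ 2 := key
      _ = (w j - w i) * ∑ k ∈ Finset.Ico i j, (f (k + 1) - f k) ^ 2 / (w (k + 1) - w k) := by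
          rw [Finset.sum_congr rfl e2, telw, Finset.sum_congr rfl e3]
  -- ENNReal chain
  obtain ⟨sG2, tG2⟩ := var_double mu hmupos hmusum Z hZ f hf1 hf2
  rw [hf1', hf2'] at tG2
  have tG2' : (∑' p : ℕ × ℕ, if p.1 < p.2 then mu p.1 * mu p.2 * (f p.2 - f p.1) ^ 2 else 0)
      = Z * Z := by rw [tG2]; ring
  have hG2nonneg : ∀ p : ℕ × ℕ,
      0 ≤ (if p.1 < p.2 then mu p.1 * mu p.2 * (f p.2 - f p.1) ^ 2 else 0) := by
    intro p; split
    · exact mul_nonneg (mul_nonneg (hmupos _).le (hmupos _).le) (sq_nonneg _)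
    · exact le_refl 0
  set h : ℕ → ℝ := fun k => (f (k + 1) - f k) ^ 2 / (w (k + 1) - w k) with hh
  have hhnonneg : ∀ k, 0 ≤ h k := fun k => div_nonneg (sq_nonneg _) (hΔw k).le
  set c : ℕ × ℕ → ℕ → ℝ := fun p k =>
    if p.1 ≤ k ∧ k < p.2 then mu p.1 * mu p.2 * (w p.2 - w p.1) * h k else 0 with hc
  have hcnonneg : ∀ p k, 0 ≤ c p k := by
    intro p k; rw [hc]; dsimp only; split
    · rename_i hpk
      have : w p.1 ≤ w p.2 := (hw.le_iff_le).mpr (by omega)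
      exact mul_nonneg (mul_nonneg (mul_nonneg (hmupos _).le (hmupos _).le) (by linarith))
        (hhnonneg k)
    · exact le_refl 0
  have stepB : ∀ p : ℕ × ℕ,
      ENNReal.ofReal (if p.1 < p.2 then mu p.1 * mu p.2 * (f p.2 - f p.1) ^ 2 else 0)
        ≤ ∑' k, ENNReal.ofReal (c p k) := by
    rintro ⟨i, j⟩
    rcases lt_or_ge i j with hp | hp
    · have hsupp : ∀ k ∉ Finset.Ico i j, ENNReal.ofReal (c (i, j) k) = 0 := by
        intro k hk
        rw [Finset.mem_Ico] at hk
        rw [hc]; dsimp only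
        rw [if_neg (by omega)]
        exact ENNReal.ofReal_zero
      rw [tsum_eq_sum hsupp]
      have hle : (if (i, j).1 < (i, j).2 then mu i * mu j * (f j - f i) ^ 2 else 0)
          ≤ ∑ k ∈ Finset.Ico i j, c (i, j) k := by
        rw [if_pos hp]
        have hmm : (0:ℝ) ≤ mu i * mu j := mul_nonneg (hmupos _).le (hmupos _).le
        calc mu i * mu j * (f j - f i) ^ 2
            ≤ mu i * mu j * ((w j - w i) * ∑ k ∈ Finset.Ico i j, h k) :=
              mul_le_mul_of_nonneg_left (hCS i j hp) hmm
          _ = ∑ k ∈ Finset.Ico i j, mu i * mu j * (w j - w i) * h k := by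
              rw [Finset.mul_sum, Finset.mul_sum]
              apply Finset.sum_congr rfl; intro k _; ring
          _ = ∑ k ∈ Finset.Ico i j, c (i, j) k := by
              apply Finset.sum_congr rfl; intro k hk
              rw [Finset.mem_Ico] at hk
              rw [hc]; dsimp only; rw [if_pos (by omega)]
      calc ENNReal.ofReal (if (i, j).1 < (i, j).2 then mu i * mu j * (f j - f i) ^ 2 else 0)
          ≤ ENNReal.ofReal (∑ k ∈ Finset.Ico i j, c (i, j) k) := ENNReal.ofReal_le_ofReal hle
        _ = ∑ k ∈ Finset.Ico i j, ENNReal.ofReal (c (i, j) k) :=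
            ENNReal.ofReal_sum_of_nonneg (fun k _ => hcnonneg _ k)
    · rw [if_neg (by omega)]
      simp only [ENNReal.ofReal_zero]
      exact zero_le
  have hinjk : ∀ k : ℕ, Function.Injective (fun m : ℕ => k + 1 + m) :=
    fun k x y hxy => by simpa using hxy
  have stepD : ∀ k : ℕ, (∑' p : ℕ × ℕ, ENNReal.ofReal (c p k))
      ≤ ENNReal.ofReal ((Z / r) * (mu k * b k * (f (k + 1) - f k) ^ 2)) := by
    intro k
    have sA : Summable (fun m => mu (k + 1 + m) * w (k + 1 + m)) := by
      have := hμw.comp_injective (hinjk k); simpa [Function.comp_def] using this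
    have sB : Summable (fun m => mu (k + 1 + m)) := by
      have := hmusum.comp_injective (hinjk k); simpa [Function.comp_def] using this
    set Bt : ℝ := ∑' m, mu (k + 1 + m) with hBt
    have hBtnn : 0 ≤ Bt := tsum_nonneg fun m => (hmupos _).le
    -- inner sums
    have inner_eq : ∀ i : ℕ, i ≤ k → (∑' j, ENNReal.ofReal (c (i, j) k))
        = ENNReal.ofReal ((mu i * h k) * (v k - w i * Bt)) := by
      intro i hik
      have hre : ∀ m : ℕ, c (i, k + 1 + m) k
          = (mu i * h k) * (mu (k + 1 + m) * w (k + 1 + m) - w i * mu (k + 1 + m)) := by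
        intro m
        rw [hc]; dsimp only; rw [if_pos ⟨hik, by omega⟩]; ring
      have hsupp : Function.support (fun j => ENNReal.ofReal (c (i, j) k))
          ⊆ Set.range (fun m : ℕ => k + 1 + m) := by
        intro j hj
        by_contra hjr
        have hjk : ¬ (k < j) := by
          intro hkj
          exact hjr ⟨j - (k + 1), by show k + 1 + (j - (k + 1)) = j; omega⟩
        apply hj
        rw [hc]; dsimp only; rw [if_neg (by omega)]
        exact ENNReal.ofReal_zero
      rw [← Function.Injective.tsum_eq (hinjk k) hsupp]
      have hterm_nonneg : ∀ m : ℕ,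
          0 ≤ (mu i * h k) * (mu (k + 1 + m) * w (k + 1 + m) - w i * mu (k + 1 + m)) := by
        intro m
        have hwm : w i ≤ w (k + 1 + m) := (hw.le_iff_le).mpr (by omega)
        have : 0 ≤ mu (k + 1 + m) * w (k + 1 + m) - w i * mu (k + 1 + m) := by
          have := hmupos (k + 1 + m); nlinarith
        exact mul_nonneg (mul_nonneg (hmupos i).le (hhnonneg k)) this
      have hterm_sum : Summable (fun m : ℕ =>
          (mu i * h k) * (mu (k + 1 + m) * w (k + 1 + m) - w i * mu (k + 1 + m))) :=
        ((sA.sub (sB.mul_left (w i))).mul_left (mu i * h k))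
      calc (∑' m, ENNReal.ofReal (c (i, k + 1 + m) k))
          = ∑' m, ENNReal.ofReal ((mu i * h k)
              * (mu (k + 1 + m) * w (k + 1 + m) - w i * mu (k + 1 + m))) := by
            apply tsum_congr; intro m; rw [hre m]
        _ = ENNReal.ofReal (∑' m, (mu i * h k)
              * (mu (k + 1 + m) * w (k + 1 + m) - w i * mu (k + 1 + m))) :=
            (ENNReal.ofReal_tsum_of_nonneg hterm_nonneg hterm_sum).symm
        _ = ENNReal.ofReal ((mu i * h k) * (v k - w i * Bt)) := by
            congr 1
            rw [tsum_mul_left, Summable.tsum_sub sA (sB.mul_left (w i)), tsum_mul_left]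
    have inner_zero : ∀ i : ℕ, i ∉ Finset.range (k + 1)
        → (∑' j, ENNReal.ofReal (c (i, j) k)) = 0 := by
      intro i hi
      rw [Finset.mem_range] at hi
      have : ∀ j : ℕ, ENNReal.ofReal (c (i, j) k) = 0 := by
        intro j; rw [hc]; dsimp only; rw [if_neg (by omega)]; exact ENNReal.ofReal_zero
      rw [tsum_congr this]; exact tsum_zero
    have hterm_nonneg' : ∀ i : ℕ, i ∈ Finset.range (k + 1)
        → 0 ≤ (mu i * h k) * (v k - w i * Bt) := by
      intro i hi
      rw [Finset.mem_range] at hi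
      have : (0:ℝ) ≤ v k - w i * Bt := by
        have : v k - w i * Bt
            = ∑' m, (mu (k + 1 + m) * w (k + 1 + m) - w i * mu (k + 1 + m)) := by
          rw [Summable.tsum_sub sA (sB.mul_left (w i)), tsum_mul_left]
        rw [this]
        apply tsum_nonneg
        intro m
        have hwm : w i ≤ w (k + 1 + m) := (hw.le_iff_le).mpr (by omega)
        have := hmupos (k + 1 + m); nlinarith
      exact mul_nonneg (mul_nonneg (hmupos i).le (hhnonneg k)) this
    -- split sums
    have hsplitμ : (∑ i ∈ Finset.range (k + 1), mu i) + Bt = Z := by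
      have := Summable.sum_add_tsum_nat_add (f := mu) (k + 1) hmusum
      rw [hZ, hBt]
      rw [← this]
      congr 1
      apply tsum_congr; intro m; rw [add_comm (k + 1) m]
    have hsplitw : (∑ i ∈ Finset.range (k + 1), mu i * w i) + v k = ∑' i, mu i * w i := by
      have := Summable.sum_add_tsum_nat_add (f := fun i => mu i * w i) (k + 1) hμw
      rw [hv]
      rw [← this]
      congr 1
      apply tsum_congr; intro m; rw [add_comm (k + 1) m]
    have hreal : (∑ i ∈ Finset.range (k + 1), (mu i * h k) * (v k - w i * Bt))
        ≤ h k * (Z * v k) := by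
      have e : (∑ i ∈ Finset.range (k + 1), (mu i * h k) * (v k - w i * Bt))
          = h k * v k * (∑ i ∈ Finset.range (k + 1), mu i)
            - (h k * Bt) * (∑ i ∈ Finset.range (k + 1), mu i * w i) := by
        calc ∑ i ∈ Finset.range (k + 1), mu i * h k * (v k - w i * Bt)
            = ∑ i ∈ Finset.range (k + 1),
                (h k * v k * mu i - h k * Bt * (mu i * w i)) :=
              Finset.sum_congr rfl (fun i _ => by ring)
          _ = h k * v k * (∑ i ∈ Finset.range (k + 1), mu i)
              - h k * Bt * (∑ i ∈ Finset.range (k + 1), mu i * w i) := by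
              rw [Finset.sum_sub_distrib, ← Finset.mul_sum, ← Finset.mul_sum]
      rw [e]
      have e2 : h k * v k * (∑ i ∈ Finset.range (k + 1), mu i)
          - (h k * Bt) * (∑ i ∈ Finset.range (k + 1), mu i * w i)
          = h k * Z * v k - h k * (Bt * (∑' i, mu i * w i)) := by
        linear_combination (h k * v k) * hsplitμ - (h k * Bt) * hsplitw
      rw [e2]
      have : 0 ≤ h k * (Bt * (∑' i, mu i * w i)) :=
        mul_nonneg (hhnonneg k) (mul_nonneg hBtnn hwmean)
      linarith
    have hhd : h k * (mu k * b k * (w (k + 1) - w k))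
        = mu k * b k * (f (k + 1) - f k) ^ 2 := by
      rw [hh]; dsimp only
      field_simp
      rw [div_eq_iff (hΔw k).ne']
      ring
    have hvD : v k ≤ (mu k * b k * (w (k + 1) - w k)) / r :=
      (le_div_iff₀ hr0).mpr (by linarith [hkey k])
    have hfinal : h k * (Z * v k) ≤ (Z / r) * (mu k * b k * (f (k + 1) - f k) ^ 2) := by
      have step1 : h k * (Z * v k) ≤ h k * (Z * ((mu k * b k * (w (k + 1) - w k)) / r)) :=
        mul_le_mul_of_nonneg_left (mul_le_mul_of_nonneg_left hvD hZpos.le) (hhnonneg k)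
      have step2 : h k * (Z * ((mu k * b k * (w (k + 1) - w k)) / r))
          = (Z / r) * (h k * (mu k * b k * (w (k + 1) - w k))) := by ring
      rw [step2, hhd] at step1
      exact step1
    calc (∑' p : ℕ × ℕ, ENNReal.ofReal (c p k))
        = ∑' i, ∑' j, ENNReal.ofReal (c (i, j) k) :=
          ENNReal.tsum_prod (f := fun i j => ENNReal.ofReal (c (i, j) k))
      _ = ∑ i ∈ Finset.range (k + 1), ∑' j, ENNReal.ofReal (c (i, j) k) :=
          tsum_eq_sum inner_zero
      _ = ∑ i ∈ Finset.range (k + 1), ENNReal.ofReal ((mu i * h k) * (v k - w i * Bt)) :=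
          Finset.sum_congr rfl (fun i hi => inner_eq i (by
            rw [Finset.mem_range] at hi; omega))
      _ = ENNReal.ofReal (∑ i ∈ Finset.range (k + 1), (mu i * h k) * (v k - w i * Bt)) :=
          (ENNReal.ofReal_sum_of_nonneg hterm_nonneg').symm
      _ ≤ ENNReal.ofReal (h k * (Z * v k)) := ENNReal.ofReal_le_ofReal hreal
      _ ≤ ENNReal.ofReal ((Z / r) * (mu k * b k * (f (k + 1) - f k) ^ 2)) :=
          ENNReal.ofReal_le_ofReal hfinal
  -- assemble
  have sScaled : Summable (fun k => (Z / r) * (mu k * b k * (f (k + 1) - f k) ^ 2)) :=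
    hfD.mul_left _
  have hZr : 0 ≤ Z / r := div_nonneg hZpos.le hr0.le
  have main : ENNReal.ofReal (Z * Z)
      ≤ ENNReal.ofReal ((Z / r) * ∑' i, mu i * b i * (f (i + 1) - f i) ^ 2) := by
    calc ENNReal.ofReal (Z * Z)
        = ∑' p : ℕ × ℕ, ENNReal.ofReal
            (if p.1 < p.2 then mu p.1 * mu p.2 * (f p.2 - f p.1) ^ 2 else 0) := by
          rw [← tG2']; exact ENNReal.ofReal_tsum_of_nonneg hG2nonneg sG2
      _ ≤ ∑' p : ℕ × ℕ, ∑' k, ENNReal.ofReal (c p k) := ENNReal.tsum_le_tsum stepB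
      _ = ∑' k, ∑' p : ℕ × ℕ, ENNReal.ofReal (c p k) :=
          ENNReal.tsum_comm (f := fun (p : ℕ × ℕ) (k : ℕ) => ENNReal.ofReal (c p k))
      _ ≤ ∑' k, ENNReal.ofReal ((Z / r) * (mu k * b k * (f (k + 1) - f k) ^ 2)) :=
          ENNReal.tsum_le_tsum stepD
      _ = ENNReal.ofReal (∑' k, (Z / r) * (mu k * b k * (f (k + 1) - f k) ^ 2)) :=
          (ENNReal.ofReal_tsum_of_nonneg (fun k => mul_nonneg hZr
            (mul_nonneg (mul_pos (hmupos k) (hb k)).le (sq_nonneg _))) sScaled).symm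
      _ = ENNReal.ofReal ((Z / r) * ∑' i, mu i * b i * (f (i + 1) - f i) ^ 2) := by
          rw [tsum_mul_left]
  have hZZ : Z * Z ≤ (Z / r) * ∑' i, mu i * b i * (f (i + 1) - f i) ^ 2 :=
    (ENNReal.ofReal_le_ofReal_iff (mul_nonneg hZr hSd0)).mp main
  rw [le_div_iff₀ hZpos]
  have h4 : Z * Z * r ≤ ((Z / r) * ∑' i, mu i * b i * (f (i + 1) - f i) ^ 2) * r :=
    mul_le_mul_of_nonneg_right hZZ hr0.le
  have e2 : ((Z / r) * ∑' i, mu i * b i * (f (i + 1) - f i) ^ 2) * r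
      = Z * ∑' i, mu i * b i * (f (i + 1) - f i) ^ 2 := by
    field_simp
  have h5 : Z * (Z * r) ≤ Z * ∑' i, mu i * b i * (f (i + 1) - f i) ^ 2 := by
    rw [e2] at h4; linarith
  have h6 : Z * r ≤ ∑' i, mu i * b i * (f (i + 1) - f i) ^ 2 :=
    le_of_mul_le_mul_left h5 hZpos
  linarith

noncomputable def wsB (mu b : ℕ → ℝ) (lam : ℝ) : ℕ → ℝ × ℝ
  | 0 => (-1, -1)
  | n + 1 =>
    let p := wsB mu b lam n
    let w' := p.1 + lam * (-p.2) / (mu n * b n)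
    (w', p.2 + mu (n + 1) * w')

theorem tsum_mul_eventually_const (mu : ℕ → ℝ) (hmusum : Summable mu)
    (g : ℕ → ℝ) (K : ℕ) (C : ℝ) (hg : ∀ i, K ≤ i → g i = C) :
    Summable (fun i => mu i * g i) ∧
    ∑' i, mu i * g i = (∑ i ∈ Finset.range K, mu i * g i)
      + C * ((∑' i, mu i) - ∑ i ∈ Finset.range K, mu i) := by
  have hdiff : ∀ i ∉ Finset.range K, mu i * g i - mu i * C = 0 := by
    intro i hi
    rw [hg i (by simpa [Finset.mem_range, not_lt] using hi)]; ring
  have s2 : Summable (fun i => mu i * g i - mu i * C) :=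
    summable_of_ne_finset_zero hdiff
  have s1 : Summable (fun i => mu i * C) := hmusum.mul_right C
  have hsum : Summable (fun i => mu i * g i) := by
    have := s2.add s1
    apply this.congr
    intro i; ring
  refine ⟨hsum, ?_⟩
  have e1 : ∑' i, mu i * g i = (∑' i, (mu i * g i - mu i * C)) + ∑' i, mu i * C := by
    rw [← Summable.tsum_add s2 s1]; apply tsum_congr; intro i; ring
  rw [e1, tsum_eq_sum hdiff, tsum_mul_right, Finset.sum_sub_distrib, ← Finset.sum_mul]
  ring

theorem directionB (b mu pi : ℕ → ℝ) (hb : ∀ i, 0 < b i) (hmupos : ∀ n, 0 < mu n)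
    (hmu0 : mu 0 = 1) (hmusum : Summable mu) (Z : ℝ) (hZ : Z = ∑' n, mu n)
    (hpi : ∀ i, pi i = mu i / Z) (lam : ℝ) (hlam0 : 0 < lam)
    (hlow : ∀ g : ℕ → ℝ, Summable (fun i => pi i * g i) → (∑' i, pi i * g i) = 0 →
      Summable (fun i => pi i * g i ^ 2) → (∑' i, pi i * g i ^ 2) = 1 →
      Summable (fun i => pi i * b i * (g (i + 1) - g i) ^ 2) →
      lam < ∑' i, pi i * b i * (g (i + 1) - g i) ^ 2) :
    ∃ w : ℕ → ℝ, StrictMono w ∧ Summable (fun i => pi i * |w i|) ∧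
      (0 ≤ ∑' i, pi i * w i) ∧
      lam ≤ ⨅ i : ℕ,
        ((mu i * b i * (w (i + 1) - w i))⁻¹ * ∑' j, mu (i + 1 + j) * w (i + 1 + j))⁻¹ := by
  have hZpos : 0 < Z := by
    rw [hZ]; exact Summable.tsum_pos hmusum (fun i => (hmupos i).le) 0 (hmupos 0)
  set Wf : ℕ → ℝ := fun n => (wsB mu b lam n).1 with hWf
  set Sf : ℕ → ℝ := fun n => (wsB mu b lam n).2 with hSf
  have hW0 : Wf 0 = -1 := rfl
  have hS0 : Sf 0 = -1 := rfl
  have hrec : ∀ n, Wf (n + 1) = Wf n + lam * (-Sf n) / (mu n * b n) := fun n => rfl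
  have hSrec : ∀ n, Sf (n + 1) = Sf n + mu (n + 1) * Wf (n + 1) := fun n => rfl
  have hrecmul : ∀ n, mu n * b n * (Wf (n + 1) - Wf n) = lam * (-Sf n) := by
    intro n
    rw [hrec n]
    have hne : mu n * b n ≠ 0 := (mul_pos (hmupos n) (hb n)).ne'
    rw [add_sub_cancel_left, mul_div_cancel₀ _ hne]
  have hSsum : ∀ n, Sf n = ∑ i ∈ Finset.range (n + 1), mu i * Wf i := by
    intro n
    induction n with
    | zero => simp [hS0, hW0, hmu0]
    | succ k ih => rw [hSrec k, Finset.sum_range_succ, ← ih]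
  have habel : ∀ n, ∑ i ∈ Finset.range n, lam * (-Sf i) * (Wf (i + 1) - Wf i)
      = lam * ((∑ i ∈ Finset.range (n + 1), mu i * Wf i ^ 2) - Sf n * Wf n) := by
    intro n
    induction n with
    | zero => simp [hS0, hW0, hmu0]
    | succ k ih =>
      rw [Finset.sum_range_succ, ih, Finset.sum_range_succ
        (f := fun i => mu i * Wf i ^ 2) (n := k + 1)]
      linear_combination (lam * Wf (k + 1)) * hSrec k
  have hSneg : ∀ n, Sf n < 0 := by
    by_contra hcon
    push_neg at hcon
    obtain ⟨n0, hn0⟩ := hcon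
    have hex : ∃ n, 0 ≤ Sf n := ⟨n0, hn0⟩
    classical
    set K := Nat.find hex with hKdef
    have hK : 0 ≤ Sf K := Nat.find_spec hex
    have hmin : ∀ m, m < K → Sf m < 0 := fun m hm => not_le.mp (Nat.find_min hex hm)
    have hKpos : 0 < K := by
      rcases Nat.eq_zero_or_pos K with h | h
      · exfalso; rw [h, hS0] at hK; linarith
      · exact h
    obtain ⟨m, hm⟩ : ∃ m, K = m + 1 := ⟨K - 1, by omega⟩
    have hstep : ∀ i, i < K → Wf i < Wf (i + 1) := by
      intro i hi
      rw [hrec i]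
      have : 0 < lam * (-Sf i) / (mu i * b i) :=
        div_pos (mul_pos hlam0 (by linarith [hmin i hi])) (mul_pos (hmupos i) (hb i))
      linarith
    have hmono : ∀ i j, i ≤ j → j ≤ K → Wf i ≤ Wf j := by
      intro i j hij hjK
      induction j with
      | zero =>
        have : i = 0 := by omega
        rw [this]
      | succ k ih =>
        rcases Nat.eq_or_lt_of_le hij with he | hlt
        · rw [he]
        · have h1 := ih (by omega) (by omega)
          have h3 := hstep k (by omega)
          linarith
    have hWKpos : 0 < Wf K := by
      have h1 := hmin m (by omega)
      have h2 : Sf (m + 1) = Sf m + mu (m + 1) * Wf (m + 1) := hSrec m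
      rw [hm] at hK
      have h4 := hmupos (m + 1)
      rw [hm]
      nlinarith
    -- truncated test function
    set f : ℕ → ℝ := fun i => Wf (min i K) with hf
    have hfconst : ∀ i, K ≤ i → f i = Wf K := by
      intro i hi; rw [hf]; dsimp only; rw [min_eq_right hi]
    have hfeq : ∀ i, i ≤ K → f i = Wf i := by
      intro i hi; rw [hf]; dsimp only; rw [min_eq_left hi]
    set PK := ∑ i ∈ Finset.range K, mu i * Wf i with hPKdef
    set MK := ∑ i ∈ Finset.range K, mu i with hMKdef
    set AK := ∑ i ∈ Finset.range K, mu i * Wf i ^ 2 with hAKdef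
    obtain ⟨hfsum1, hT1v⟩ := tsum_mul_eventually_const mu hmusum f K (Wf K) hfconst
    have hPKe : ∑ i ∈ Finset.range K, mu i * f i = PK :=
      Finset.sum_congr rfl (fun i hi => by
        rw [hfeq i (le_of_lt (Finset.mem_range.mp hi))])
    rw [hPKe, ← hZ] at hT1v
    obtain ⟨hfsum2, hT2v⟩ := tsum_mul_eventually_const mu hmusum (fun i => f i ^ 2) K
      (Wf K ^ 2) (fun i hi => by show f i ^ 2 = Wf K ^ 2; rw [hfconst i hi])
    have hAKe : ∑ i ∈ Finset.range K, mu i * f i ^ 2 = AK :=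
      Finset.sum_congr rfl (fun i hi => by
        rw [hfeq i (le_of_lt (Finset.mem_range.mp hi))])
    rw [hAKe, ← hZ] at hT2v
    set T1 : ℝ := PK + Wf K * (Z - MK) with hT1def
    set T2 : ℝ := AK + Wf K ^ 2 * (Z - MK) with hT2def
    -- Dirichlet sum
    have hd0 : ∀ i ∉ Finset.range K, mu i * b i * (f (i + 1) - f i) ^ 2 = 0 := by
      intro i hi
      rw [Finset.mem_range, not_lt] at hi
      rw [hfconst i hi, hfconst (i + 1) (by omega), sub_self]
      ring
    have hfsum3 : Summable (fun i => mu i * b i * (f (i + 1) - f i) ^ 2) :=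
      summable_of_ne_finset_zero hd0
    set AK1 := ∑ i ∈ Finset.range (K + 1), mu i * Wf i ^ 2 with hAK1def
    set T3 : ℝ := lam * (AK1 - Sf K * Wf K) with hT3def
    have hT3v : (∑' i, mu i * b i * (f (i + 1) - f i) ^ 2) = T3 := by
      rw [tsum_eq_sum hd0]
      have e : ∀ i ∈ Finset.range K, mu i * b i * (f (i + 1) - f i) ^ 2
          = lam * (-Sf i) * (Wf (i + 1) - Wf i) := by
        intro i hi
        have hiK := Finset.mem_range.mp hi
        rw [hfeq i hiK.le, hfeq (i + 1) (by omega)]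
        calc mu i * b i * (Wf (i + 1) - Wf i) ^ 2
            = (mu i * b i * (Wf (i + 1) - Wf i)) * (Wf (i + 1) - Wf i) := by ring
          _ = lam * (-Sf i) * (Wf (i + 1) - Wf i) := by rw [hrecmul i]
      rw [Finset.sum_congr rfl e, habel K]
    -- variance positivity
    obtain ⟨su, tu⟩ := var_double mu hmupos hmusum Z hZ f hfsum1 hfsum2
    have huterm : (0:ℝ) < (if ((0:ℕ), K).1 < ((0:ℕ), K).2
        then mu ((0:ℕ), K).1 * mu ((0:ℕ), K).2 * (f ((0:ℕ), K).2 - f ((0:ℕ), K).1) ^ 2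
        else 0) := by
      rw [if_pos hKpos]
      have hfK : f K = Wf K := hfeq K le_rfl
      have hf0 : f 0 = Wf 0 := hfeq 0 (Nat.zero_le K)
      rw [hfK, hf0, hW0]
      have h5 : (0:ℝ) < Wf K - (-1) := by linarith
      have h6 : 0 < (Wf K - (-1)) ^ 2 := by positivity
      exact mul_pos (mul_pos (hmupos 0) (hmupos K)) h6
    have hule := Summable.le_tsum su ((0:ℕ), K) (fun j _ => by
      split
      · rename_i hj
        exact mul_nonneg (mul_nonneg (hmupos _).le (hmupos _).le) (sq_nonneg _)
      · exact le_refl 0)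
    rw [hT1v, hT2v] at tu
    have hVpos : 0 < Z * T2 - T1 ^ 2 := by
      rw [← tu]; exact lt_of_lt_of_le huterm hule
    set V : ℝ := Z * T2 - T1 ^ 2 with hVdef
    -- key inequalities on T1
    have hSfKdec : Sf K = PK + mu K * Wf K := by
      rw [hSsum K, Finset.sum_range_succ]
    have hMKle : MK + mu K ≤ Z := by
      have : ∑ i ∈ Finset.range (K + 1), mu i ≤ ∑' n, mu n :=
        Summable.sum_le_tsum _ (fun i _ => (hmupos i).le) hmusum
      rw [Finset.sum_range_succ] at this
      rw [hZ]; exact this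
    have hT1nn : 0 ≤ T1 := by
      have e : T1 = Sf K + Wf K * (Z - MK - mu K) := by
        rw [hT1def, hSfKdec]; ring
      rw [e]
      have : 0 ≤ Wf K * (Z - MK - mu K) :=
        mul_nonneg hWKpos.le (by linarith)
      linarith
    have hT1le : T1 ≤ Z * Wf K := by
      have hPKle : PK ≤ MK * Wf K := by
        rw [hPKdef, hMKdef, Finset.sum_mul]
        apply Finset.sum_le_sum
        intro i hi
        have := hmono i K (le_of_lt (Finset.mem_range.mp hi)) le_rfl
        exact mul_le_mul_of_nonneg_left this (hmupos i).le
      rw [hT1def]; nlinarith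
    have hAK1e : AK1 = AK + mu K * Wf K ^ 2 := by
      rw [hAK1def, hAKdef, Finset.sum_range_succ]
    -- the central inequality  Z * T3 ≤ lam * V
    have hiden : lam * V - Z * T3 = lam * (T1 * (Z * Wf K - T1)) := by
      rw [hVdef, hT3def, hT2def, hT1def, hAK1e, hSfKdec]; ring
    have hfinal : Z * T3 ≤ lam * V := by
      have h0 : 0 ≤ lam * (T1 * (Z * Wf K - T1)) :=
        mul_nonneg hlam0.le (mul_nonneg hT1nn (by linarith))
      linarith
    -- normalization
    set p : ℝ := T1 / Z with hpdef
    set sq2 : ℝ := V / (Z * Z) with hsq2def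
    have hsq2pos : 0 < sq2 := div_pos hVpos (mul_pos hZpos hZpos)
    set σ : ℝ := Real.sqrt sq2 with hσdef
    have hσpos : 0 < σ := Real.sqrt_pos.mpr hsq2pos
    have hσsq : σ ^ 2 = sq2 := Real.sq_sqrt hsq2pos.le
    set g : ℕ → ℝ := fun i => (f i - p) / σ with hgdef
    set c1 : ℝ := (Z * σ)⁻¹ with hc1def
    set c2 : ℝ := (Z * σ ^ 2)⁻¹ with hc2def
    have hZne : Z ≠ 0 := hZpos.ne'
    have hσne : σ ≠ 0 := hσpos.ne'
    have hVne : V ≠ 0 := hVpos.ne'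
    -- (1),(2)
    have hg1e : ∀ i, pi i * g i = (mu i * f i) * c1 - (p * c1) * mu i := by
      intro i
      rw [hpi, hgdef, hc1def]; dsimp only
      field_simp
    have hg1s : Summable (fun i => pi i * g i) := by
      apply Summable.congr ((hfsum1.mul_right c1).sub (hmusum.mul_left (p * c1)))
      intro i; rw [hg1e i]
    have hg1v : (∑' i, pi i * g i) = 0 := by
      rw [tsum_congr hg1e, Summable.tsum_sub (hfsum1.mul_right c1) (hmusum.mul_left (p * c1)),
        tsum_mul_right, tsum_mul_left, hT1v, ← hZ, hpdef, hc1def]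
      field_simp
      try ring
    -- (3),(4)
    have hg2e : ∀ i, pi i * g i ^ 2
        = (mu i * f i ^ 2) * c2 - (mu i * f i) * (2 * p * c2) + (p ^ 2 * c2) * mu i := by
      intro i
      rw [hpi, hgdef, hc2def]; dsimp only
      field_simp
      ring
    have hg2s : Summable (fun i => pi i * g i ^ 2) := by
      apply Summable.congr (((hfsum2.mul_right c2).sub
        (hfsum1.mul_right (2 * p * c2))).add (hmusum.mul_left (p ^ 2 * c2)))
      intro i; rw [hg2e i]
    have hg2v : (∑' i, pi i * g i ^ 2) = 1 := by
      rw [tsum_congr hg2e,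
        Summable.tsum_add ((hfsum2.mul_right c2).sub (hfsum1.mul_right (2 * p * c2)))
          (hmusum.mul_left (p ^ 2 * c2)),
        Summable.tsum_sub (hfsum2.mul_right c2) (hfsum1.mul_right (2 * p * c2)),
        tsum_mul_right, tsum_mul_right, tsum_mul_left, hT1v, hT2v, ← hZ,
        hc2def, hσsq, hsq2def, hpdef, hVdef]
      field_simp
      rw [div_eq_one_iff_eq (by intro h; apply hVne; rw [hVdef]; linarith)]; ring
    -- (5)
    have hg3e : ∀ i, pi i * b i * (g (i + 1) - g i) ^ 2
        = (mu i * b i * (f (i + 1) - f i) ^ 2) * c2 := by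
      intro i
      rw [hpi, hgdef, hc2def]; dsimp only
      field_simp
      try ring
    have hg3s : Summable (fun i => pi i * b i * (g (i + 1) - g i) ^ 2) := by
      apply Summable.congr (hfsum3.mul_right c2)
      intro i; rw [hg3e i]
    have hg3v : (∑' i, pi i * b i * (g (i + 1) - g i) ^ 2) = T3 * c2 := by
      rw [tsum_congr hg3e, tsum_mul_right, hT3v]
    -- contradiction
    have hcontr := hlow g hg1s hg1v hg2s hg2v hg3s
    rw [hg3v] at hcontr
    have hc2v : c2 = Z / V := by
      rw [hc2def, hσsq, hsq2def]
      field_simp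
      try ring
    have hle : T3 * c2 ≤ lam := by
      rw [hc2v, ← mul_div_assoc]
      rw [div_le_iff₀ hVpos]
      linarith [hfinal]
    linarith
  have hWmono : StrictMono Wf := by
    apply strictMono_nat_of_lt_succ
    intro n
    rw [hrec n]
    have : 0 < lam * (-Sf n) / (mu n * b n) :=
      div_pos (mul_pos hlam0 (by linarith [hSneg n])) (mul_pos (hmupos n) (hb n))
    linarith
  have hWlow : ∀ n, -1 ≤ Wf n := by
    intro n
    have := hWmono.monotone (Nat.zero_le n)
    rw [hW0] at this; exact this
  -- summability of mu * Wf
  have hsum1 : Summable (fun i => mu i * (Wf i + 1)) := by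
    apply summable_of_sum_range_le (c := Z)
      (fun i => mul_nonneg (hmupos i).le (by linarith [hWlow i]))
    intro n
    cases n with
    | zero => simp [hZpos.le]
    | succ m =>
      have e : ∑ i ∈ Finset.range (m + 1), mu i * (Wf i + 1)
          = Sf m + ∑ i ∈ Finset.range (m + 1), mu i := by
        rw [hSsum m, ← Finset.sum_add_distrib]
        apply Finset.sum_congr rfl; intro i _; ring
      rw [e]
      have h1 : ∑ i ∈ Finset.range (m + 1), mu i ≤ Z := by
        rw [hZ]; exact Summable.sum_le_tsum _ (fun i _ => (hmupos i).le) hmusum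
      linarith [hSneg m]
  have hμW : Summable (fun i => mu i * Wf i) := by
    have := hsum1.sub (hmusum)
    apply this.congr; intro i; ring
  have hμWabs : Summable (fun i => mu i * |Wf i|) := by
    refine Summable.of_nonneg_of_le (fun i => mul_nonneg (hmupos i).le (abs_nonneg _))
      (fun i => ?_) (hsum1.add hmusum)
    have h1 := hWlow i
    have h2 : |Wf i| ≤ Wf i + 2 := by
      rcases abs_cases (Wf i) with ⟨he, _⟩ | ⟨he, _⟩ <;> linarith
    have := hmupos i
    nlinarith
  set Wtot : ℝ := ∑' i, mu i * Wf i with hWtot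
  have hWtot_np : Wtot ≤ 0 := by
    have htend := hμW.hasSum.tendsto_sum_nat
    apply le_of_tendsto htend
    filter_upwards [Filter.eventually_ge_atTop 1] with n hn
    obtain ⟨m, rfl⟩ : ∃ m, n = m + 1 := ⟨n - 1, by omega⟩
    have := hSsum m
    rw [← this]
    exact (hSneg m).le
  -- the element of the dual set
  refine ⟨fun i => Wf i - Wtot / Z, ?_, ?_, ?_, ?_⟩
  · intro i j hij
    have := hWmono hij
    dsimp only; linarith
  · refine Summable.of_nonneg_of_le
      (fun i => mul_nonneg (by rw [hpi]; exact div_nonneg (hmupos i).le hZpos.le) (abs_nonneg _))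
      (fun i => ?_)
      ((hμWabs.div_const Z).add ((hmusum.mul_right (|Wtot / Z|)).div_const Z))
    have h1 : |Wf i - Wtot / Z| ≤ |Wf i| + |Wtot / Z| := by
      have := abs_add_le (Wf i) (-(Wtot / Z))
      simpa [sub_eq_add_neg, abs_neg] using this
    rw [hpi]
    have h2 : mu i / Z * |Wf i - Wtot / Z| ≤ mu i / Z * (|Wf i| + |Wtot / Z|) :=
      mul_le_mul_of_nonneg_left h1 (div_nonneg (hmupos i).le hZpos.le)
    calc mu i / Z * |Wf i - Wtot / Z| ≤ mu i / Z * (|Wf i| + |Wtot / Z|) := h2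
      _ = (mu i * |Wf i|) / Z + (mu i * |Wtot / Z|) / Z := by ring
  · have e : ∀ i : ℕ, pi i * (Wf i - Wtot / Z)
        = (mu i * Wf i) / Z - (Wtot / (Z * Z)) * mu i := by
      intro i; rw [hpi]; ring
    rw [tsum_congr e, Summable.tsum_sub (hμW.div_const Z) (hmusum.mul_left _), tsum_mul_left]
    have e2 : (∑' b : ℕ, mu b * Wf b / Z) = Wtot / Z := by
      rw [hWtot]; exact tsum_div_const
    rw [e2, ← hZ]
    have e3 : Wtot / (Z * Z) * Z = Wtot / Z := by field_simp
    rw [e3, sub_self]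
  · apply le_ciInf
    intro i
    have hinj : Function.Injective (fun j : ℕ => i + 1 + j) := fun x y hxy => by simpa using hxy
    have hμw' : Summable (fun k => mu k * (Wf k - Wtot / Z)) :=
      ((hμW.sub (hmusum.mul_right (Wtot / Z)))).congr (fun k => by ring)
    have hwmean0 : (∑' k, mu k * (Wf k - Wtot / Z)) = 0 := by
      have e : ∀ k : ℕ, mu k * (Wf k - Wtot / Z) = mu k * Wf k - (Wtot / Z) * mu k :=
        fun k => by ring
      rw [tsum_congr e, Summable.tsum_sub hμW (hmusum.mul_left _), tsum_mul_left, ← hWtot, ← hZ]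
      field_simp
      ring
    have hstrict : StrictMono (fun k => Wf k - Wtot / Z) := fun x y hxy => by
      have := hWmono hxy; dsimp only; linarith
    have hNpos : 0 < ∑' j, mu (i + 1 + j) * (Wf (i + 1 + j) - Wtot / Z) := by
      have := tail_pos mu hmupos hmusum (fun k => Wf k - Wtot / Z) hstrict hμw'
        (le_of_eq hwmean0.symm) i
      simpa using this
    have hA : Summable (fun j => mu (i + 1 + j) * Wf (i + 1 + j)) := by
      have := hμW.comp_injective hinj; simpa [Function.comp_def] using this
    have hB : Summable (fun j => mu (i + 1 + j)) := by
      have := hmusum.comp_injective hinj; simpa [Function.comp_def] using this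
    have hτW : (∑' j, mu (i + 1 + j) * Wf (i + 1 + j)) = Wtot - Sf i := by
      have hsplit := Summable.sum_add_tsum_nat_add (f := fun k => mu k * Wf k) (i + 1) hμW
      have e : (∑' j, mu (i + 1 + j) * Wf (i + 1 + j))
          = ∑' j, mu (j + (i + 1)) * Wf (j + (i + 1)) := by
        apply tsum_congr; intro j; rw [add_comm (i + 1) j]
      rw [e, hWtot, hSsum i]
      linarith [hsplit]
    have hτμ : (∑' j, mu (i + 1 + j)) = Z - ∑ k ∈ Finset.range (i + 1), mu k := by
      have hsplit := Summable.sum_add_tsum_nat_add (f := mu) (i + 1) hmusum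
      have e : (∑' j, mu (i + 1 + j)) = ∑' j, mu (j + (i + 1)) := by
        apply tsum_congr; intro j; rw [add_comm (i + 1) j]
      rw [e, hZ]
      linarith [hsplit]
    have hMnn : 0 ≤ ∑ k ∈ Finset.range (i + 1), mu k :=
      Finset.sum_nonneg fun k _ => (hmupos k).le
    have hNval : (∑' j, mu (i + 1 + j) * (Wf (i + 1 + j) - Wtot / Z))
        = -Sf i + (Wtot / Z) * (∑ k ∈ Finset.range (i + 1), mu k) := by
      have e : ∀ j : ℕ, mu (i + 1 + j) * (Wf (i + 1 + j) - Wtot / Z)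
          = mu (i + 1 + j) * Wf (i + 1 + j) - (Wtot / Z) * mu (i + 1 + j) := fun j => by ring
      rw [tsum_congr e, Summable.tsum_sub hA (hB.mul_left _), tsum_mul_left, hτW, hτμ]
      field_simp
      ring
    have hWZ : Wtot / Z ≤ 0 := by
      have h1 : (0:ℝ) ≤ Z⁻¹ := inv_nonneg.mpr hZpos.le
      have h2 := mul_nonneg (neg_nonneg.mpr hWtot_np) h1
      rw [div_eq_mul_inv]
      nlinarith
    have hNle : (∑' j, mu (i + 1 + j) * (Wf (i + 1 + j) - Wtot / Z)) ≤ -Sf i := by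
      rw [hNval]
      have := mul_nonneg hMnn (neg_nonneg.mpr hWZ)
      nlinarith
    have hD : 0 < lam * (-Sf i) := mul_pos hlam0 (by linarith [hSneg i])
    have hDrw : mu i * b i * (Wf (i + 1) - Wtot / Z - (Wf i - Wtot / Z)) = lam * (-Sf i) := by
      rw [show Wf (i + 1) - Wtot / Z - (Wf i - Wtot / Z) = Wf (i + 1) - Wf i by ring,
        hrecmul i]
    show lam ≤ ((mu i * b i * (Wf (i + 1) - Wtot / Z - (Wf i - Wtot / Z)))⁻¹
      * ∑' j, mu (i + 1 + j) * (Wf (i + 1 + j) - Wtot / Z))⁻¹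
    rw [hDrw, mul_inv, inv_inv, ← div_eq_mul_inv]
    refine (le_div_iff₀ hNpos).mpr ?_
    have := mul_le_mul_of_nonneg_left hNle hlam0.le
    linarith

theorem normalize_test (b mu pi : ℕ → ℝ) (hmupos : ∀ n, 0 < mu n) (hmusum : Summable mu)
    (Z : ℝ) (hZ : Z = ∑' n, mu n) (hZpos : 0 < Z) (hpi : ∀ i, pi i = mu i / Z)
    (f : ℕ → ℝ) (hf1 : Summable (fun i => mu i * f i))
    (hf2 : Summable (fun i => mu i * f i ^ 2))
    (hf3 : Summable (fun i => mu i * b i * (f (i + 1) - f i) ^ 2))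
    (hV : 0 < Z * (∑' i, mu i * f i ^ 2) - (∑' i, mu i * f i) ^ 2) :
    ∃ g : ℕ → ℝ, Summable (fun i => pi i * g i) ∧ (∑' i, pi i * g i) = 0 ∧
      Summable (fun i => pi i * g i ^ 2) ∧ (∑' i, pi i * g i ^ 2) = 1 ∧
      Summable (fun i => pi i * b i * (g (i + 1) - g i) ^ 2) := by
  set T1 : ℝ := ∑' i, mu i * f i with hT1def
  set T2 : ℝ := ∑' i, mu i * f i ^ 2 with hT2def
  set V : ℝ := Z * T2 - T1 ^ 2 with hVdef
  have hVpos : 0 < V := hV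
  set p : ℝ := T1 / Z with hpdef
  set sq2 : ℝ := V / (Z * Z) with hsq2def
  have hsq2pos : 0 < sq2 := div_pos hVpos (mul_pos hZpos hZpos)
  set σ : ℝ := Real.sqrt sq2 with hσdef
  have hσpos : 0 < σ := Real.sqrt_pos.mpr hsq2pos
  have hσsq : σ ^ 2 = sq2 := Real.sq_sqrt hsq2pos.le
  set g : ℕ → ℝ := fun i => (f i - p) / σ with hgdef
  set c1 : ℝ := (Z * σ)⁻¹ with hc1def
  set c2 : ℝ := (Z * σ ^ 2)⁻¹ with hc2def
  have hZne : Z ≠ 0 := hZpos.ne'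
  have hσne : σ ≠ 0 := hσpos.ne'
  have hVne : V ≠ 0 := hVpos.ne'
  have hg1e : ∀ i, pi i * g i = (mu i * f i) * c1 - (p * c1) * mu i := by
    intro i
    rw [hpi, hgdef, hc1def]; dsimp only
    field_simp
    try ring
  have hg1s : Summable (fun i => pi i * g i) := by
    apply Summable.congr ((hf1.mul_right c1).sub (hmusum.mul_left (p * c1)))
    intro i; rw [hg1e i]
  have hg1v : (∑' i, pi i * g i) = 0 := by
    rw [tsum_congr hg1e, Summable.tsum_sub (hf1.mul_right c1) (hmusum.mul_left (p * c1)),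
      tsum_mul_right, tsum_mul_left, ← hZ, ← hT1def, hpdef, hc1def]
    field_simp
    try ring
  have hg2e : ∀ i, pi i * g i ^ 2
      = (mu i * f i ^ 2) * c2 - (mu i * f i) * (2 * p * c2) + (p ^ 2 * c2) * mu i := by
    intro i
    rw [hpi, hgdef, hc2def]; dsimp only
    field_simp
    try ring
  have hg2s : Summable (fun i => pi i * g i ^ 2) := by
    apply Summable.congr (((hf2.mul_right c2).sub
      (hf1.mul_right (2 * p * c2))).add (hmusum.mul_left (p ^ 2 * c2)))
    intro i; rw [hg2e i]
  have hg2v : (∑' i, pi i * g i ^ 2) = 1 := by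
    rw [tsum_congr hg2e,
      Summable.tsum_add ((hf2.mul_right c2).sub (hf1.mul_right (2 * p * c2)))
        (hmusum.mul_left (p ^ 2 * c2)),
      Summable.tsum_sub (hf2.mul_right c2) (hf1.mul_right (2 * p * c2)),
      tsum_mul_right, tsum_mul_right, tsum_mul_left, ← hZ, ← hT1def, ← hT2def,
      hc2def, hσsq, hsq2def, hpdef, hVdef]
    field_simp
    rw [div_eq_one_iff_eq (by intro h; apply hVne; rw [hVdef]; linarith)]; ring
  have hg3e : ∀ i, pi i * b i * (g (i + 1) - g i) ^ 2
      = (mu i * b i * (f (i + 1) - f i) ^ 2) * c2 := by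
    intro i
    rw [hpi, hgdef, hc2def]; dsimp only
    field_simp
    try ring
  have hg3s : Summable (fun i => pi i * b i * (g (i + 1) - g i) ^ 2) := by
    apply Summable.congr (hf3.mul_right c2)
    intro i; rw [hg3e i]
  exact ⟨g, hg1s, hg1v, hg2s, hg2v, hg3s⟩

end ChenAux

/-- Chen (1996): variational formula for the spectral gap of a birth-death process:
`λ₁ = sup_{w ∈ 𝓦} inf_{i ≥ 0} I_i(w)⁻¹`, where
`𝓦 = {w : w strictly increasing, Σ πᵢ|wᵢ| < ∞, π(w) ≥ 0}` and
`I_i(w) = (μᵢ bᵢ (w_{i+1} - wᵢ))⁻¹ Σ_{j ≥ i+1} μⱼ wⱼ`. -/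
theorem spectral_gap_variational_formula_birth_death
    (b a : ℕ → ℝ) (hb : ∀ i, 0 < b i) (ha : ∀ i, 0 < a (i + 1))
    (mu : ℕ → ℝ) (hmu0 : mu 0 = 1)
    (hmurec : ∀ n, mu (n + 1) = mu n * b n / a (n + 1))
    (hmusum : Summable mu)
    (Z : ℝ) (hZ : Z = ∑' n, mu n)
    (pi : ℕ → ℝ) (hpi : ∀ i, pi i = mu i / Z)
    (lam1 : ℝ)
    (hlam1 : lam1 = sInf { r : ℝ | ∃ f : ℕ → ℝ,
      Summable (fun i => pi i * f i) ∧ (∑' i, pi i * f i) = 0 ∧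
      Summable (fun i => pi i * f i ^ 2) ∧ (∑' i, pi i * f i ^ 2) = 1 ∧
      Summable (fun i => pi i * b i * (f (i + 1) - f i) ^ 2) ∧
      r = ∑' i, pi i * b i * (f (i + 1) - f i) ^ 2 }) :
    lam1 = sSup { r : ℝ | ∃ w : ℕ → ℝ,
      StrictMono w ∧
      Summable (fun i => pi i * |w i|) ∧
      (0 ≤ ∑' i, pi i * w i) ∧
      r = ⨅ i : ℕ,
        ((mu i * b i * (w (i + 1) - w i))⁻¹ *
          ∑' j : ℕ, mu (i + 1 + j) * w (i + 1 + j))⁻¹ } := by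
  classical
  subst hlam1
  have hmupos := ChenAux.mu_pos b a mu hb ha hmu0 hmurec
  have hZpos : 0 < Z := by
    rw [hZ]; exact Summable.tsum_pos hmusum (fun i => (hmupos i).le) 0 (hmupos 0)
  have hZne : Z ≠ 0 := hZpos.ne'
  have hZ1 : 1 < Z := ChenAux.Z_gt_one mu hmupos hmusum Z hZ hmu0
  have hpipos : ∀ i, 0 < pi i := fun i => by
    rw [hpi]; exact div_pos (hmupos i) hZpos
  set S : Set ℝ := { r : ℝ | ∃ f : ℕ → ℝ,
      Summable (fun i => pi i * f i) ∧ (∑' i, pi i * f i) = 0 ∧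
      Summable (fun i => pi i * f i ^ 2) ∧ (∑' i, pi i * f i ^ 2) = 1 ∧
      Summable (fun i => pi i * b i * (f (i + 1) - f i) ^ 2) ∧
      r = ∑' i, pi i * b i * (f (i + 1) - f i) ^ 2 } with hSdef
  set T : Set ℝ := { r : ℝ | ∃ w : ℕ → ℝ,
      StrictMono w ∧
      Summable (fun i => pi i * |w i|) ∧
      (0 ≤ ∑' i, pi i * w i) ∧
      r = ⨅ i : ℕ,
        ((mu i * b i * (w (i + 1) - w i))⁻¹ *
          ∑' j : ℕ, mu (i + 1 + j) * w (i + 1 + j))⁻¹ } with hTdef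
  -- conversion helpers
  have hconv : ∀ h : ℕ → ℝ, Summable (fun i => pi i * h i)
      → Summable (fun i => mu i * h i) := by
    intro h hs
    apply Summable.congr (hs.mul_right Z)
    intro i; rw [hpi]; field_simp
  have hconv2 : ∀ h : ℕ → ℝ, (∑' i, mu i * h i) = Z * ∑' i, pi i * h i := by
    intro h
    rw [← tsum_mul_left]
    apply tsum_congr; intro i; rw [hpi]; field_simp
  -- S is nonempty
  have hSne : S.Nonempty := by
    set f0 : ℕ → ℝ := fun i => if i = 0 then 1 else 0 with hf0
    have h01 : ∀ i ∉ ({0} : Finset ℕ), mu i * f0 i = 0 := by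
      intro i hi
      have : i ≠ 0 := by simpa using hi
      simp [hf0, this]
    have hs1 : Summable (fun i => mu i * f0 i) := summable_of_ne_finset_zero h01
    have hv1 : (∑' i, mu i * f0 i) = 1 := by
      rw [tsum_eq_sum h01]; simp [hf0, hmu0]
    have h02 : ∀ i ∉ ({0} : Finset ℕ), mu i * f0 i ^ 2 = 0 := by
      intro i hi
      have : i ≠ 0 := by simpa using hi
      simp [hf0, this]
    have hs2 : Summable (fun i => mu i * f0 i ^ 2) := summable_of_ne_finset_zero h02
    have hv2 : (∑' i, mu i * f0 i ^ 2) = 1 := by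
      rw [tsum_eq_sum h02]; simp [hf0, hmu0]
    have h03 : ∀ i ∉ ({0} : Finset ℕ), mu i * b i * (f0 (i + 1) - f0 i) ^ 2 = 0 := by
      intro i hi
      have hi0 : i ≠ 0 := by simpa using hi
      have e1 : f0 (i + 1) = 0 := by simp [hf0]
      have e2 : f0 i = 0 := by simp [hf0, hi0]
      rw [e1, e2]; ring
    have hs3 : Summable (fun i => mu i * b i * (f0 (i + 1) - f0 i) ^ 2) :=
      summable_of_ne_finset_zero h03
    obtain ⟨g, p1, p2, p3, p4, p5⟩ := ChenAux.normalize_test b mu pi hmupos hmusum Z hZ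
      hZpos hpi f0 hs1 hs2 hs3 (by rw [hv1, hv2]; linarith)
    exact ⟨_, g, p1, p2, p3, p4, p5, rfl⟩
  have hSlb : ∀ r ∈ S, (0:ℝ) ≤ r := by
    rintro r ⟨f, _, _, _, _, _, rfl⟩
    exact tsum_nonneg (fun i =>
      mul_nonneg (mul_nonneg (hpipos i).le (hb i).le) (sq_nonneg _))
  have hSbdd : BddBelow S := ⟨0, hSlb⟩
  -- every element of T is at most sInf S
  have hTupper : ∀ t ∈ T, t ≤ sInf S := by
    rintro t ⟨w, hwmono, hwsum, hwmean, rfl⟩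
    apply le_csInf hSne
    rintro r ⟨f, s1, v1, s2, v2, s3, rfl⟩
    have hwabsμ : Summable (fun i => mu i * |w i|) := hconv _ hwsum
    have hwmeanμ : 0 ≤ ∑' i, mu i * w i := by
      rw [hconv2 w]; exact mul_nonneg hZpos.le hwmean
    have hf1μ : Summable (fun i => mu i * f i) := hconv _ s1
    have hf1vμ : (∑' i, mu i * f i) = 0 := by rw [hconv2 f, v1, mul_zero]
    have hf2μ : Summable (fun i => mu i * f i ^ 2) := hconv (fun i => f i ^ 2) s2
    have hf2vμ : (∑' i, mu i * f i ^ 2) = Z := by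
      rw [hconv2 (fun i => f i ^ 2), v2, mul_one]
    have hf3μ : Summable (fun i => mu i * b i * (f (i + 1) - f i) ^ 2) := by
      have s3' : Summable (fun i => pi i * (b i * (f (i + 1) - f i) ^ 2)) :=
        s3.congr (fun i => by ring)
      exact (hconv _ s3').congr (fun i => by ring)
    have key := ChenAux.directionA b mu hb hmupos hmusum Z hZ w hwmono hwabsμ hwmeanμ
      f hf1μ hf1vμ hf2μ hf2vμ hf3μ
    have hDv : (∑' i, pi i * b i * (f (i + 1) - f i) ^ 2)
        = (∑' i, mu i * b i * (f (i + 1) - f i) ^ 2) / Z := by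
      have e2 : (∑' i, pi i * b i * (f (i + 1) - f i) ^ 2)
          = ∑' i, pi i * (b i * (f (i + 1) - f i) ^ 2) := tsum_congr (fun i => by ring)
      have e3 : (∑' i, mu i * b i * (f (i + 1) - f i) ^ 2)
          = ∑' i, mu i * (b i * (f (i + 1) - f i) ^ 2) := tsum_congr (fun i => by ring)
      rw [e2, e3, hconv2 (fun i => b i * (f (i + 1) - f i) ^ 2)]
      field_simp
    rw [hDv]
    exact key
  -- T contains a nonnegative element
  have hTne : ∃ t ∈ T, (0:ℝ) ≤ t := by
    set w0 : ℕ → ℝ := fun i => 1 - (2⁻¹ : ℝ) ^ i with hw0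
    have hw0mono : StrictMono w0 := by
      intro x y hxy
      have : (2⁻¹ : ℝ) ^ y < (2⁻¹) ^ x :=
        pow_lt_pow_right_of_lt_one₀ (by norm_num) (by norm_num) hxy
      show (1:ℝ) - 2⁻¹ ^ x < 1 - 2⁻¹ ^ y
      linarith
    have hw0nn : ∀ i, 0 ≤ w0 i := by
      intro i
      have h1 : (2⁻¹ : ℝ) ^ i ≤ 1 := pow_le_one₀ (by norm_num) (by norm_num)
      show (0:ℝ) ≤ 1 - 2⁻¹ ^ i
      linarith
    have hw0le : ∀ i, w0 i ≤ 1 := by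
      intro i
      have h1 : (0:ℝ) ≤ (2⁻¹ : ℝ) ^ i := by positivity
      show (1:ℝ) - 2⁻¹ ^ i ≤ 1
      linarith
    have hpisum : Summable pi := by
      apply Summable.congr (hmusum.div_const Z)
      intro i; rw [hpi]
    have habs : Summable (fun i => pi i * |w0 i|) := by
      refine Summable.of_nonneg_of_le
        (fun i => mul_nonneg (hpipos i).le (abs_nonneg _)) (fun i => ?_) hpisum
      rw [abs_of_nonneg (hw0nn i)]
      nlinarith [hpipos i, hw0nn i, hw0le i]
    have hmean : 0 ≤ ∑' i, pi i * w0 i :=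
      tsum_nonneg (fun i => mul_nonneg (hpipos i).le (hw0nn i))
    have hμw0 : Summable (fun i => mu i * w0 i) := by
      refine Summable.of_nonneg_of_le
        (fun i => mul_nonneg (hmupos i).le (hw0nn i)) (fun i => ?_) hmusum
      nlinarith [hmupos i, hw0nn i, hw0le i]
    have hμw0mean : 0 ≤ ∑' i, mu i * w0 i :=
      tsum_nonneg (fun i => mul_nonneg (hmupos i).le (hw0nn i))
    refine ⟨_, ⟨w0, hw0mono, habs, hmean, rfl⟩, ?_⟩
    apply le_ciInf
    intro i
    have htail := ChenAux.tail_pos mu hmupos hmusum w0 hw0mono hμw0 hμw0mean i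
    have hden : 0 < mu i * b i * (w0 (i + 1) - w0 i) :=
      mul_pos (mul_pos (hmupos i) (hb i)) (sub_pos.mpr (hw0mono (lt_add_one i)))
    have h1 : 0 < (mu i * b i * (w0 (i + 1) - w0 i))⁻¹
        * ∑' (j : ℕ), mu (i + 1 + j) * w0 (i + 1 + j) :=
      mul_pos (inv_pos.mpr hden) htail
    exact (inv_pos.mpr h1).le
  obtain ⟨t0, ht0T, ht0nn⟩ := hTne
  have hTbdd : BddAbove T := ⟨sInf S, fun t ht => hTupper t ht⟩
  apply le_antisymm
  · rcases le_or_gt (sInf S) 0 with hc | hc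
    · exact hc.trans (ht0nn.trans (le_csSup hTbdd ht0T))
    · by_contra hlt
      push_neg at hlt
      set lam := (max (sSup T) 0 + sInf S) / 2 with hlamdef
      have hmax0 : (0:ℝ) ≤ max (sSup T) 0 := le_max_right _ _
      have hmaxlt : max (sSup T) 0 < sInf S := max_lt hlt hc
      have hlam0 : 0 < lam := by rw [hlamdef]; linarith
      have hlamlt : lam < sInf S := by rw [hlamdef]; linarith
      have hlamgt : sSup T < lam := by
        have := le_max_left (sSup T) 0
        rw [hlamdef]; linarith
      have hlow : ∀ g : ℕ → ℝ, Summable (fun i => pi i * g i) →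
          (∑' i, pi i * g i) = 0 → Summable (fun i => pi i * g i ^ 2) →
          (∑' i, pi i * g i ^ 2) = 1 →
          Summable (fun i => pi i * b i * (g (i + 1) - g i) ^ 2) →
          lam < ∑' i, pi i * b i * (g (i + 1) - g i) ^ 2 := by
        intro g s1 v1 s2 v2 s3
        have : sInf S ≤ ∑' i, pi i * b i * (g (i + 1) - g i) ^ 2 :=
          csInf_le hSbdd ⟨g, s1, v1, s2, v2, s3, rfl⟩
        linarith
      obtain ⟨w, hwmono, hwsum, hwmean, hwle⟩ :=
        ChenAux.directionB b mu pi hb hmupos hmu0 hmusum Z hZ hpi lam hlam0 hlow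
      have : lam ≤ sSup T :=
        hwle.trans (le_csSup hTbdd ⟨w, hwmono, hwsum, hwmean, rfl⟩)
      linarith
  · exact csSup_le ⟨t0, ht0T⟩ (fun t ht => hTupper t ht)
end

section
/- The spectral gap λ₁ of a birth-death process is strictly positive if and only if sup_{n≥1} μ[n,∞) · Σ_{j=0}^{n-1} 1/(μ_j b_j) < ∞. -/
open Finset

lemma aux_ts (s t : ℝ) (ht : 0 < t) : (t^2 - s^2)/t ≤ 2*(t - s) := by
  rw [div_le_iff₀ ht]; nlinarith [sq_nonneg (t - s)]

lemma tail_summable {mu : ℕ → ℝ} (hmusum : Summable mu) (n : ℕ) :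
    Summable (fun j => mu (n + j)) := by
  have := (summable_nat_add_iff n).2 hmusum
  simpa [add_comm] using this

lemma tail_rec {mu : ℕ → ℝ} (hmusum : Summable mu) (n : ℕ) :
    (∑' j, mu (n + j)) = mu n + ∑' j, mu (n + 1 + j) := by
  have h : (fun j => mu (n + (j + 1))) = fun j => mu (n + 1 + j) := by
    funext j; congr 1; omega
  rw [Summable.tsum_eq_zero_add (tail_summable hmusum n), h, Nat.add_zero]

lemma tail_pos {mu : ℕ → ℝ} (hmu : ∀ n, 0 < mu n) (hmusum : Summable mu) (n : ℕ) :
    0 < ∑' j, mu (n + j) := by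
  have h0 : mu (n + 0) ≤ ∑' j, mu (n + j) :=
    Summable.le_tsum (tail_summable hmusum n) 0 (fun _ _ => (hmu _).le)
  have := hmu (n + 0)
  linarith

lemma sum_triangle_swap (F : ℕ → ℕ → ℝ) (N : ℕ) :
    ∑ i ∈ range N, ∑ j ∈ range i, F i j
      = ∑ j ∈ range N, ∑ i ∈ Ico (j+1) N, F i j := by
  induction N with
  | zero => simp
  | succ N ih =>
    rw [Finset.sum_range_succ, ih, Finset.sum_range_succ]
    have h1 : ∀ j ∈ range N, ∑ i ∈ Ico (j+1) (N+1), F i j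
        = (∑ i ∈ Ico (j+1) N, F i j) + F N j := by
      intro j hj
      rw [Finset.sum_Ico_succ_top (Nat.succ_le_of_lt (Finset.mem_range.1 hj))]
    rw [Finset.sum_congr rfl h1, Finset.sum_add_distrib]
    simp [add_comm]

/-- Weighted discrete Hardy inequality, finite-sum version. -/
lemma hardy (mu w : ℕ → ℝ) (hmu : ∀ n, 0 < mu n) (hw : ∀ n, 0 < w n)
    (hmusum : Summable mu) (B : ℝ)
    (hB : ∀ n, (∑' j, mu (n+1+j)) * (∑ j ∈ Finset.range (n+1), (w j)⁻¹) ≤ B)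
    (f : ℕ → ℝ) (N : ℕ) :
    ∑ i ∈ Finset.range N, mu i * (f i - f 0)^2
      ≤ 4*B*∑ j ∈ Finset.range N, w j * (f (j+1) - f j)^2 := by
  set u : ℕ → ℝ := fun n => ∑ j ∈ Finset.range (n+1), (w j)⁻¹ with hu
  set M : ℕ → ℝ := fun n => ∑' j, mu (n + j) with hM
  set d : ℕ → ℝ := fun j => f (j+1) - f j with hd
  have hupos : ∀ n, 0 < u n := by
    intro n
    exact Finset.sum_pos (fun j _ => inv_pos.2 (hw j)) (by simp)
  have husq : ∀ n, 0 < Real.sqrt (u n) := fun n => Real.sqrt_pos.2 (hupos n)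
  have humono : Monotone u := by
    apply monotone_nat_of_le_succ
    intro n
    rw [hu]
    simp only [Finset.sum_range_succ (n := n+1)]
    have := inv_pos.2 (hw (n+1))
    linarith [Finset.sum_range_succ (fun j => (w j)⁻¹) (n+1)]
  have hMpos : ∀ n, 0 < M n := fun n => tail_pos hmu hmusum n
  have hMsq : ∀ n, 0 < Real.sqrt (M n) := fun n => Real.sqrt_pos.2 (hMpos n)
  have hMrec : ∀ n, M n = mu n + M (n+1) := by
    intro n
    show (∑' j, mu (n + j)) = mu n + ∑' j, mu (n + 1 + j)
    exact tail_rec hmusum n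
  have hB' : ∀ n, M (n+1) * u n ≤ B := by
    intro n
    have := hB n
    rw [hM, hu]
    simpa using this
  have hBpos : 0 < B := lt_of_lt_of_le (mul_pos (hMpos 1) (hupos 0)) (hB' 0)
  have hBsq : 0 < Real.sqrt B := Real.sqrt_pos.2 hBpos
  -- Telescope A : partial sums of 1/(w j √u j) are ≤ 2√(u i)
  have hA : ∀ i, ∑ j ∈ Finset.range (i+1), (w j * Real.sqrt (u j))⁻¹
      ≤ 2 * Real.sqrt (u i) := by
    intro i
    induction i with
    | zero =>
      have hu0 : u 0 = (w 0)⁻¹ := by simp [hu]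
      have : (w 0 * Real.sqrt (u 0))⁻¹ = u 0 / Real.sqrt (u 0) := by
        rw [mul_inv, hu0]; ring
      rw [Finset.sum_range_one, this, Real.div_sqrt]
      nlinarith [husq 0]
    | succ i ih =>
      rw [Finset.sum_range_succ]
      have hstep : (w (i+1) * Real.sqrt (u (i+1)))⁻¹
          ≤ 2 * (Real.sqrt (u (i+1)) - Real.sqrt (u i)) := by
        have hui : u (i+1) - u i = (w (i+1))⁻¹ := by
          rw [hu]; simp [Finset.sum_range_succ]
        have h1 : (w (i+1) * Real.sqrt (u (i+1)))⁻¹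
            = (u (i+1) - u i) / Real.sqrt (u (i+1)) := by
          rw [mul_inv, hui]; ring
        have h2 : u (i+1) = Real.sqrt (u (i+1))^2 := (Real.sq_sqrt (hupos _).le).symm
        have h3 : u i = Real.sqrt (u i)^2 := (Real.sq_sqrt (hupos _).le).symm
        rw [h1]
        calc (u (i+1) - u i) / Real.sqrt (u (i+1))
            = (Real.sqrt (u (i+1))^2 - Real.sqrt (u i)^2) / Real.sqrt (u (i+1)) := by
              rw [← h2, ← h3]
          _ ≤ 2 * (Real.sqrt (u (i+1)) - Real.sqrt (u i)) := aux_ts _ _ (husq _)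
      have hmono : Real.sqrt (u i) ≤ Real.sqrt (u (i+1)) :=
        Real.sqrt_le_sqrt (humono (Nat.le_succ i))
      linarith
  -- Telescope B : tail sums of mu i * √(u (i-1)) over Ico (j+1) N
  have hTB1 : ∀ i, mu (i+1) * Real.sqrt (u i)
      ≤ 2 * Real.sqrt B * (Real.sqrt (M (i+1)) - Real.sqrt (M (i+2))) := by
    intro i
    have h1 : u i ≤ B / M (i+1) := by
      rw [le_div_iff₀ (hMpos _)]
      calc u i * M (i+1) = M (i+1) * u i := by ring
        _ ≤ B := hB' i
    have h2 : Real.sqrt (u i) ≤ Real.sqrt B / Real.sqrt (M (i+1)) := by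
      rw [← Real.sqrt_div hBpos.le]
      exact Real.sqrt_le_sqrt h1
    have hmu' : mu (i+1) = M (i+1) - M (i+2) := by have := hMrec (i+1); linarith
    have ht2 : Real.sqrt (M (i+1))^2 = M (i+1) := Real.sq_sqrt (hMpos _).le
    have hs2 : Real.sqrt (M (i+2))^2 = M (i+2) := Real.sq_sqrt (hMpos _).le
    have key : (M (i+1) - M (i+2)) / Real.sqrt (M (i+1))
        ≤ 2 * (Real.sqrt (M (i+1)) - Real.sqrt (M (i+2))) := by
      have := aux_ts (Real.sqrt (M (i+2))) (Real.sqrt (M (i+1))) (hMsq _)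
      rw [ht2, hs2] at this
      exact this
    calc mu (i+1) * Real.sqrt (u i)
        ≤ mu (i+1) * (Real.sqrt B / Real.sqrt (M (i+1))) :=
          mul_le_mul_of_nonneg_left h2 (hmu _).le
      _ = Real.sqrt B * ((M (i+1) - M (i+2)) / Real.sqrt (M (i+1))) := by
          rw [hmu']; ring
      _ ≤ Real.sqrt B * (2 * (Real.sqrt (M (i+1)) - Real.sqrt (M (i+2)))) :=
          mul_le_mul_of_nonneg_left key hBsq.le
      _ = 2 * Real.sqrt B * (Real.sqrt (M (i+1)) - Real.sqrt (M (i+2))) := by ring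
  have hTB : ∀ (j N' : ℕ), ∑ i ∈ Finset.Ico (j+1) N', mu i * Real.sqrt (u (i-1))
      ≤ 2 * Real.sqrt B * Real.sqrt (M (j+1)) := by
    intro j N'
    rw [Finset.sum_Ico_eq_sum_range]
    set G : ℕ → ℝ := fun k => 2 * Real.sqrt B * Real.sqrt (M (j+1+k)) with hG
    have hterm : ∀ k, mu (j+1+k) * Real.sqrt (u (j+1+k-1)) ≤ G k - G (k+1) := by
      intro k
      have e1 : j+1+k = (j+k)+1 := by omega
      have e2 : j+1+k-1 = j+k := by omega
      have e3 : j+1+(k+1) = (j+k)+2 := by omega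
      rw [e2, e1, hG]
      simp only []
      rw [e1, e3]
      have := hTB1 (j+k)
      linarith
    calc ∑ k ∈ Finset.range (N' - (j+1)), mu (j+1+k) * Real.sqrt (u (j+1+k-1))
        ≤ ∑ k ∈ Finset.range (N' - (j+1)), (G k - G (k+1)) :=
          Finset.sum_le_sum (fun k _ => hterm k)
      _ = G 0 - G (N' - (j+1)) := Finset.sum_range_sub' G _
      _ ≤ G 0 := by
          have : 0 ≤ G (N' - (j+1)) := by
            rw [hG]
            positivity
          linarith
      _ = 2 * Real.sqrt B * Real.sqrt (M (j+1)) := by rw [hG]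
  have hkey : ∀ i, mu i * (f i - f 0)^2
      ≤ ∑ j ∈ Finset.range i,
          mu i * (2 * Real.sqrt (u (i-1))) * (w j * Real.sqrt (u j) * d j ^ 2) := by
    intro i
    match i with
    | 0 => simp
    | (k+1) =>
      have hsum : f (k+1) - f 0 = ∑ j ∈ Finset.range (k+1), d j :=
        (Finset.sum_range_sub f (k+1)).symm
      set e : ℕ → ℝ := fun j => Real.sqrt ((w j * Real.sqrt (u j))⁻¹) with he
      have hepos : ∀ j, 0 < e j :=
        fun j => Real.sqrt_pos.2 (inv_pos.2 (mul_pos (hw j) (husq j)))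
      have he2 : ∀ j, e j ^ 2 = (w j * Real.sqrt (u j))⁻¹ :=
        fun j => Real.sq_sqrt (inv_pos.2 (mul_pos (hw j) (husq j))).le
      have hL : ∑ j ∈ Finset.range (k+1), e j * (d j / e j)
          = ∑ j ∈ Finset.range (k+1), d j := by
        apply Finset.sum_congr rfl; intro j _
        rw [mul_comm, div_mul_cancel₀ _ (hepos j).ne']
      have hR2 : ∀ j, (d j / e j)^2 = w j * Real.sqrt (u j) * d j ^ 2 := by
        intro j
        rw [div_pow, he2, division_def, inv_inv]
        ring
      have CS' : (f (k+1) - f 0)^2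
          ≤ (∑ j ∈ Finset.range (k+1), (w j * Real.sqrt (u j))⁻¹)
            * (∑ j ∈ Finset.range (k+1), w j * Real.sqrt (u j) * d j ^ 2) := by
        rw [hsum, ← hL]
        calc (∑ j ∈ Finset.range (k+1), e j * (d j / e j))^2
            ≤ (∑ j ∈ Finset.range (k+1), e j ^ 2)
              * (∑ j ∈ Finset.range (k+1), (d j / e j) ^ 2) :=
              Finset.sum_mul_sq_le_sq_mul_sq _ _ _
          _ = _ := by
              rw [Finset.sum_congr rfl (fun j _ => he2 j),
                Finset.sum_congr rfl (fun j _ => hR2 j)]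
      have hS2 : 0 ≤ ∑ j ∈ Finset.range (k+1), w j * Real.sqrt (u j) * d j ^ 2 := by
        apply Finset.sum_nonneg; intro j _
        exact mul_nonneg (mul_nonneg (hw j).le (Real.sqrt_nonneg _)) (sq_nonneg _)
      calc mu (k+1) * (f (k+1) - f 0)^2
          ≤ mu (k+1) * ((∑ j ∈ Finset.range (k+1), (w j * Real.sqrt (u j))⁻¹)
            * (∑ j ∈ Finset.range (k+1), w j * Real.sqrt (u j) * d j ^ 2)) :=
            mul_le_mul_of_nonneg_left CS' (hmu _).le
        _ ≤ mu (k+1) * ((2 * Real.sqrt (u k))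
            * (∑ j ∈ Finset.range (k+1), w j * Real.sqrt (u j) * d j ^ 2)) :=
            mul_le_mul_of_nonneg_left (mul_le_mul_of_nonneg_right (hA k) hS2) (hmu _).le
        _ = ∑ j ∈ Finset.range (k+1),
            mu (k+1) * (2 * Real.sqrt (u (k+1-1))) * (w j * Real.sqrt (u j) * d j ^ 2) := by
            simp only [Nat.add_sub_cancel, Finset.mul_sum]
            apply Finset.sum_congr rfl; intro j _; ring
  have hinner : ∀ j ∈ Finset.range N,
      ∑ i ∈ Finset.Ico (j+1) N,
        mu i * (2 * Real.sqrt (u (i-1))) * (w j * Real.sqrt (u j) * d j ^ 2)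
      ≤ 4 * B * (w j * d j ^ 2) := by
    intro j _
    have hrw : ∑ i ∈ Finset.Ico (j+1) N,
        mu i * (2 * Real.sqrt (u (i-1))) * (w j * Real.sqrt (u j) * d j ^ 2)
        = (2 * (w j * Real.sqrt (u j) * d j ^ 2))
          * ∑ i ∈ Finset.Ico (j+1) N, mu i * Real.sqrt (u (i-1)) := by
      rw [Finset.mul_sum]
      apply Finset.sum_congr rfl; intro i _; ring
    rw [hrw]
    have hc : (0:ℝ) ≤ 2 * (w j * Real.sqrt (u j) * d j ^ 2) :=
      mul_nonneg (by norm_num)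
        (mul_nonneg (mul_nonneg (hw j).le (Real.sqrt_nonneg _)) (sq_nonneg _))
    have hs : Real.sqrt (u j) * Real.sqrt (M (j+1)) ≤ Real.sqrt B := by
      rw [← Real.sqrt_mul (hupos j).le]
      apply Real.sqrt_le_sqrt
      calc u j * M (j+1) = M (j+1) * u j := by ring
        _ ≤ B := hB' j
    have hs2 : Real.sqrt (u j) * Real.sqrt (M (j+1)) * Real.sqrt B ≤ B := by
      have := mul_le_mul_of_nonneg_right hs hBsq.le
      rwa [Real.mul_self_sqrt hBpos.le] at this
    calc (2 * (w j * Real.sqrt (u j) * d j ^ 2))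
          * ∑ i ∈ Finset.Ico (j+1) N, mu i * Real.sqrt (u (i-1))
        ≤ (2 * (w j * Real.sqrt (u j) * d j ^ 2))
          * (2 * Real.sqrt B * Real.sqrt (M (j+1))) :=
          mul_le_mul_of_nonneg_left (hTB j N) hc
      _ = 4 * (w j * d j ^ 2)
          * (Real.sqrt (u j) * Real.sqrt (M (j+1)) * Real.sqrt B) := by ring
      _ ≤ 4 * (w j * d j ^ 2) * B := by
          exact mul_le_mul_of_nonneg_left hs2
            (mul_nonneg (by norm_num) (mul_nonneg (hw j).le (sq_nonneg _)))
      _ = 4 * B * (w j * d j ^ 2) := by ring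
  calc ∑ i ∈ Finset.range N, mu i * (f i - f 0)^2
      ≤ ∑ i ∈ Finset.range N, ∑ j ∈ Finset.range i,
          mu i * (2 * Real.sqrt (u (i-1))) * (w j * Real.sqrt (u j) * d j ^ 2) :=
        Finset.sum_le_sum (fun i _ => hkey i)
    _ = ∑ j ∈ Finset.range N, ∑ i ∈ Finset.Ico (j+1) N,
          mu i * (2 * Real.sqrt (u (i-1))) * (w j * Real.sqrt (u j) * d j ^ 2) :=
        sum_triangle_swap _ N
    _ ≤ ∑ j ∈ Finset.range N, 4 * B * (w j * d j ^ 2) := Finset.sum_le_sum hinner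
    _ = 4 * B * ∑ j ∈ Finset.range N, w j * (f (j+1) - f j)^2 := by
        rw [Finset.mul_sum]

lemma summable_mul_of_bounded {pi f : ℕ → ℝ} (hpi : Summable pi) (hpin : ∀ i, 0 ≤ pi i)
    (C : ℝ) (hf : ∀ i, |f i| ≤ C) : Summable (fun i => pi i * f i) := by
  apply Summable.of_norm_bounded (hpi.mul_right C)
  intro i
  rw [Real.norm_eq_abs, abs_mul, abs_of_nonneg (hpin i)]
  exact mul_le_mul_of_nonneg_left (hf i) (hpin i)

lemma tsum_ite0 (pi : ℕ → ℝ) (hpi : Summable pi) (α β : ℝ) :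
    (∑' i, pi i * (if i = 0 then α else β)) = (∑' i, pi i) * β + pi 0 * (α - β) := by
  have hfun : (fun i => pi i * (if i = 0 then α else β))
      = fun i => pi i * β + (if i = 0 then pi 0 * (α - β) else 0) := by
    funext i
    by_cases h : i = 0 <;> simp [h] <;> ring
  have hs2 : Summable (fun i : ℕ => if i = 0 then pi 0 * (α - β) else 0) :=
    summable_of_ne_finset_zero (s := {0}) (by intro i hi; simp at hi; simp [hi])
  rw [hfun, Summable.tsum_add (hpi.mul_right β) hs2, tsum_mul_right, tsum_ite_eq]

lemma summable_ite0 (pi : ℕ → ℝ) (hpi : Summable pi) (α β : ℝ) :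
    Summable (fun i => pi i * (if i = 0 then α else β)) := by
  have hs2 : Summable (fun i : ℕ => if i = 0 then pi 0 * (α - β) else 0) :=
    summable_of_ne_finset_zero (s := {0}) (by intro i hi; simp at hi; simp [hi])
  have hfun : (fun i => pi i * (if i = 0 then α else β))
      = fun i => pi i * β + (if i = 0 then pi 0 * (α - β) else 0) := by
    funext i
    by_cases h : i = 0 <;> simp [h] <;> ring
  rw [hfun]
  exact (hpi.mul_right β).add hs2

lemma expand_sq {pi f : ℕ → ℝ} (c : ℝ) (h1 : Summable (fun i => pi i * f i))
    (h2 : Summable (fun i => pi i * f i ^ 2)) (h3 : Summable pi) :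
    Summable (fun i => pi i * (f i - c)^2) ∧
    (∑' i, pi i * (f i - c)^2)
      = (∑' i, pi i * f i ^ 2) - 2*c*(∑' i, pi i * f i) + c^2 * (∑' i, pi i) := by
  have hfun : (fun i => pi i * (f i - c)^2)
      = fun i => (pi i * f i ^ 2 - 2*c*(pi i * f i)) + c^2 * pi i := by
    funext i; ring
  have hs1 : Summable (fun i => pi i * f i ^ 2 - 2*c*(pi i * f i)) :=
    h2.sub (h1.mul_left (2*c))
  constructor
  · rw [hfun]; exact hs1.add (h3.mul_left (c^2))
  · rw [hfun, Summable.tsum_add hs1 (h3.mul_left (c^2)), Summable.tsum_sub h2 (h1.mul_left (2*c)),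
      tsum_mul_left, tsum_mul_left]
set_option maxHeartbeats 1000000 in
/-- The spectral gap `λ₁` of a birth-death process is strictly positive iff
`sup_{n ≥ 1} μ[n,∞) · Σ_{j=0}^{n-1} 1/(μⱼ bⱼ) < ∞`. -/
theorem spectral_gap_positive_iff_birth_death
    (b a : ℕ → ℝ) (hb : ∀ i, 0 < b i) (ha : ∀ i, 0 < a (i + 1))
    (mu : ℕ → ℝ) (hmu0 : mu 0 = 1)
    (hmurec : ∀ n, mu (n + 1) = mu n * b n / a (n + 1))
    (hmusum : Summable mu)
    (Z : ℝ) (hZ : Z = ∑' n, mu n)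
    (pi : ℕ → ℝ) (hpi : ∀ i, pi i = mu i / Z)
    (lam1 : ℝ)
    (hlam1 : lam1 = sInf { r : ℝ | ∃ f : ℕ → ℝ,
      Summable (fun i => pi i * f i) ∧ (∑' i, pi i * f i) = 0 ∧
      Summable (fun i => pi i * f i ^ 2) ∧ (∑' i, pi i * f i ^ 2) = 1 ∧
      Summable (fun i => pi i * b i * (f (i + 1) - f i) ^ 2) ∧
      r = ∑' i, pi i * b i * (f (i + 1) - f i) ^ 2 }) :
    0 < lam1 ↔ BddAbove (Set.range fun n : ℕ =>
      (∑' j : ℕ, mu (n + 1 + j)) * ∑ j ∈ Finset.range (n + 1), (mu j * b j)⁻¹) := by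
  set S := { r : ℝ | ∃ f : ℕ → ℝ,
      Summable (fun i => pi i * f i) ∧ (∑' i, pi i * f i) = 0 ∧
      Summable (fun i => pi i * f i ^ 2) ∧ (∑' i, pi i * f i ^ 2) = 1 ∧
      Summable (fun i => pi i * b i * (f (i + 1) - f i) ^ 2) ∧
      r = ∑' i, pi i * b i * (f (i + 1) - f i) ^ 2 } with hS
  -- basic positivity facts
  have hmupos : ∀ n, 0 < mu n := by
    intro n
    induction n with
    | zero => rw [hmu0]; norm_num
    | succ n ih => rw [hmurec n]; exact div_pos (mul_pos ih (hb n)) (ha n)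
  have hwpos : ∀ n, 0 < mu n * b n := fun n => mul_pos (hmupos n) (hb n)
  have hZ1 : 1 < Z := by
    have h2 : ∑ i ∈ Finset.range 2, mu i ≤ Z := by
      rw [hZ]
      exact Summable.sum_le_tsum _ (fun i _ => (hmupos i).le) hmusum
    have h3 := hmupos 1
    rw [Finset.sum_range_succ, Finset.sum_range_one, hmu0] at h2
    linarith
  have hZpos : (0:ℝ) < Z := by linarith
  have hpif : pi = fun i => mu i / Z := funext hpi
  have hpin : ∀ i, 0 ≤ pi i := fun i => by
    rw [hpi]; exact div_nonneg (hmupos i).le hZpos.le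
  have hpipos : ∀ i, 0 < pi i := fun i => by
    rw [hpi]; exact div_pos (hmupos i) hZpos
  have hpisum : Summable pi := by rw [hpif]; exact hmusum.div_const Z
  have hpitsum : (∑' i, pi i) = 1 := by
    rw [hpif, tsum_div_const, ← hZ, div_self hZpos.ne']
  have hpi0 : pi 0 = 1/Z := by rw [hpi, hmu0]
  -- S is bounded below by 0 and nonempty
  have hSlb : ∀ r ∈ S, (0:ℝ) ≤ r := by
    rintro r ⟨f, -, -, -, -, -, hr⟩
    rw [hr]
    apply tsum_nonneg
    intro i
    exact mul_nonneg (mul_nonneg (hpin i) (hb i).le) (sq_nonneg _)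
  have hSbdd : BddBelow S := ⟨0, fun r hr => hSlb r hr⟩
  have hSne : S.Nonempty := by
    have hZm1 : (0:ℝ) < Z - 1 := by linarith
    set α := Real.sqrt (Z - 1) with hα
    have hαpos : 0 < α := Real.sqrt_pos.2 hZm1
    have hα2 : α^2 = Z - 1 := Real.sq_sqrt hZm1.le
    set β := -α⁻¹ with hβ
    set f : ℕ → ℝ := fun i => if i = 0 then α else β with hf
    have hfb : ∀ i, |f i| ≤ max α α⁻¹ := by
      intro i
      by_cases h : i = 0
      · have hfi : f i = α := by rw [hf]; simp [h]
        rw [hfi, abs_of_pos hαpos]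
        exact le_max_left _ _
      · have hfi : f i = β := by rw [hf]; simp [h]
        rw [hfi, hβ, abs_neg, abs_of_pos (inv_pos.2 hαpos)]
        exact le_max_right _ _
    have hs1 : Summable (fun i => pi i * f i) := summable_ite0 pi hpisum α β
    have he1 : (∑' i, pi i * f i) = 0 := by
      rw [hf, tsum_ite0 pi hpisum α β, hpitsum, hpi0, hβ]
      field_simp
      nlinarith [hα2, hαpos]
    have hfsq : (fun i => pi i * f i ^ 2) = fun i => pi i * (if i = 0 then α^2 else β^2) := by
      funext i
      by_cases h : i = 0 <;> simp [hf, h]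
    have hs2 : Summable (fun i => pi i * f i ^ 2) := by
      rw [hfsq]; exact summable_ite0 pi hpisum _ _
    have he2 : (∑' i, pi i * f i ^ 2) = 1 := by
      rw [hfsq, tsum_ite0 pi hpisum _ _, hpitsum, hpi0, hβ]
      have : (-α⁻¹)^2 = (α^2)⁻¹ := by rw [neg_pow, inv_pow]; ring
      rw [this, hα2]
      field_simp
      ring
    have hDzero : ∀ i ∉ Finset.range 1, pi i * b i * (f (i+1) - f i)^2 = 0 := by
      intro i hi
      simp only [Finset.mem_range, Nat.lt_one_iff] at hi
      have : f (i+1) = f i := by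
        rw [hf]; simp [hi, Nat.succ_ne_zero]
      rw [this]
      simp
    have hs3 : Summable (fun i => pi i * b i * (f (i+1) - f i)^2) :=
      summable_of_ne_finset_zero hDzero
    exact ⟨_, f, hs1, he1, hs2, he2, hs3, rfl⟩
  rw [hlam1]
  constructor
  · intro hpos
    by_contra hnb
    rw [not_bddAbove_iff] at hnb
    obtain ⟨y, hymem, hy⟩ := hnb (Z / sInf S)
    obtain ⟨n, hn⟩ := hymem
    have hy' : Z / sInf S
        < (∑' j : ℕ, mu (n+1+j)) * ∑ j ∈ Finset.range (n+1), (mu j * b j)⁻¹ := by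
      rw [← hn] at hy; exact hy
    set Mn := (∑' j : ℕ, mu (n+1+j)) with hMn
    set un := ∑ j ∈ Finset.range (n+1), (mu j * b j)⁻¹ with hun
    have hMnpos : 0 < Mn := by rw [hMn]; exact tail_pos hmupos hmusum (n+1)
    have hunpos : 0 < un := by
      rw [hun]
      exact Finset.sum_pos (fun j _ => inv_pos.2 (hwpos j)) (by simp)
    clear_value Mn un
    set f : ℕ → ℝ := fun i => ∑ j ∈ Finset.range (min i (n+1)), (mu j * b j)⁻¹ with hf
    have hf0 : f 0 = 0 := by rw [hf]; simp
    have hfnn : ∀ i, 0 ≤ f i := by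
      intro i
      rw [hf]
      exact Finset.sum_nonneg (fun j _ => (inv_pos.2 (hwpos j)).le)
    have hfle : ∀ i, f i ≤ un := by
      intro i
      rw [hf, hun]
      exact Finset.sum_le_sum_of_subset_of_nonneg
        (Finset.range_subset_range.2 (min_le_right _ _))
        (fun j _ _ => (inv_pos.2 (hwpos j)).le)
    have hftail : ∀ i, n+1 ≤ i → f i = un := by
      intro i hi
      rw [hf, hun]
      simp only [min_eq_right hi]
    have hfd : ∀ i, f (i+1) - f i = if i ≤ n then (mu i * b i)⁻¹ else 0 := by
      intro i
      by_cases h : i ≤ n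
      · rw [if_pos h, hf]
        simp only [min_eq_left (by omega : i ≤ n+1), min_eq_left (by omega : i+1 ≤ n+1),
          Finset.sum_range_succ]
        ring
      · rw [if_neg h, hf]
        simp only [min_eq_right (by omega : n+1 ≤ i), min_eq_right (by omega : n+1 ≤ i+1)]
        ring
    have hfb : ∀ i, |f i| ≤ un := fun i => by
      rw [abs_of_nonneg (hfnn i)]; exact hfle i
    have hs1 : Summable (fun i => pi i * f i) :=
      summable_mul_of_bounded hpisum hpin un hfb
    have hfb2 : ∀ i, |f i ^ 2| ≤ un^2 := by
      intro i
      rw [abs_of_nonneg (sq_nonneg _)]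
      exact pow_le_pow_left₀ (hfnn i) (hfle i) 2
    have hs2 : Summable (fun i => pi i * f i ^ 2) :=
      summable_mul_of_bounded hpisum hpin (un^2) hfb2
    clear_value f
    set m := ∑' i, pi i * f i with hm
    set v := (∑' i, pi i * f i ^ 2) - m^2 with hv
    have hexp := expand_sq m hs1 hs2 hpisum
    have hves : (∑' i, pi i * (f i - m)^2) = v := by
      rw [hexp.2, hpitsum, hv]; ring
    have hptail : (∑' i, pi (i + (n+1))) = Mn / Z := by
      rw [hpif]
      have h1 : (∑' i, mu (i + (n+1)) / Z) = (∑' i, mu (i + (n+1))) / Z := tsum_div_const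
      have h2 : (∑' i, mu (i + (n+1))) = Mn := by
        rw [hMn]
        apply tsum_congr
        intro i; congr 1; omega
      calc (∑' i, (fun i => mu i / Z) (i + (n+1))) = (∑' i, mu (i + (n+1)) / Z) := rfl
        _ = Mn / Z := by rw [h1, h2]
    have hsplit : (∑ i ∈ Finset.range (n+1), pi i * (f i - m)^2)
        + (∑' i, pi (i + (n+1)) * (f (i + (n+1)) - m)^2)
        = ∑' i, pi i * (f i - m)^2 := Summable.sum_add_tsum_nat_add (n+1) hexp.1
    have htv : (∑' i, pi (i + (n+1)) * (f (i + (n+1)) - m)^2) = (un - m)^2 * (Mn/Z) := by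
      have hfe : (fun i => pi (i + (n+1)) * (f (i + (n+1)) - m)^2)
          = fun i => (un - m)^2 * pi (i + (n+1)) := by
        funext i
        rw [hftail (i + (n+1)) (by omega)]
        ring
      rw [hfe, tsum_mul_left, hptail]
    have h0le : pi 0 * m^2 ≤ ∑ i ∈ Finset.range (n+1), pi i * (f i - m)^2 := by
      have h : pi 0 * (f 0 - m)^2 ≤ ∑ i ∈ Finset.range (n+1), pi i * (f i - m)^2 :=
        Finset.single_le_sum (f := fun i => pi i * (f i - m)^2)
          (fun i _ => mul_nonneg (hpin i) (sq_nonneg _)) (Finset.mem_range.2 (Nat.succ_pos n))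
      rw [hf0] at h
      calc pi 0 * m^2 = pi 0 * (0 - m)^2 := by ring
        _ ≤ _ := h
    have hvlb1 : pi 0 * m^2 + (un - m)^2 * (Mn/Z) ≤ v := by
      rw [htv, hves] at hsplit
      linarith
    have hq : 0 < Mn/Z := div_pos hMnpos hZpos
    have hple : pi 0 + Mn/Z ≤ 1 := by
      have hsp : (∑ i ∈ Finset.range (n+1), pi i) + (∑' i, pi (i + (n+1)))
          = ∑' i, pi i := Summable.sum_add_tsum_nat_add (n+1) hpisum
      have h0 : pi 0 ≤ ∑ i ∈ Finset.range (n+1), pi i :=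
        Finset.single_le_sum (f := pi) (fun i _ => hpin i)
          (Finset.mem_range.2 (Nat.succ_pos n))
      rw [hptail, hpitsum] at hsp
      linarith
    have hvlb : pi 0 * (Mn/Z) * un^2 ≤ v := by
      have hE : 0 ≤ pi 0 * m^2 + (un - m)^2 * (Mn/Z) :=
        add_nonneg (mul_nonneg (hpin 0) (sq_nonneg _)) (mul_nonneg (sq_nonneg _) hq.le)
      have e1 : pi 0 * (Mn/Z) * un^2
          ≤ (pi 0 + Mn/Z) * (pi 0 * m^2 + (un - m)^2 * (Mn/Z)) := by
        nlinarith [sq_nonneg (pi 0 * m - (Mn/Z) * (un - m))]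
      have e2 : (pi 0 + Mn/Z) * (pi 0 * m^2 + (un - m)^2 * (Mn/Z))
          ≤ 1 * (pi 0 * m^2 + (un - m)^2 * (Mn/Z)) :=
        mul_le_mul_of_nonneg_right hple hE
      rw [one_mul] at e2
      linarith
    have hvpos : 0 < v :=
      lt_of_lt_of_le (mul_pos (mul_pos (hpipos 0) hq) (pow_pos hunpos 2)) hvlb
    clear_value m v
    set σ := Real.sqrt v with hσdef
    have hσpos : 0 < σ := Real.sqrt_pos.2 hvpos
    have hσ2 : σ^2 = v := Real.sq_sqrt hvpos.le
    clear_value σ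
    set g : ℕ → ℝ := fun i => (f i - m)/σ with hg
    clear_value g
    have hg1e : (fun i => pi i * g i) = fun i => (pi i * f i - m * pi i)/σ := by
      funext i; simp only [hg]; ring
    have hsg1 : Summable (fun i => pi i * g i) := by
      rw [hg1e]; exact (hs1.sub (hpisum.mul_left m)).div_const σ
    have heg1 : (∑' i, pi i * g i) = 0 := by
      rw [hg1e, tsum_div_const, Summable.tsum_sub hs1 (hpisum.mul_left m), tsum_mul_left,
        hpitsum, ← hm]
      simp
    have hg2e : (fun i => pi i * g i ^ 2) = fun i => (pi i * (f i - m)^2)/v := by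
      funext i; simp only [hg]; rw [div_pow, hσ2]; ring
    have hsg2 : Summable (fun i => pi i * g i ^ 2) := by
      rw [hg2e]; exact hexp.1.div_const v
    have heg2 : (∑' i, pi i * g i ^ 2) = 1 := by
      rw [hg2e, tsum_div_const, hves]
      exact div_self hvpos.ne'
    have hDzero : ∀ i ∉ Finset.range (n+1), pi i * b i * (g (i+1) - g i)^2 = 0 := by
      intro i hi
      simp only [Finset.mem_range] at hi
      have h1 : f (i+1) - f i = 0 := by rw [hfd i, if_neg (by omega)]
      have h2 : g (i+1) - g i = 0 := by
        simp only [hg]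
        rw [div_sub_div_same, show f (i+1) - m - (f i - m) = f (i+1) - f i by ring,
          h1, zero_div]
      rw [h2]
      simp
    have hsD : Summable (fun i => pi i * b i * (g (i+1) - g i)^2) :=
      summable_of_ne_finset_zero hDzero
    have hrS : (∑' i, pi i * b i * (g (i+1) - g i)^2) ∈ S :=
      ⟨g, hsg1, heg1, hsg2, heg2, hsD, rfl⟩
    have hrval : (∑' i, pi i * b i * (g (i+1) - g i)^2) = un/(Z*v) := by
      rw [tsum_eq_sum hDzero]
      have hterm : ∀ i ∈ Finset.range (n+1),
          pi i * b i * (g (i+1) - g i)^2 = (mu i * b i)⁻¹/(Z*v) := by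
        intro i hi
        simp only [Finset.mem_range] at hi
        have h1 : f (i+1) - f i = (mu i * b i)⁻¹ := by rw [hfd i, if_pos (by omega)]
        have h2 : g (i+1) - g i = (mu i * b i)⁻¹/σ := by
          simp only [hg]
          rw [div_sub_div_same, show f (i+1) - m - (f i - m) = f (i+1) - f i by ring, h1]
        rw [h2, hpi, div_pow, hσ2]
        have hbne := (hb i).ne'
        have hmne := (hmupos i).ne'
        field_simp
      rw [Finset.sum_congr rfl hterm, ← Finset.sum_div, hun]
    have hvlb' : Mn * un^2 ≤ Z^2 * v := by
      rw [hpi0] at hvlb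
      have h2 : (1/Z * (Mn/Z) * un^2) * Z^2 ≤ v * Z^2 :=
        mul_le_mul_of_nonneg_right hvlb (sq_nonneg Z)
      have h3 : (1/Z * (Mn/Z) * un^2) * Z^2 = Mn * un^2 := by
        field_simp
      rw [h3] at h2
      linarith
    have hrb : (∑' i, pi i * b i * (g (i+1) - g i)^2) ≤ Z/(Mn * un) := by
      rw [hrval, div_le_div_iff₀ (mul_pos hZpos hvpos) (mul_pos hMnpos hunpos)]
      nlinarith [hvlb']
    have hlam1le : sInf S ≤ ∑' i, pi i * b i * (g (i+1) - g i)^2 := csInf_le hSbdd hrS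
    have hc1 : Z < Mn * un * sInf S := by
      rw [div_lt_iff₀ hpos] at hy'
      linarith
    have hc2 : sInf S * (Mn * un) ≤ Z := by
      have : sInf S ≤ Z/(Mn * un) := le_trans hlam1le hrb
      rw [le_div_iff₀ (mul_pos hMnpos hunpos)] at this
      exact this
    rw [mul_comm] at hc2
    linarith
  · rintro ⟨B, hBmem⟩
    have hB : ∀ n, (∑' j, mu (n+1+j)) * (∑ j ∈ Finset.range (n+1), (mu j * b j)⁻¹) ≤ B :=
      fun n => hBmem ⟨n, rfl⟩
    have hBpos : 0 < B := by
      refine lt_of_lt_of_le ?_ (hB 0)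
      apply mul_pos (tail_pos hmupos hmusum 1)
      rw [Finset.sum_range_one]
      exact inv_pos.2 (hwpos 0)
    have key : ∀ r ∈ S, 1/(4*B) ≤ r := by
      rintro r ⟨f, h1, e1, h2, e2, h3, hr⟩
      have hDmu : Summable (fun i => mu i * b i * (f (i+1) - f i)^2) := by
        have hh := h3.mul_left Z
        have : (fun i => Z * (pi i * b i * (f (i+1) - f i)^2))
            = fun i => mu i * b i * (f (i+1) - f i)^2 := by
          funext i; rw [hpi]; field_simp
        rwa [this] at hh
      have hDval : (∑' i, mu i * b i * (f (i+1) - f i)^2) = Z * r := by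
        rw [hr, ← tsum_mul_left]
        apply tsum_congr
        intro i; rw [hpi]; field_simp
      have hH : ∀ N, ∑ i ∈ Finset.range N, mu i * (f i - f 0)^2 ≤ 4*B*(Z*r) := by
        intro N
        calc ∑ i ∈ Finset.range N, mu i * (f i - f 0)^2
            ≤ 4*B*∑ j ∈ Finset.range N, (mu j * b j) * (f (j+1) - f j)^2 :=
              hardy mu (fun j => mu j * b j) hmupos hwpos hmusum B hB f N
          _ ≤ 4*B*(Z*r) := by
              apply mul_le_mul_of_nonneg_left _ (by positivity)
              rw [← hDval]
              exact Summable.sum_le_tsum _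
                (fun i _ => mul_nonneg (hwpos i).le (sq_nonneg _)) hDmu
      have hnn : ∀ i, 0 ≤ mu i * (f i - f 0)^2 :=
        fun i => mul_nonneg (hmupos i).le (sq_nonneg _)
      have hgsum : Summable (fun i => mu i * (f i - f 0)^2) :=
        summable_of_sum_range_le hnn hH
      have hgle : (∑' i, mu i * (f i - f 0)^2) ≤ 4*B*(Z*r) :=
        Summable.tsum_le_of_sum_range_le hgsum hH
      have hexp := expand_sq (f 0) h1 h2 hpisum
      have hid : (∑' i, mu i * (f i - f 0)^2) = Z * ∑' i, pi i * (f i - f 0)^2 := by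
        rw [← tsum_mul_left]
        apply tsum_congr
        intro i; rw [hpi]; field_simp
      rw [hid, hexp.2, e1, e2, hpitsum] at hgle
      have h5 : Z * 1 ≤ Z * (4*B*r) := by nlinarith [sq_nonneg (f 0)]
      have h6 : (1:ℝ) ≤ 4*B*r := le_of_mul_le_mul_left h5 hZpos
      rw [div_le_iff₀ (by linarith : (0:ℝ) < 4*B)]
      linarith
    have hinf : 1/(4*B) ≤ sInf S := le_csInf hSne key
    have : (0:ℝ) < 1/(4*B) := by positivity
    linarith
end

section
/- Let δ = sup_{n≥1} μ[n,∞) · Σ_{j=0}^{n-1} 1/(μ_j b_j). Then: (i) for every f : ℤ₊ → ℝ with f_0 = 0, one has Σ_{n≥1} μ_n f_n² ≤ 4δ · Σ_{n≥0} μ_n b_n (f_{n+1} − f_n)²; and (ii) if A is any constant such that Σ_{n≥1} μ_n f_n² ≤ A · Σ_{n≥0} μ_n b_n (f_{n+1} − f_n)² for all f with f_0 = 0, then A ≥ δ. -/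
open MeasureTheory Set Real ENNReal

lemma hardy_step_bound {s t : ℝ} (hs : 0 ≤ s) (hst : s ≤ t) (ht : 0 < t) :
    (t - s) / Real.sqrt t ≤ 2 * (Real.sqrt t - Real.sqrt s) := by
  have h1 : Real.sqrt s ≤ Real.sqrt t := Real.sqrt_le_sqrt hst
  have h2 : 0 < Real.sqrt t := Real.sqrt_pos.2 ht
  rw [div_le_iff₀ h2]
  nlinarith [Real.sq_sqrt hs, Real.sq_sqrt ht.le, Real.sqrt_nonneg s]


lemma hardy_sum_swap (c h : ℕ → ℝ) : ∀ N, ∑ n ∈ Finset.range N, c n * ∑ j ∈ Finset.range (n+1), h j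
    = ∑ j ∈ Finset.range N, h j * ∑ n ∈ Finset.Ico j N, c n := by
  intro N; induction N with
  | zero => simp
  | succ N ih =>
    rw [Finset.sum_range_succ, ih]
    have h1 : ∀ j ∈ Finset.range (N+1), h j * ∑ n ∈ Finset.Ico j (N+1), c n
        = h j * ∑ n ∈ Finset.Ico j N, c n + h j * c N := by
      intro j hj
      rw [Finset.sum_Ico_succ_top (Nat.lt_succ_iff.mp (Finset.mem_range.mp hj)), mul_add]
    rw [Finset.sum_congr rfl h1, Finset.sum_add_distrib,
      Finset.sum_range_succ (fun j => h j * ∑ n ∈ Finset.Ico j N, c n)]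
    have h2 : ∑ n ∈ Finset.Ico N N, c n = 0 := by simp
    rw [h2, mul_zero, add_zero, ← Finset.sum_mul, mul_comm]


lemma hardy_sum_Ico_tel (φ : ℕ → ℝ) (hφ : ∀ n, 0 ≤ φ n) (m N : ℕ) :
    ∑ n ∈ Finset.Ico m N, (φ n - φ (n+1)) ≤ φ m := by
  rcases le_or_gt m N with h | h
  · have heq : ∑ n ∈ Finset.Ico m N, (φ n - φ (n+1)) = φ m - φ N := by
      induction N, h using Nat.le_induction with
      | base => simp
      | succ N hN ih => rw [Finset.sum_Ico_succ_top hN, ih]; ring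
    rw [heq]; linarith [hφ N]
  · rw [Finset.Ico_eq_empty (by omega)]; simpa using hφ m


lemma hardy_tel1 (w : ℕ → ℝ) (hw : ∀ j, 0 < w j) :
    ∀ n, ∑ j ∈ Finset.range n, (w j)⁻¹ / Real.sqrt (∑ i ∈ Finset.range (j+1), (w i)⁻¹)
      ≤ 2 * Real.sqrt (∑ i ∈ Finset.range n, (w i)⁻¹) := by
  have hSnn : ∀ k, (0:ℝ) ≤ ∑ i ∈ Finset.range k, (w i)⁻¹ := fun k =>
    Finset.sum_nonneg fun i _ => (inv_nonneg.2 (hw i).le)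
  have hSpos : ∀ k, (0:ℝ) < ∑ i ∈ Finset.range (k+1), (w i)⁻¹ := fun k =>
    Finset.sum_pos (fun i _ => inv_pos.2 (hw i)) ⟨0, Finset.mem_range.2 (Nat.succ_pos k)⟩
  intro n; induction n with
  | zero => simp
  | succ n ih =>
    rw [Finset.sum_range_succ]
    have key : (w n)⁻¹ / Real.sqrt (∑ i ∈ Finset.range (n+1), (w i)⁻¹)
        ≤ 2 * (Real.sqrt (∑ i ∈ Finset.range (n+1), (w i)⁻¹)
            - Real.sqrt (∑ i ∈ Finset.range n, (w i)⁻¹)) := by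
      have hle : (∑ i ∈ Finset.range n, (w i)⁻¹) ≤ ∑ i ∈ Finset.range (n+1), (w i)⁻¹ := by
        rw [Finset.sum_range_succ]; linarith [inv_pos.2 (hw n)]
      have h := hardy_step_bound (hSnn n) hle (hSpos n)
      have hts : (∑ i ∈ Finset.range (n+1), (w i)⁻¹) - (∑ i ∈ Finset.range n, (w i)⁻¹)
          = (w n)⁻¹ := by rw [Finset.sum_range_succ]; ring
      rw [hts] at h
      exact h
    linarith


lemma hardy_CS (w : ℕ → ℝ) (hw : ∀ j, 0 < w j) (g : ℕ → ℝ) (n : ℕ) :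
    (∑ j ∈ Finset.range (n+1), g j)^2 ≤
      2 * Real.sqrt (∑ i ∈ Finset.range (n+1), (w i)⁻¹) *
        ∑ j ∈ Finset.range (n+1), w j * Real.sqrt (∑ i ∈ Finset.range (j+1), (w i)⁻¹) * g j ^ 2 := by
  set S : ℕ → ℝ := fun k => ∑ i ∈ Finset.range k, (w i)⁻¹ with hS
  have hSpos : ∀ k, (0:ℝ) < S (k+1) := fun k =>
    Finset.sum_pos (fun i _ => inv_pos.2 (hw i)) ⟨0, Finset.mem_range.2 (Nat.succ_pos k)⟩
  set u : ℕ → ℝ := fun j => Real.sqrt ((w j)⁻¹ / Real.sqrt (S (j+1))) with hu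
  set v : ℕ → ℝ := fun j => Real.sqrt (w j * Real.sqrt (S (j+1))) * g j with hv
  have huv : ∀ j, u j * v j = g j := by
    intro j
    have h1 : (0:ℝ) < w j * Real.sqrt (S (j+1)) :=
      mul_pos (hw j) (Real.sqrt_pos.2 (hSpos j))
    have h2 : (0:ℝ) ≤ (w j)⁻¹ / Real.sqrt (S (j+1)) :=
      div_nonneg (inv_nonneg.2 (hw j).le) (Real.sqrt_nonneg _)
    have : u j * Real.sqrt (w j * Real.sqrt (S (j+1))) = 1 := by
      rw [hu, ← Real.sqrt_mul h2]
      rw [show (w j)⁻¹ / Real.sqrt (S (j+1)) * (w j * Real.sqrt (S (j+1))) = 1 by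
        field_simp; exact div_self h1.ne']
      exact Real.sqrt_one
    calc u j * v j = (u j * Real.sqrt (w j * Real.sqrt (S (j+1)))) * g j := by rw [hv]; ring
      _ = g j := by rw [this, one_mul]
  calc (∑ j ∈ Finset.range (n+1), g j)^2
      = (∑ j ∈ Finset.range (n+1), u j * v j)^2 := by
        rw [Finset.sum_congr rfl fun j _ => (huv j).symm]
    _ ≤ (∑ j ∈ Finset.range (n+1), u j ^ 2) * ∑ j ∈ Finset.range (n+1), v j ^ 2 :=
        Finset.sum_mul_sq_le_sq_mul_sq _ _ _
    _ ≤ (2 * Real.sqrt (S (n+1))) * ∑ j ∈ Finset.range (n+1), v j ^ 2 := by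
        apply mul_le_mul_of_nonneg_right _ (Finset.sum_nonneg fun j _ => sq_nonneg _)
        have : ∀ j, u j ^ 2 = (w j)⁻¹ / Real.sqrt (S (j+1)) := fun j =>
          Real.sq_sqrt (div_nonneg (inv_nonneg.2 (hw j).le) (Real.sqrt_nonneg _))
        rw [Finset.sum_congr rfl fun j _ => this j]
        exact hardy_tel1 w hw (n+1)
    _ = 2 * Real.sqrt (S (n+1)) * ∑ j ∈ Finset.range (n+1),
          w j * Real.sqrt (S (j+1)) * g j ^ 2 := by
        congr 1
        refine Finset.sum_congr rfl fun j _ => ?_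
        rw [hv]
        rw [mul_pow, Real.sq_sqrt (mul_nonneg (hw j).le (Real.sqrt_nonneg _))]


lemma hardy_partial (mu w : ℕ → ℝ) (hmu : ∀ n, 0 < mu n) (hw : ∀ j, 0 < w j)
    (T : ℕ → ℝ) (hTpos : ∀ n, 0 < T n) (hTdiff : ∀ n, T n - T (n+1) = mu n)
    (d : ℝ) (hd0 : 0 ≤ d)
    (hdS : ∀ n, T (n+1) * (∑ i ∈ Finset.range (n+1), (w i)⁻¹) ≤ d)
    (f : ℕ → ℝ) (hf0 : f 0 = 0) (N : ℕ) :
    ∑ n ∈ Finset.range N, mu (n+1) * f (n+1)^2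
      ≤ 4 * d * ∑ j ∈ Finset.range N, w j * (f (j+1) - f j)^2 := by
  set S : ℕ → ℝ := fun k => ∑ i ∈ Finset.range k, (w i)⁻¹ with hS
  set g : ℕ → ℝ := fun j => f (j+1) - f j with hg
  set v : ℕ → ℝ := fun j => w j * Real.sqrt (S (j+1)) * g j ^ 2 with hv
  set c : ℕ → ℝ := fun n => mu (n+1) * Real.sqrt (S (n+1)) with hc
  have hSpos : ∀ k, (0:ℝ) < S (k+1) := fun k =>
    Finset.sum_pos (fun i _ => inv_pos.2 (hw i)) ⟨0, Finset.mem_range.2 (Nat.succ_pos k)⟩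
  have hvnn : ∀ j, 0 ≤ v j := fun j =>
    mul_nonneg (mul_nonneg (hw j).le (Real.sqrt_nonneg _)) (sq_nonneg _)
  have hfsum : ∀ n, f (n+1) = ∑ j ∈ Finset.range (n+1), g j := by
    intro n
    rw [hg]
    rw [Finset.sum_range_sub f (n+1), hf0, sub_zero]
  have hsqT : ∀ n, 0 ≤ Real.sqrt (T (n+1+1)) := fun n => Real.sqrt_nonneg _
  -- bound on the Ico sums of c
  have hIco : ∀ j, ∑ n ∈ Finset.Ico j N, c n
      ≤ 2 * Real.sqrt d * Real.sqrt (T (j+1)) := by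
    intro j
    set φ : ℕ → ℝ := fun k => Real.sqrt (T (k+1)) with hφ
    have hcb : ∀ n, c n ≤ 2 * Real.sqrt d * (φ n - φ (n+1)) := by
      intro n
      have hsT : 0 < Real.sqrt (T (n+1)) := Real.sqrt_pos.2 (hTpos _)
      have hST : Real.sqrt (S (n+1)) * Real.sqrt (T (n+1)) ≤ Real.sqrt d := by
        rw [← Real.sqrt_mul (hSpos n).le]
        apply Real.sqrt_le_sqrt
        rw [mul_comm]; exact hdS n
      have h1 : Real.sqrt (S (n+1)) ≤ Real.sqrt d / Real.sqrt (T (n+1)) := by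
        rw [le_div_iff₀ hsT]; exact hST
      have h2 : (T (n+1) - T (n+1+1)) / Real.sqrt (T (n+1))
          ≤ 2 * (φ n - φ (n+1)) := by
        apply hardy_step_bound (hTpos _).le _ (hTpos _)
        have := hmu (n+1)
        linarith [hTdiff (n+1)]
      calc c n = mu (n+1) * Real.sqrt (S (n+1)) := rfl
        _ ≤ mu (n+1) * (Real.sqrt d / Real.sqrt (T (n+1))) :=
            mul_le_mul_of_nonneg_left h1 (hmu _).le
        _ = Real.sqrt d * ((T (n+1) - T (n+1+1)) / Real.sqrt (T (n+1))) := by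
            rw [hTdiff (n+1)]; ring
        _ ≤ Real.sqrt d * (2 * (φ n - φ (n+1))) :=
            mul_le_mul_of_nonneg_left h2 (Real.sqrt_nonneg d)
        _ = 2 * Real.sqrt d * (φ n - φ (n+1)) := by ring
    calc ∑ n ∈ Finset.Ico j N, c n
        ≤ ∑ n ∈ Finset.Ico j N, 2 * Real.sqrt d * (φ n - φ (n+1)) :=
          Finset.sum_le_sum fun n _ => hcb n
      _ = 2 * Real.sqrt d * ∑ n ∈ Finset.Ico j N, (φ n - φ (n+1)) := by
          rw [Finset.mul_sum]
      _ ≤ 2 * Real.sqrt d * φ j := by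
          apply mul_le_mul_of_nonneg_left
            (hardy_sum_Ico_tel φ (fun n => Real.sqrt_nonneg _) j N)
          positivity
  -- main chain
  calc ∑ n ∈ Finset.range N, mu (n+1) * f (n+1)^2
      ≤ ∑ n ∈ Finset.range N, c n * ∑ j ∈ Finset.range (n+1), 2 * v j := by
        apply Finset.sum_le_sum
        intro n _
        have h := hardy_CS w hw g n
        rw [← hfsum n] at h
        calc mu (n+1) * f (n+1)^2
            ≤ mu (n+1) * (2 * Real.sqrt (S (n+1)) *
                ∑ j ∈ Finset.range (n+1), w j * Real.sqrt (S (j+1)) * g j ^ 2) :=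
              mul_le_mul_of_nonneg_left h (hmu _).le
          _ = c n * ∑ j ∈ Finset.range (n+1), 2 * v j := by
              rw [hc, hv, Finset.mul_sum, Finset.mul_sum, Finset.mul_sum]
              refine Finset.sum_congr rfl fun j _ => ?_
              ring
    _ = ∑ j ∈ Finset.range N, 2 * v j * ∑ n ∈ Finset.Ico j N, c n :=
        hardy_sum_swap c (fun j => 2 * v j) N
    _ ≤ ∑ j ∈ Finset.range N, 2 * v j * (2 * Real.sqrt d * Real.sqrt (T (j+1))) := by
        apply Finset.sum_le_sum
        intro j _
        exact mul_le_mul_of_nonneg_left (hIco j) (mul_nonneg (by norm_num) (hvnn j))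
    _ ≤ ∑ j ∈ Finset.range N, 4 * d * (w j * g j ^ 2) := by
        apply Finset.sum_le_sum
        intro j _
        have hST : Real.sqrt (S (j+1)) * Real.sqrt (T (j+1)) ≤ Real.sqrt d := by
          rw [← Real.sqrt_mul (hSpos j).le]
          apply Real.sqrt_le_sqrt
          rw [mul_comm]; exact hdS j
        have h1 : 2 * v j * (2 * Real.sqrt d * Real.sqrt (T (j+1)))
            = 4 * Real.sqrt d * (w j * g j ^ 2) *
              (Real.sqrt (S (j+1)) * Real.sqrt (T (j+1))) := by
          rw [hv]; ring
        rw [h1]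
        calc 4 * Real.sqrt d * (w j * g j ^ 2) *
              (Real.sqrt (S (j+1)) * Real.sqrt (T (j+1)))
            ≤ 4 * Real.sqrt d * (w j * g j ^ 2) * Real.sqrt d := by
              apply mul_le_mul_of_nonneg_left hST
              have h2 := (hw j).le
              have h3 := Real.sqrt_nonneg d
              have h4 := sq_nonneg (g j)
              positivity
          _ = 4 * d * (w j * g j ^ 2) := by
              rw [show (4:ℝ) * Real.sqrt d * (w j * g j ^ 2) * Real.sqrt d
                  = 4 * (Real.sqrt d * Real.sqrt d) * (w j * g j ^ 2) by ring,
                Real.mul_self_sqrt hd0]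
    _ = 4 * d * ∑ j ∈ Finset.range N, w j * (f (j+1) - f j)^2 := by
        rw [Finset.mul_sum]

set_option maxHeartbeats 1000000 in
/-- Discrete weighted Hardy inequality for birth-death processes (Miclo (1999b),
Chen (2000b)): with `δ = sup_{n≥1} μ[n,∞) Σ_{j<n} (μⱼbⱼ)⁻¹`, (i) every `f` with
`f₀ = 0` satisfies `Σ_{n≥1} μₙ fₙ² ≤ 4δ Σ_{n≥0} μₙbₙ(f_{n+1}-fₙ)²`, and (ii) `δ`
is a lower bound for any constant `A` making this inequality valid. -/
theorem discrete_hardy_birth_death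
    (b a : ℕ → ℝ) (hb : ∀ i, 0 < b i) (ha : ∀ i, 0 < a (i + 1))
    (mu : ℕ → ℝ) (hmu0 : mu 0 = 1)
    (hmurec : ∀ n, mu (n + 1) = mu n * b n / a (n + 1))
    (hmusum : Summable mu)
    (δ : ℝ≥0∞)
    (hδ : δ = ⨆ n : ℕ, (∑' j : ℕ, ENNReal.ofReal (mu (n + 1 + j))) *
      ∑ j ∈ Finset.range (n + 1), ENNReal.ofReal ((mu j * b j)⁻¹)) :
    (∀ f : ℕ → ℝ, f 0 = 0 →
      (∑' n : ℕ, ENNReal.ofReal (mu (n + 1) * f (n + 1) ^ 2)) ≤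
        4 * δ * ∑' n : ℕ, ENNReal.ofReal (mu n * b n * (f (n + 1) - f n) ^ 2)) ∧
    (∀ A : ℝ≥0∞,
      (∀ f : ℕ → ℝ, f 0 = 0 →
        (∑' n : ℕ, ENNReal.ofReal (mu (n + 1) * f (n + 1) ^ 2)) ≤
          A * ∑' n : ℕ, ENNReal.ofReal (mu n * b n * (f (n + 1) - f n) ^ 2)) →
      δ ≤ A) := by
  have hmupos : ∀ n, 0 < mu n := by
    intro n; induction n with
    | zero => rw [hmu0]; norm_num
    | succ n ih => rw [hmurec n]; exact div_pos (mul_pos ih (hb n)) (ha n)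
  have hwpos : ∀ j, 0 < mu j * b j := fun j => mul_pos (hmupos j) (hb j)
  have htails : ∀ n, Summable (fun j => mu (n + j)) := by
    intro n
    exact ((summable_nat_add_iff n).2 hmusum).congr (fun j => by rw [add_comm])
  set T : ℕ → ℝ := fun n => ∑' j, mu (n + j) with hT
  have hTpos : ∀ n, 0 < T n := by
    intro n
    have h := Summable.le_tsum (htails n) 0 (fun j _ => (hmupos _).le)
    calc (0:ℝ) < mu (n + 0) := hmupos _
      _ ≤ T n := h
  have hTdiff : ∀ n, T n - T (n+1) = mu n := by
    intro n
    have h := Summable.tsum_eq_zero_add (htails n)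
    have h2 : ∑' j, mu (n + (j+1)) = T (n+1) :=
      tsum_congr (fun j => by rw [show n + (j+1) = n+1+j by omega])
    rw [h2] at h
    rw [hT]
    simp only
    rw [h]
    ring_nf
    simp only [hT]
    ring
  have hofT : ∀ n, (∑' j, ENNReal.ofReal (mu (n+1+j))) = ENNReal.ofReal (T (n+1)) :=
    fun n => (ENNReal.ofReal_tsum_of_nonneg (fun j => (hmupos _).le) (htails (n+1))).symm
  have hofS : ∀ n : ℕ, (∑ j ∈ Finset.range (n+1), ENNReal.ofReal ((mu j * b j)⁻¹))
      = ENNReal.ofReal (∑ j ∈ Finset.range (n+1), (mu j * b j)⁻¹) :=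
    fun n => (ENNReal.ofReal_sum_of_nonneg (fun j _ => (inv_pos.2 (hwpos j)).le)).symm
  have hδpos : 0 < δ := by
    rw [hδ]
    refine lt_of_lt_of_le ?_ (le_iSup _ 0)
    have h1 : (0:ℝ≥0∞) < ∑' j, ENNReal.ofReal (mu (0+1+j)) := by
      refine lt_of_lt_of_le ?_ (ENNReal.le_tsum 0)
      exact ENNReal.ofReal_pos.2 (hmupos _)
    have h2 : (0:ℝ≥0∞) < ∑ j ∈ Finset.range (0+1), ENNReal.ofReal ((mu j * b j)⁻¹) := by
      rw [hofS 0]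
      exact ENNReal.ofReal_pos.2 (Finset.sum_pos (fun j _ => inv_pos.2 (hwpos j))
        ⟨0, Finset.mem_range.2 Nat.one_pos⟩)
    exact ENNReal.mul_pos h1.ne' h2.ne'
  constructor
  · -- part (i)
    intro f hf0
    by_cases hD0 : (∑' n, ENNReal.ofReal (mu n * b n * (f (n + 1) - f n) ^ 2)) = 0
    · have hg0 : ∀ n, f (n+1) = f n := by
        intro n
        have h := (ENNReal.tsum_eq_zero.mp hD0) n
        rw [ENNReal.ofReal_eq_zero] at h
        have hp := hwpos n
        have h2 : (f (n+1) - f n)^2 = 0 := by nlinarith [sq_nonneg (f (n+1) - f n)]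
        have := pow_eq_zero_iff (n := 2) (by norm_num) |>.mp h2
        linarith [sub_eq_zero.mp this]
      have hfz : ∀ n, f n = 0 := by
        intro n; induction n with
        | zero => exact hf0
        | succ n ih => rw [hg0 n, ih]
      have hL : (∑' n, ENNReal.ofReal (mu (n + 1) * f (n + 1) ^ 2)) = 0 :=
        ENNReal.tsum_eq_zero.mpr (fun n => by rw [hfz (n+1)]; simp)
      rw [hL]
      exact zero_le
    · by_cases hδtop : δ = ⊤
      · have h4δ : 4 * δ = ⊤ := by rw [hδtop, ENNReal.mul_top (by norm_num)]
        rw [h4δ, ENNReal.top_mul hD0]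
        exact le_top
      · by_cases hDtop : (∑' n, ENNReal.ofReal (mu n * b n * (f (n + 1) - f n) ^ 2)) = ⊤
        · rw [hDtop, ENNReal.mul_top (by
            intro h
            rw [mul_eq_zero] at h
            rcases h with h | h
            · norm_num at h
            · exact hδpos.ne' h)]
          exact le_top
        · -- main case
          set d : ℝ := δ.toReal with hd
          have hd0 : 0 ≤ d := ENNReal.toReal_nonneg
          have hdS : ∀ n, T (n+1) * (∑ i ∈ Finset.range (n+1), (mu i * b i)⁻¹) ≤ d := by
            intro n
            have h : (∑' j, ENNReal.ofReal (mu (n+1+j))) *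
                (∑ j ∈ Finset.range (n+1), ENNReal.ofReal ((mu j * b j)⁻¹)) ≤ δ := by
              rw [hδ]; exact le_iSup (fun n => (∑' j, ENNReal.ofReal (mu (n+1+j))) *
                ∑ j ∈ Finset.range (n+1), ENNReal.ofReal ((mu j * b j)⁻¹)) n
            rw [hofT n, hofS n, ← ENNReal.ofReal_mul (hTpos (n+1)).le] at h
            exact (ENNReal.ofReal_le_iff_le_toReal hδtop).1 h
          have hDsummable : Summable (fun n => mu n * b n * (f (n + 1) - f n) ^ 2) := by
            refine (ENNReal.summable_toReal hDtop).congr ?_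
            intro n
            rw [ENNReal.toReal_ofReal (mul_nonneg (hwpos n).le (sq_nonneg _))]
          set Dr : ℝ := ∑' n, mu n * b n * (f (n + 1) - f n) ^ 2 with hDr
          have hDrnn : 0 ≤ Dr := tsum_nonneg (fun n => mul_nonneg (hwpos n).le (sq_nonneg _))
          have hDeq : (∑' n, ENNReal.ofReal (mu n * b n * (f (n + 1) - f n) ^ 2))
              = ENNReal.ofReal Dr :=
            (ENNReal.ofReal_tsum_of_nonneg
              (fun n => mul_nonneg (hwpos n).le (sq_nonneg _)) hDsummable).symm
          apply ENNReal.tsum_le_of_sum_range_le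
          intro N
          have hsum : ∑ n ∈ Finset.range N, ENNReal.ofReal (mu (n + 1) * f (n + 1) ^ 2)
              = ENNReal.ofReal (∑ n ∈ Finset.range N, mu (n + 1) * f (n + 1) ^ 2) :=
            (ENNReal.ofReal_sum_of_nonneg
              (fun n _ => mul_nonneg (hmupos _).le (sq_nonneg _))).symm
          rw [hsum]
          calc ENNReal.ofReal (∑ n ∈ Finset.range N, mu (n + 1) * f (n + 1) ^ 2)
              ≤ ENNReal.ofReal (4 * d * Dr) := by
                apply ENNReal.ofReal_le_ofReal
                calc ∑ n ∈ Finset.range N, mu (n + 1) * f (n + 1) ^ 2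
                    ≤ 4 * d * ∑ j ∈ Finset.range N, (mu j * b j) * (f (j+1) - f j)^2 :=
                      hardy_partial mu (fun j => mu j * b j) hmupos hwpos T hTpos hTdiff
                        d hd0 hdS f hf0 N
                  _ ≤ 4 * d * Dr := by
                      apply mul_le_mul_of_nonneg_left _ (by linarith)
                      exact Summable.sum_le_tsum (Finset.range N)
                        (fun j _ => mul_nonneg (hwpos j).le (sq_nonneg _)) hDsummable
            _ = 4 * δ * ∑' n, ENNReal.ofReal (mu n * b n * (f (n + 1) - f n) ^ 2) := by
                rw [hDeq, ENNReal.ofReal_mul (by linarith), ENNReal.ofReal_mul (by norm_num)]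
                congr 1
                congr 1
                · norm_num
                · exact ENNReal.ofReal_toReal hδtop
  · -- part (ii)
    intro A H
    rw [hδ]
    apply iSup_le
    intro N
    set f : ℕ → ℝ := fun k => ∑ j ∈ Finset.range (min k (N+1)), (mu j * b j)⁻¹ with hfdef
    have hf0 : f 0 = 0 := by simp [hfdef]
    set Sr : ℝ := ∑ j ∈ Finset.range (N+1), (mu j * b j)⁻¹ with hSr
    have hSrpos : 0 < Sr :=
      Finset.sum_pos (fun j _ => inv_pos.2 (hwpos j)) ⟨0, Finset.mem_range.2 (Nat.succ_pos N)⟩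
    have hfconst : ∀ k, N + 1 ≤ k → f k = Sr := by
      intro k hk
      rw [hfdef]; simp only
      rw [min_eq_right hk]
    have hgk : ∀ k, k ≤ N → f (k+1) - f k = (mu k * b k)⁻¹ := by
      intro k hk
      rw [hfdef]; simp only
      rw [min_eq_left (by omega), min_eq_left (by omega), Finset.sum_range_succ]
      ring
    have hgk' : ∀ k, N < k → f (k+1) - f k = 0 := by
      intro k hk
      rw [hfconst (k+1) (by omega), hfconst k (by omega), sub_self]
    have hRHS : (∑' n, ENNReal.ofReal (mu n * b n * (f (n + 1) - f n) ^ 2))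
        = ∑ k ∈ Finset.range (N+1), ENNReal.ofReal ((mu k * b k)⁻¹) := by
      rw [tsum_eq_sum (s := Finset.range (N+1)) (fun k hk => by
        rw [hgk' k (by simpa using hk)]; simp)]
      refine Finset.sum_congr rfl fun k hk => ?_
      rw [hgk k (Nat.lt_succ_iff.mp (Finset.mem_range.mp hk))]
      have hne : (mu k * b k) ≠ 0 := (hwpos k).ne'
      congr 1
      rw [pow_two, ← mul_assoc, mul_inv_cancel₀ hne, one_mul]
    have hkey := H f hf0
    rw [hRHS] at hkey
    rw [hofS N] at hkey ⊢
    have h1 : (∑' i, ENNReal.ofReal (mu (i + N + 1) * f (i + N + 1) ^ 2))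
        = (∑' j, ENNReal.ofReal (mu (N+1+j))) * ENNReal.ofReal (Sr^2) := by
      rw [← ENNReal.tsum_mul_right]
      refine tsum_congr fun i => ?_
      rw [hfconst (i + N + 1) (by omega), show i + N + 1 = N + 1 + i by omega,
        ENNReal.ofReal_mul (hmupos _).le]
    have hLHSge : (∑' j, ENNReal.ofReal (mu (N+1+j))) * ENNReal.ofReal (Sr^2)
        ≤ ∑' n, ENNReal.ofReal (mu (n + 1) * f (n + 1) ^ 2) := by
      rw [← h1]
      exact ENNReal.tsum_comp_le_tsum_of_injective (add_left_injective N)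
        (fun n => ENNReal.ofReal (mu (n + 1) * f (n + 1) ^ 2))
    have hfinal : ((∑' j, ENNReal.ofReal (mu (N+1+j))) * ENNReal.ofReal Sr) *
        ENNReal.ofReal Sr ≤ A * ENNReal.ofReal Sr := by
      calc ((∑' j, ENNReal.ofReal (mu (N+1+j))) * ENNReal.ofReal Sr) * ENNReal.ofReal Sr
          = (∑' j, ENNReal.ofReal (mu (N+1+j))) * ENNReal.ofReal (Sr^2) := by
            rw [pow_two, ENNReal.ofReal_mul hSrpos.le, mul_assoc]
        _ ≤ ∑' n, ENNReal.ofReal (mu (n + 1) * f (n + 1) ^ 2) := hLHSge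
        _ ≤ A * ENNReal.ofReal Sr := hkey
    exact (ENNReal.mul_le_mul_iff_left
      (ENNReal.ofReal_pos.2 hSrpos).ne'
      ENNReal.ofReal_ne_top).1 hfinal
end
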